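/- arXiv:1107.0414 — 4 statements merged into one kernel-verified Lean document; each statement's English description precedes it below -/
import Mathlib

section
/- In a connected weighted graph with volume V = ∑_{i,j} w_{ij}, if the distinct vertices u and v are separated by pairwise disjoint edge-cutsets E_1, ..., E_K (every path from u to v uses an edge of each E_k), then the commute time satisfies κ(u,v) ≥ V · ∑_{k=1}^{K} (∑_{e ∈ E_k} w_e)^{−1}. -/
open Matrix BigOperators

variable {V : Type*} [Fintype V] [DecidableEq V]

/-- Transition matrix `P = D⁻¹W` of the random walk on a weighted graph. -/
noncomputable def transition (w : Matrix V V ℝ) : Matrix V V ℝ :=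
  Matrix.of fun a b => w a b / ∑ c, w a c

/-- The sub-stochastic matrix obtained by killing the walk at `v`. -/
noncomputable def killAt (P : Matrix V V ℝ) (v : V) : Matrix V V ℝ :=
  Matrix.of fun a b => if b = v then 0 else P a b

/-- Expected hitting time `h(u,v) = ∑_{t ≥ 0} P(T_v > t)` of `v` starting from `u`. -/
noncomputable def hitTime (P : Matrix V V ℝ) (u v : V) : ℝ :=
  if u = v then 0 else ∑' t : ℕ, ((killAt P v ^ t) *ᵥ (fun _ => (1 : ℝ))) u

/-- Commute time `κ(u,v) = h(u,v) + h(v,u)` for the random walk on the weighted graph. -/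
noncomputable def commuteTime (w : Matrix V V ℝ) (u v : V) : ℝ :=
  hitTime (transition w) u v + hitTime (transition w) v u

/-- The graph underlying a weight matrix: `a ~ b` iff `a ≠ b` and the weight is nonzero. -/
def wGraph (w : Matrix V V ℝ) : SimpleGraph V where
  Adj a b := a ≠ b ∧ (w a b ≠ 0 ∨ w b a ≠ 0)
  symm := ⟨fun _ _ h => ⟨h.1.symm, h.2.symm⟩⟩
  loopless := ⟨fun _ h => h.1 rfl⟩

namespace NashAux
open Finset

set_option linter.unusedSectionVars false

lemma pow_nonneg' {M : Matrix V V ℝ} (h : ∀ a b, 0 ≤ M a b) (t : ℕ) :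
    ∀ a b, 0 ≤ (M ^ t) a b := by
  induction t with
  | zero => intro a b; rw [pow_zero, Matrix.one_apply]; positivity
  | succ t ih =>
    intro a b
    rw [pow_succ, Matrix.mul_apply]
    exact Finset.sum_nonneg fun c _ => mul_nonneg (ih a c) (h c b)

lemma rowsum_pow_le_one' {M : Matrix V V ℝ} (h0 : ∀ a b, 0 ≤ M a b)
    (h1 : ∀ a, ∑ b, M a b ≤ 1) (t : ℕ) : ∀ a, ∑ b, (M ^ t) a b ≤ 1 := by
  induction t with
  | zero =>
    intro a; simp [Matrix.one_apply]
  | succ t ih =>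
    intro a
    rw [pow_succ]
    calc ∑ b, (M ^ t * M) a b = ∑ c, (M ^ t) a c * ∑ b, M c b := by
          simp only [Matrix.mul_apply]
          rw [Finset.sum_comm]
          exact Finset.sum_congr rfl fun c _ => (Finset.mul_sum _ _ _).symm
      _ ≤ ∑ c, (M ^ t) a c * 1 :=
          Finset.sum_le_sum fun c _ => mul_le_mul_of_nonneg_left (h1 c) (pow_nonneg' h0 t a c)
      _ ≤ 1 := by simpa using ih a

lemma rowsum_pow_add_le' {M : Matrix V V ℝ} (h0 : ∀ a b, 0 ≤ M a b)
    (h1 : ∀ a, ∑ b, M a b ≤ 1) (s t : ℕ) (a : V) :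
    ∑ b, (M ^ (s + t)) a b ≤ ∑ b, (M ^ s) a b := by
  rw [pow_add]
  calc ∑ b, (M ^ s * M ^ t) a b = ∑ c, (M ^ s) a c * ∑ b, (M ^ t) c b := by
        simp only [Matrix.mul_apply]
        rw [Finset.sum_comm]
        exact Finset.sum_congr rfl fun c _ => (Finset.mul_sum _ _ _).symm
    _ ≤ ∑ c, (M ^ s) a c * 1 :=
        Finset.sum_le_sum fun c _ =>
          mul_le_mul_of_nonneg_left (rowsum_pow_le_one' h0 h1 t c) (pow_nonneg' h0 s a c)
    _ = ∑ c, (M ^ s) a c := by simp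

lemma rowsum_pow_mul_le {M : Matrix V V ℝ} (h0 : ∀ a b, 0 ≤ M a b)
    (h1 : ∀ a, ∑ b, M a b ≤ 1) {m : ℕ} {r : ℝ} (hr0 : 0 ≤ r)
    (hm : ∀ a, ∑ b, (M ^ m) a b ≤ r) (q : ℕ) (a : V) :
    ∑ b, (M ^ (m * q)) a b ≤ r ^ q := by
  induction q generalizing a with
  | zero => simpa using rowsum_pow_le_one' h0 h1 0 a
  | succ q ih =>
    have : M ^ (m * (q + 1)) = M ^ m * M ^ (m * q) := by
      rw [← pow_add]; ring_nf
    rw [this]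
    calc ∑ b, (M ^ m * M ^ (m * q)) a b = ∑ c, (M ^ m) a c * ∑ b, (M ^ (m * q)) c b := by
          simp only [Matrix.mul_apply]
          rw [Finset.sum_comm]
          exact Finset.sum_congr rfl fun c _ => (Finset.mul_sum _ _ _).symm
      _ ≤ ∑ c, (M ^ m) a c * r ^ q :=
          Finset.sum_le_sum fun c _ =>
            mul_le_mul_of_nonneg_left (ih c) (pow_nonneg' h0 m a c)
      _ = (∑ c, (M ^ m) a c) * r ^ q := (Finset.sum_mul _ _ _).symm
      _ ≤ r * r ^ q := mul_le_mul_of_nonneg_right (hm a) (pow_nonneg hr0 q)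
      _ = r ^ (q + 1) := (pow_succ' r q).symm

lemma rowsum_pow_le_geom {M : Matrix V V ℝ} (h0 : ∀ a b, 0 ≤ M a b)
    (h1 : ∀ a, ∑ b, M a b ≤ 1) {m : ℕ} (hm1 : 1 ≤ m) {r : ℝ} (hr0 : 0 ≤ r)
    (hm : ∀ a, ∑ b, (M ^ m) a b ≤ r) (t : ℕ) (a : V) :
    ∑ b, (M ^ t) a b ≤ r ^ (t / m) := by
  have ht : t = m * (t / m) + t % m := (Nat.div_add_mod t m).symm
  calc ∑ b, (M ^ t) a b = ∑ b, (M ^ (m * (t / m) + t % m)) a b := by rw [← ht]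
    _ ≤ ∑ b, (M ^ (m * (t / m))) a b := rowsum_pow_add_le' h0 h1 _ _ a
    _ ≤ r ^ (t / m) := rowsum_pow_mul_le h0 h1 hr0 hm _ a

lemma summable_geom_div {m : ℕ} (hm1 : 1 ≤ m) {r : ℝ} (hr0 : 0 ≤ r) (hr1 : r < 1) :
    Summable (fun t : ℕ => r ^ (t / m)) := by
  apply summable_of_sum_range_le (c := m * (1 - r)⁻¹)
    (fun n => pow_nonneg hr0 _)
  intro n
  have key : ∀ n : ℕ, ∑ t ∈ Finset.range (m * n), r ^ (t / m) = m * ∑ q ∈ Finset.range n, r ^ q := by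
    intro n
    induction n with
    | zero => simp
    | succ n ih =>
      rw [Nat.mul_succ, Finset.sum_range_succ, Finset.range_eq_Ico,
        ← Finset.sum_Ico_consecutive _ (Nat.zero_le (m * n)) (Nat.le_add_right (m * n) m),
        ← Finset.range_eq_Ico, ih]
      have : ∑ t ∈ Finset.Ico (m * n) (m * n + m), r ^ (t / m) = ∑ t ∈ Finset.Ico (m * n) (m * n + m), r ^ n := by
        apply Finset.sum_congr rfl
        intro t ht
        rw [Finset.mem_Ico] at ht
        congr 1
        exact Nat.div_eq_of_lt_le (by nlinarith [ht.1]) (by nlinarith [ht.2])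
      rw [this, Finset.sum_const, Nat.card_Ico]
      have hc : m * n + m - m * n = m := by omega
      rw [hc, nsmul_eq_mul]
      ring
  calc ∑ t ∈ Finset.range n, r ^ (t / m)
      ≤ ∑ t ∈ Finset.range (m * n), r ^ (t / m) := by
        apply Finset.sum_le_sum_of_subset_of_nonneg
        · exact Finset.range_subset_range.2 (Nat.le_mul_of_pos_left n (by omega))
        · intro i _ _; positivity
    _ = m * ∑ q ∈ Finset.range n, r ^ q := key n
    _ ≤ m * (1 - r)⁻¹ := by
        apply mul_le_mul_of_nonneg_left _ (by positivity)
        calc ∑ q ∈ Finset.range n, r ^ q ≤ ∑' q : ℕ, r ^ q :=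
              Summable.sum_le_tsum _ (fun i _ => pow_nonneg hr0 i)
                (hasSum_geometric_of_lt_one hr0 hr1).summable
          _ = (1 - r)⁻¹ := tsum_geometric_of_lt_one hr0 hr1

variable {w : Matrix V V ℝ}
variable (hsym : ∀ a b, w a b = w b a) (hnn : ∀ a b, 0 ≤ w a b) (hdeg : ∀ a, 0 < ∑ b, w a b)

include hnn hdeg in
lemma trans_nonneg' (a b : V) : 0 ≤ transition w a b :=
  div_nonneg (hnn a b) (le_of_lt (hdeg a))

include hdeg in
lemma trans_rowsum' (a : V) : ∑ b, transition w a b = 1 := by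
  simp only [transition, Matrix.of_apply]
  rw [← Finset.sum_div]
  exact div_self (ne_of_gt (hdeg a))

include hsym hnn hdeg in
lemma trans_pos' {a b : V} (h : (wGraph w).Adj a b) : 0 < transition w a b := by
  have hw : w a b ≠ 0 := by
    rcases h.2 with h' | h'
    · exact h'
    · rw [hsym]; exact h'
  exact div_pos (lt_of_le_of_ne (hnn a b) (Ne.symm hw)) (hdeg a)

include hnn hdeg in
lemma kill_nonneg' (v0 : V) : ∀ a b, 0 ≤ killAt (transition w) v0 a b := by
  intro a b
  unfold killAt
  dsimp only [Matrix.of_apply]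
  split
  · exact le_refl 0
  · exact trans_nonneg' hnn hdeg a b

include hnn hdeg in
lemma kill_rowsum_le' (v0 : V) : ∀ a, ∑ b, killAt (transition w) v0 a b ≤ 1 := by
  intro a
  calc ∑ b, killAt (transition w) v0 a b ≤ ∑ b, transition w a b := by
        apply Finset.sum_le_sum
        intro b _
        unfold killAt
        dsimp only [Matrix.of_apply]
        split
        · exact trans_nonneg' hnn hdeg a b
        · exact le_refl _
    _ = 1 := trans_rowsum' hdeg a

lemma kill_eq_of_ne' (v0 a : V) {b : V} (h : b ≠ v0) :
    killAt (transition w) v0 a b = transition w a b := by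
  simp [killAt, h]

lemma kill_col' (v0 a : V) : killAt (transition w) v0 a v0 = 0 := by
  simp [killAt]

lemma kill_pow_col' (v0 : V) {t : ℕ} {a : V} (h : a ≠ v0 ∨ t ≠ 0) :
    ((killAt (transition w) v0) ^ t) a v0 = 0 := by
  cases t with
  | zero =>
    rcases h with h | h
    · rw [pow_zero, Matrix.one_apply_ne h]
    · exact absurd rfl h
  | succ t =>
    rw [pow_succ, Matrix.mul_apply]
    apply Finset.sum_eq_zero
    intro c _
    rw [kill_col', mul_zero]

include hsym hnn hdeg in
lemma rs_step (v0 : V) {a b : V} (hadj : (wGraph w).Adj a b) (hb : b ≠ v0) {t : ℕ}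
    (hlt : ∑ c, ((killAt (transition w) v0) ^ t) b c < 1) :
    ∑ c, ((killAt (transition w) v0) ^ (t + 1)) a c < 1 := by
  have hrw : ∑ c, ((killAt (transition w) v0) ^ (t + 1)) a c
      = ∑ c, killAt (transition w) v0 a c * ∑ e, ((killAt (transition w) v0) ^ t) c e := by
    rw [pow_succ']
    simp only [Matrix.mul_apply]
    rw [Finset.sum_comm]
    exact Finset.sum_congr rfl fun c _ => (Finset.mul_sum _ _ _).symm
  rw [hrw]
  have hAab : 0 < killAt (transition w) v0 a b := by
    rw [kill_eq_of_ne' v0 a hb]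
    exact trans_pos' hsym hnn hdeg hadj
  calc ∑ c, killAt (transition w) v0 a c * ∑ e, ((killAt (transition w) v0) ^ t) c e
      < ∑ c, killAt (transition w) v0 a c * 1 := by
        apply Finset.sum_lt_sum
        · intro c _
          exact mul_le_mul_of_nonneg_left
            (rowsum_pow_le_one' (kill_nonneg' hnn hdeg v0) (kill_rowsum_le' hnn hdeg v0) t c)
            (kill_nonneg' hnn hdeg v0 a c)
        · exact ⟨b, Finset.mem_univ b, (mul_lt_mul_iff_right₀ hAab).2 hlt⟩
    _ ≤ 1 := by simpa using kill_rowsum_le' hnn hdeg v0 a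

include hsym hnn hdeg in
lemma rs_base (v0 : V) {a : V} (hadj : (wGraph w).Adj a v0) :
    ∑ c, ((killAt (transition w) v0) ^ 1) a c < 1 := by
  have h1 : ∑ c, ((killAt (transition w) v0) ^ 1) a c = ∑ c, killAt (transition w) v0 a c := by
    rw [pow_one]
  rw [h1]
  calc ∑ c, killAt (transition w) v0 a c < ∑ c, transition w a c := by
        apply Finset.sum_lt_sum
        · intro c _
          by_cases hc : c = v0
          · rw [hc, kill_col' v0 a]; exact trans_nonneg' hnn hdeg a v0
          · rw [kill_eq_of_ne' v0 a hc]
        · refine ⟨v0, Finset.mem_univ v0, ?_⟩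
          rw [kill_col' v0 a]
          exact trans_pos' hsym hnn hdeg hadj
    _ = 1 := trans_rowsum' hdeg a

include hsym hnn hdeg in
lemma exists_rs_lt (hconn : (wGraph w).Connected) (v0 : V) (hx : ∃ x, x ≠ v0) :
    ∃ m, 1 ≤ m ∧ ∀ a, ∑ c, ((killAt (transition w) v0) ^ m) a c < 1 := by
  have hQ : ∀ (x y : V) (_ : (wGraph w).Walk x y), y = v0 → x ≠ v0 →
      ∃ t, ∑ c, ((killAt (transition w) v0) ^ t) x c < 1 := by
    intro x y p
    induction p with
    | nil => intro hy hx'; exact absurd hy hx'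
    | @cons x z y hadj q ih =>
      intro hy _
      by_cases hz : z = v0
      · subst hz
        exact ⟨1, rs_base hsym hnn hdeg _ hadj⟩
      · obtain ⟨t, ht⟩ := ih hy hz
        exact ⟨t + 1, rs_step hsym hnn hdeg v0 hadj hz ht⟩
  have hall : ∀ a, ∃ t, ∑ c, ((killAt (transition w) v0) ^ t) a c < 1 := by
    intro a
    by_cases ha : a = v0
    · subst ha
      obtain ⟨x, hx'⟩ := hx
      obtain ⟨p⟩ := hconn a x
      cases p with
      | nil => exact absurd rfl (Ne.symm hx')
      | @cons _ y _ hadj q =>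
        have hy : y ≠ a := ((wGraph w).ne_of_adj hadj).symm
        obtain ⟨t, ht⟩ := hQ y a (SimpleGraph.Walk.cons hadj.symm SimpleGraph.Walk.nil) rfl hy
        exact ⟨t + 1, rs_step hsym hnn hdeg a hadj hy ht⟩
    · obtain ⟨p⟩ := hconn a v0
      exact hQ a v0 p rfl ha
  choose f hf using hall
  refine ⟨Finset.univ.sup f + 1, Nat.le_add_left 1 _, fun a => ?_⟩
  have hle : f a ≤ Finset.univ.sup f + 1 :=
    le_trans (Finset.le_sup (Finset.mem_univ a)) (Nat.le_succ _)
  obtain ⟨k, hk⟩ := Nat.exists_eq_add_of_le hle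
  calc ∑ c, ((killAt (transition w) v0) ^ (Finset.univ.sup f + 1)) a c
      = ∑ c, ((killAt (transition w) v0) ^ (f a + k)) a c := by rw [← hk]
    _ ≤ ∑ c, ((killAt (transition w) v0) ^ (f a)) a c :=
        rowsum_pow_add_le' (kill_nonneg' hnn hdeg v0) (kill_rowsum_le' hnn hdeg v0) _ _ a
    _ < 1 := hf a

include hsym hnn hdeg in
lemma summable_rowsum (hconn : (wGraph w).Connected) (v0 : V) (hx : ∃ x, x ≠ v0) (a : V) :
    Summable (fun t : ℕ => ∑ c, ((killAt (transition w) v0) ^ t) a c) := by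
  obtain ⟨m, hm1, hm⟩ := exists_rs_lt hsym hnn hdeg hconn v0 hx
  have hne : (Finset.univ : Finset V).Nonempty := ⟨a, Finset.mem_univ a⟩
  set r : ℝ := Finset.univ.sup' hne (fun x => ∑ c, ((killAt (transition w) v0) ^ m) x c) with hr
  have hr1 : r < 1 := by
    rw [hr, Finset.sup'_lt_iff]
    intro x _
    exact hm x
  have hr0 : 0 ≤ r := by
    rw [hr]
    refine le_trans ?_
      (Finset.le_sup' (fun y => ∑ c, ((killAt (transition w) v0) ^ m) y c) (Finset.mem_univ a))
    exact Finset.sum_nonneg fun c _ => pow_nonneg' (kill_nonneg' hnn hdeg v0) m a c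
  have hbnd : ∀ x, ∑ c, ((killAt (transition w) v0) ^ m) x c ≤ r := by
    intro x
    rw [hr]
    exact Finset.le_sup' (fun y => ∑ c, ((killAt (transition w) v0) ^ m) y c) (Finset.mem_univ x)
  apply Summable.of_nonneg_of_le
    (fun t => Finset.sum_nonneg fun c _ => pow_nonneg' (kill_nonneg' hnn hdeg v0) t a c)
    (fun t => rowsum_pow_le_geom (kill_nonneg' hnn hdeg v0) (kill_rowsum_le' hnn hdeg v0)
      hm1 hr0 hbnd t a)
    (summable_geom_div hm1 hr0 hr1)

include hsym hnn hdeg in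
lemma summable_entry (hconn : (wGraph w).Connected) (v0 : V) (hx : ∃ x, x ≠ v0) (a b : V) :
    Summable (fun t : ℕ => ((killAt (transition w) v0) ^ t) a b) := by
  apply Summable.of_nonneg_of_le (fun t => pow_nonneg' (kill_nonneg' hnn hdeg v0) t a b)
    (fun t => Finset.single_le_sum
      (fun c (_ : c ∈ Finset.univ) => pow_nonneg' (kill_nonneg' hnn hdeg v0) t a c)
      (Finset.mem_univ b))
    (summable_rowsum hsym hnn hdeg hconn v0 hx a)

/-- the Green function of the killed walk -/
noncomputable def Gm (w : Matrix V V ℝ) (v0 a b : V) : ℝ :=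
  ∑' t : ℕ, ((killAt (transition w) v0) ^ t) a b

include hsym hnn hdeg in
lemma Gm_nonneg (v0 a b : V) : 0 ≤ Gm w v0 a b :=
  tsum_nonneg fun t => pow_nonneg' (kill_nonneg' hnn hdeg v0) t a b

lemma Gm_col (v0 : V) {a : V} (ha : a ≠ v0) : Gm w v0 a v0 = 0 := by
  unfold Gm
  have : ∀ t : ℕ, ((killAt (transition w) v0) ^ t) a v0 = 0 :=
    fun t => kill_pow_col' v0 (Or.inl ha)
  rw [tsum_congr this, tsum_zero]

include hsym hnn hdeg in
lemma Gm_rowsum (hconn : (wGraph w).Connected) (v0 : V) (hx : ∃ x, x ≠ v0) (a : V) :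
    ∑ b, Gm w v0 a b = ∑' t : ℕ, ∑ c, ((killAt (transition w) v0) ^ t) a c := by
  unfold Gm
  exact (Summable.tsum_finsetSum (fun b _ => summable_entry hsym hnn hdeg hconn v0 hx a b)).symm

include hsym hnn hdeg in
lemma Gm_mul_kill (hconn : (wGraph w).Connected) (v0 : V) (hx : ∃ x, x ≠ v0) (a c : V) :
    ∑ b, Gm w v0 a b * killAt (transition w) v0 b c
      = Gm w v0 a c - (if a = c then 1 else 0) := by
  have h1 : ∀ b, Gm w v0 a b * killAt (transition w) v0 b c
      = ∑' t : ℕ, ((killAt (transition w) v0) ^ t) a b * killAt (transition w) v0 b c := by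
    intro b
    exact ((summable_entry hsym hnn hdeg hconn v0 hx a b).tsum_mul_right _).symm
  rw [Finset.sum_congr rfl (fun b _ => h1 b)]
  rw [← Summable.tsum_finsetSum (fun b (_ : b ∈ Finset.univ) =>
    (summable_entry hsym hnn hdeg hconn v0 hx a b).mul_right _)]
  have h2 : ∀ t : ℕ, ∑ b, ((killAt (transition w) v0) ^ t) a b * killAt (transition w) v0 b c
      = ((killAt (transition w) v0) ^ (t + 1)) a c := by
    intro t
    rw [pow_succ, Matrix.mul_apply]
  rw [tsum_congr h2]
  have hs : Summable (fun t : ℕ => ((killAt (transition w) v0) ^ t) a c) :=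
    summable_entry hsym hnn hdeg hconn v0 hx a c
  have h3 := Summable.tsum_eq_zero_add hs
  have h4 : ((killAt (transition w) v0) ^ 0) a c = if a = c then 1 else 0 := by
    rw [pow_zero, Matrix.one_apply]
  rw [h4] at h3
  unfold Gm
  linarith [h3]

include hsym hnn hdeg in
lemma Gm_mul_trans (hconn : (wGraph w).Connected) (v0 : V) (hx : ∃ x, x ≠ v0)
    {a : V} (ha : a ≠ v0) (c : V) :
    ∑ b, Gm w v0 a b * transition w b c
      = Gm w v0 a c - (if a = c then 1 else 0) + (if v0 = c then 1 else 0) := by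
  by_cases hc : c = v0
  · subst hc
    have hP : ∀ b, transition w b c = 1 - ∑ e, killAt (transition w) c b e := by
      intro b
      have : ∑ e, killAt (transition w) c b e
          = ∑ e, transition w b e - transition w b c := by
        rw [← Finset.sum_erase_add Finset.univ _ (Finset.mem_univ c), kill_col']
        rw [add_zero]
        rw [← Finset.sum_erase_add Finset.univ (fun e => transition w b e) (Finset.mem_univ c)]
        rw [add_sub_cancel_right]
        apply Finset.sum_congr rfl
        intro e he
        exact kill_eq_of_ne' c b (Finset.ne_of_mem_erase he)
      rw [this, trans_rowsum' hdeg b]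
      ring
    calc ∑ b, Gm w c a b * transition w b c
        = ∑ b, (Gm w c a b - Gm w c a b * ∑ e, killAt (transition w) c b e) := by
          apply Finset.sum_congr rfl
          intro b _
          rw [hP b]; ring
      _ = ∑ b, Gm w c a b - ∑ e, ∑ b, Gm w c a b * killAt (transition w) c b e := by
          rw [Finset.sum_sub_distrib]
          congr 1
          rw [Finset.sum_comm]
          apply Finset.sum_congr rfl
          intro b _
          exact Finset.mul_sum _ _ _
      _ = ∑ b, Gm w c a b - ∑ e, (Gm w c a e - (if a = e then 1 else 0)) := by
          congr 1
          exact Finset.sum_congr rfl fun e _ => Gm_mul_kill hsym hnn hdeg hconn c hx a e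
      _ = ∑ e, (if a = e then (1:ℝ) else 0) := by
          rw [Finset.sum_sub_distrib]; ring
      _ = 1 := by simp
      _ = Gm w c a c - (if a = c then 1 else 0) + (if c = c then 1 else 0) := by
          rw [Gm_col c ha, if_neg, if_pos rfl]
          · ring
          · exact ha
  · have hP : ∀ b, transition w b c = killAt (transition w) v0 b c :=
      fun b => (kill_eq_of_ne' v0 b hc).symm
    rw [Finset.sum_congr rfl (fun b _ => by rw [hP b])]
    rw [Gm_mul_kill hsym hnn hdeg hconn v0 hx a c]
    have hz : (if v0 = c then (1:ℝ) else 0) = 0 := if_neg (fun h => hc h.symm)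
    rw [hz]
    ring

include hsym hnn hdeg in
lemma hitTime_eq (hconn : (wGraph w).Connected) {u0 v0 : V} (h : u0 ≠ v0) :
    hitTime (transition w) u0 v0 = ∑ b, Gm w v0 u0 b := by
  unfold hitTime
  rw [if_neg h]
  rw [Gm_rowsum hsym hnn hdeg hconn v0 ⟨u0, h⟩ u0]
  apply tsum_congr
  intro t
  simp [Matrix.mulVec, dotProduct]

end NashAux

open NashAux in
/-- **Nash–Williams inequality.**  In a connected weighted graph with volume
`V = ∑_{i,j} w_{ij}`, if the distinct vertices `u` and `v` are separated by pairwise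
disjoint edge-cutsets `E_1, …, E_K` (every walk from `u` to `v` uses an edge of each
`E_k`), then the commute time satisfies
`κ(u,v) ≥ V · ∑_k (∑_{e ∈ E_k} w_e)⁻¹`. -/
theorem nash_williams_commute_time (w : Matrix V V ℝ)
    (hsym : ∀ a b, w a b = w b a) (hnn : ∀ a b, 0 ≤ w a b)
    (hdeg : ∀ a, 0 < ∑ b, w a b) (hconn : (wGraph w).Connected)
    (u v : V) (huv : u ≠ v) (K : ℕ) (E : Fin K → Finset (V × V))
    (hedge : ∀ k, ∀ p ∈ E k, p.1 ≠ p.2 ∧ 0 < w p.1 p.2)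
    (honce : ∀ k, ∀ p ∈ E k, p.swap ∉ E k)
    (hdisj : ∀ k l, k ≠ l → ∀ p ∈ E k, p ∉ E l ∧ p.swap ∉ E l)
    (hcut : ∀ k, ∀ q : (wGraph w).Walk u v,
      ∃ d ∈ q.darts, d.toProd ∈ E k ∨ d.toProd.swap ∈ E k) :
    (∑ a, ∑ b, w a b) * ∑ k, (∑ p ∈ E k, w p.1 p.2)⁻¹ ≤ commuteTime w u v := by

  classical
  have hxv : ∃ x, x ≠ v := ⟨u, huv⟩
  have hvu : v ≠ u := Ne.symm huv
  have hxu : ∃ x, x ≠ u := ⟨v, hvu⟩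
  have hdne : ∀ a, (∑ b, w a b) ≠ 0 := fun a => ne_of_gt (hdeg a)
  set φ : V → ℝ := fun a => Gm w v u a / ∑ b, w a b with hφ
  set ψ : V → ℝ := fun a => Gm w u v a / ∑ b, w a b with hψ
  have hGφ : ∀ a, (∑ b, w a b) * φ a = Gm w v u a := by
    intro a; rw [hφ]
    show (∑ b, w a b) * (Gm w v u a / ∑ b, w a b) = Gm w v u a
    rw [mul_comm, div_mul_cancel₀ _ (hdne a)]
  have hGψ : ∀ a, (∑ b, w a b) * ψ a = Gm w u v a := by
    intro a; rw [hψ]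
    show (∑ b, w a b) * (Gm w u v a / ∑ b, w a b) = Gm w u v a
    rw [mul_comm, div_mul_cancel₀ _ (hdne a)]
  have htransφ : ∀ a b, w a b * φ b = Gm w v u b * transition w b a := by
    intro a b
    show w a b * (Gm w v u b / ∑ c, w b c) = Gm w v u b * transition w b a
    have : transition w b a = w a b / ∑ c, w b c := by
      show (w b a / ∑ c, w b c) = w a b / ∑ c, w b c
      rw [hsym a b]
    rw [this]; ring
  have htransψ : ∀ a b, w a b * ψ b = Gm w u v b * transition w b a := by
    intro a b
    show w a b * (Gm w u v b / ∑ c, w b c) = Gm w u v b * transition w b a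
    have : transition w b a = w a b / ∑ c, w b c := by
      show (w b a / ∑ c, w b c) = w a b / ∑ c, w b c
      rw [hsym a b]
    rw [this]; ring
  have divφ : ∀ a, ∑ b, w a b * (φ a - φ b)
      = (if u = a then 1 else 0) - (if v = a then 1 else 0) := by
    intro a
    have h1 : ∑ b, w a b * (φ a - φ b)
        = (∑ b, w a b) * φ a - ∑ b, w a b * φ b := by
      simp only [mul_sub]
      rw [Finset.sum_sub_distrib, Finset.sum_mul]
    rw [h1, hGφ a, Finset.sum_congr rfl (fun b _ => htransφ a b),
      Gm_mul_trans hsym hnn hdeg hconn v hxv huv a]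
    ring
  have divψ : ∀ a, ∑ b, w a b * (ψ a - ψ b)
      = (if v = a then 1 else 0) - (if u = a then 1 else 0) := by
    intro a
    have h1 : ∑ b, w a b * (ψ a - ψ b)
        = (∑ b, w a b) * ψ a - ∑ b, w a b * ψ b := by
      simp only [mul_sub]
      rw [Finset.sum_sub_distrib, Finset.sum_mul]
    rw [h1, hGψ a, Finset.sum_congr rfl (fun b _ => htransψ a b),
      Gm_mul_trans hsym hnn hdeg hconn u hxu hvu a]
    ring
  -- the combined potential is constant
  set η : V → ℝ := fun a => φ a + ψ a with hη
  have divη : ∀ a, ∑ b, w a b * (η a - η b) = 0 := by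
    intro a
    have : ∑ b, w a b * (η a - η b)
        = ∑ b, w a b * (φ a - φ b) + ∑ b, w a b * (ψ a - ψ b) := by
      rw [← Finset.sum_add_distrib]
      apply Finset.sum_congr rfl
      intro b _
      rw [hη]; ring
    rw [this, divφ a, divψ a]; ring
  have hsq : ∀ a b, w a b * (η a - η b) ^ 2 = 0 := by
    have h1 : ∑ a, ∑ b, w a b * η a * (η a - η b) = 0 := by
      apply Finset.sum_eq_zero
      intro a _
      have : ∑ b, w a b * η a * (η a - η b) = η a * ∑ b, w a b * (η a - η b) := by
        rw [Finset.mul_sum]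
        apply Finset.sum_congr rfl
        intro b _; ring
      rw [this, divη a, mul_zero]
    have h2 : ∑ a, ∑ b, w a b * η b * (η a - η b) = 0 := by
      rw [Finset.sum_comm]
      apply Finset.sum_eq_zero
      intro b _
      have : ∑ a, w a b * η b * (η a - η b) = -(η b * ∑ a, w b a * (η b - η a)) := by
        rw [Finset.mul_sum, ← Finset.sum_neg_distrib]
        apply Finset.sum_congr rfl
        intro a _
        rw [hsym a b]; ring
      rw [this, divη b, mul_zero, neg_zero]
    have hkey : ∑ a, ∑ b, w a b * (η a - η b) ^ 2 = 0 := by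
      have : ∀ a, ∑ b, w a b * (η a - η b) ^ 2
          = ∑ b, w a b * η a * (η a - η b) - ∑ b, w a b * η b * (η a - η b) := by
        intro a
        rw [← Finset.sum_sub_distrib]
        apply Finset.sum_congr rfl
        intro b _; ring
      rw [Finset.sum_congr rfl (fun a _ => this a), Finset.sum_sub_distrib, h1, h2, sub_zero]
    intro a b
    have houter : ∀ x ∈ (Finset.univ : Finset V), (0:ℝ) ≤ ∑ b, w x b * (η x - η b) ^ 2 :=
      fun x _ => Finset.sum_nonneg fun c _ => mul_nonneg (hnn x c) (sq_nonneg _)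
    have hx := (Finset.sum_eq_zero_iff_of_nonneg houter).1 hkey a (Finset.mem_univ a)
    have hinner : ∀ c ∈ (Finset.univ : Finset V), (0:ℝ) ≤ w a c * (η a - η c) ^ 2 :=
      fun c _ => mul_nonneg (hnn a c) (sq_nonneg _)
    exact (Finset.sum_eq_zero_iff_of_nonneg hinner).1 hx b (Finset.mem_univ b)
  have hadj_eq : ∀ a b, (wGraph w).Adj a b → η a = η b := by
    intro a b hab
    have hw : w a b ≠ 0 := by
      rcases hab.2 with h' | h'
      · exact h'
      · rw [hsym]; exact h'
    have := hsq a b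
    have h2 : (η a - η b) ^ 2 = 0 := by
      rcases mul_eq_zero.1 this with h | h
      · exact absurd h hw
      · exact h
    have := pow_eq_zero_iff (n := 2) (by norm_num) |>.1 h2
    linarith [this]
  have hwalk_eq : ∀ {x y : V} (_ : (wGraph w).Walk x y), η x = η y := by
    intro x y p
    induction p with
    | nil => rfl
    | cons hab q ih => exact (hadj_eq _ _ hab).trans ih
  have hconst : ∀ a, η a = η u := by
    intro a
    obtain ⟨p⟩ := hconn u a
    exact (hwalk_eq p).symm
  have hφv : φ v = 0 := by
    rw [hφ]
    simp only []
    rw [Gm_col v huv, zero_div]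
  have hψu : ψ u = 0 := by
    rw [hψ]
    simp only []
    rw [Gm_col u hvu, zero_div]
  have hηu : η u = φ u := by rw [hη]; simp [hψu]
  -- commute time identity
  have hcomm : commuteTime w u v = (∑ a, ∑ b, w a b) * φ u := by
    unfold commuteTime
    rw [hitTime_eq hsym hnn hdeg hconn huv, hitTime_eq hsym hnn hdeg hconn hvu]
    have : ∑ b, Gm w v u b + ∑ b, Gm w u v b = ∑ a, (∑ b, w a b) * η a := by
      rw [← Finset.sum_add_distrib]
      apply Finset.sum_congr rfl
      intro a _
      rw [← hGφ a, ← hGψ a, hη]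
      ring
    rw [this]
    have : ∑ a, (∑ b, w a b) * η a = ∑ a, (∑ b, w a b) * φ u := by
      apply Finset.sum_congr rfl
      intro a _
      rw [hconst a, hηu]
    rw [this, ← Finset.sum_mul]
  -- energy identity
  have henergy : ∑ a, ∑ b, w a b * (φ a - φ b) ^ 2 = 2 * φ u := by
    have h1 : ∑ a, ∑ b, w a b * φ a * (φ a - φ b) = φ u := by
      have h1a : ∀ a, ∑ b, w a b * φ a * (φ a - φ b)
          = φ a * ((if u = a then 1 else 0) - (if v = a then 1 else 0)) := by
        intro a
        rw [← divφ a, Finset.mul_sum]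
        apply Finset.sum_congr rfl
        intro b _; ring
      rw [Finset.sum_congr rfl (fun a _ => h1a a)]
      have : ∀ a, φ a * ((if u = a then 1 else 0) - (if v = a then 1 else 0))
          = (if u = a then φ a else 0) - (if v = a then φ a else 0) := by
        intro a
        by_cases h1 : u = a <;> by_cases h2 : v = a <;> simp [h1, h2] <;> ring
      rw [Finset.sum_congr rfl (fun a _ => this a), Finset.sum_sub_distrib]
      simp [hφv]
    have h2 : ∑ a, ∑ b, w a b * φ b * (φ a - φ b) = -φ u := by
      rw [Finset.sum_comm]
      have h2a : ∀ b, ∑ a, w a b * φ b * (φ a - φ b)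
          = -(φ b * ∑ a, w b a * (φ b - φ a)) := by
        intro b
        rw [Finset.mul_sum, ← Finset.sum_neg_distrib]
        apply Finset.sum_congr rfl
        intro a _
        rw [hsym a b]; ring
      rw [Finset.sum_congr rfl (fun b _ => h2a b)]
      have : ∀ b, -(φ b * ∑ a, w b a * (φ b - φ a))
          = -((if u = b then φ b else 0) - (if v = b then φ b else 0)) := by
        intro b
        rw [divφ b]
        by_cases h1 : u = b <;> by_cases h2 : v = b <;> simp [h1, h2] <;> ring
      rw [Finset.sum_congr rfl (fun b _ => this b), Finset.sum_neg_distrib,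
        Finset.sum_sub_distrib]
      simp [hφv]
    have hkey : ∀ a, ∑ b, w a b * (φ a - φ b) ^ 2
        = ∑ b, w a b * φ a * (φ a - φ b) - ∑ b, w a b * φ b * (φ a - φ b) := by
      intro a
      rw [← Finset.sum_sub_distrib]
      apply Finset.sum_congr rfl
      intro b _; ring
    rw [Finset.sum_congr rfl (fun a _ => hkey a), Finset.sum_sub_distrib, h1, h2]
    ring
  -- cut bound
  have hkey : ∀ k, (∑ p ∈ E k, w p.1 p.2)⁻¹ ≤ ∑ p ∈ E k, w p.1 p.2 * (φ p.1 - φ p.2) ^ 2 := by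
    intro k
    set Gk : SimpleGraph V :=
      { Adj := fun a b => (wGraph w).Adj a b ∧ (a, b) ∉ E k ∧ (b, a) ∉ E k
        symm := ⟨by
          intro a b h
          exact ⟨h.1.symm, h.2.2, h.2.1⟩⟩
        loopless := ⟨fun a h => h.1.1 rfl⟩ } with hGk
    have hGle : Gk ≤ wGraph w := fun {a b} h => h.1
    set S : Finset V := Finset.univ.filter (fun x => Gk.Reachable u x) with hS
    have huS : u ∈ S := by
      rw [hS, Finset.mem_filter]
      exact ⟨Finset.mem_univ u, SimpleGraph.Reachable.refl u⟩
    have hvS : v ∉ S := by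
      rw [hS, Finset.mem_filter]
      rintro ⟨-, ⟨p⟩⟩
      obtain ⟨dd, hdmem, hdE⟩ := hcut k (p.mapLe hGle)
      rw [SimpleGraph.Walk.darts_map, List.mem_map] at hdmem
      obtain ⟨d', hd', rfl⟩ := hdmem
      have htp : ((SimpleGraph.Hom.ofLE hGle).mapDart d').toProd = d'.toProd := rfl
      rw [htp] at hdE
      have hadj := d'.adj
      rcases hdE with h | h
      · exact hadj.2.1 (by simpa [SimpleGraph.Dart.toProd] using h)
      · exact hadj.2.2 (by simpa [SimpleGraph.Dart.toProd, Prod.swap] using h)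
    set θ : V → V → ℝ := fun a b => w a b * (φ a - φ b) with hθ
    have hflow : ∑ a ∈ S, ∑ b, θ a b = 1 := by
      have : ∀ a, ∑ b, θ a b = (if u = a then 1 else 0) - (if v = a then 1 else 0) :=
        fun a => divφ a
      rw [Finset.sum_congr rfl (fun a _ => this a), Finset.sum_sub_distrib]
      rw [Finset.sum_ite_eq S u (fun _ => (1:ℝ)), Finset.sum_ite_eq S v (fun _ => (1:ℝ))]
      rw [if_pos huS, if_neg hvS]
      ring
    have hSS : ∑ a ∈ S, ∑ b ∈ S, θ a b = 0 := by
      have hswap : ∑ a ∈ S, ∑ b ∈ S, θ a b = ∑ a ∈ S, ∑ b ∈ S, θ b a := Finset.sum_comm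
      have hneg : ∀ a b, θ b a = -θ a b := by
        intro a b
        rw [hθ]
        show w b a * (φ b - φ a) = -(w a b * (φ a - φ b))
        rw [hsym b a]; ring
      have : ∑ a ∈ S, ∑ b ∈ S, θ b a = -∑ a ∈ S, ∑ b ∈ S, θ a b := by
        rw [← Finset.sum_neg_distrib]
        apply Finset.sum_congr rfl
        intro a _
        rw [← Finset.sum_neg_distrib]
        exact Finset.sum_congr rfl fun b _ => hneg a b
      rw [this] at hswap
      linarith
    have hbdry : ∑ a ∈ S, ∑ b ∈ Sᶜ, θ a b = 1 := by
      have hsplit : ∀ a, ∑ b ∈ S, θ a b + ∑ b ∈ Sᶜ, θ a b = ∑ b, θ a b :=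
        fun a => Finset.sum_add_sum_compl S (θ a)
      have : ∑ a ∈ S, (∑ b ∈ S, θ a b + ∑ b ∈ Sᶜ, θ a b) = 1 := by
        rw [Finset.sum_congr rfl (fun a _ => hsplit a)]
        exact hflow
      rw [Finset.sum_add_distrib, hSS, zero_add] at this
      exact this
    -- boundary terms are cut edges
    have hmem : ∀ a ∈ S, ∀ b ∈ Sᶜ, θ a b ≠ 0 → ((a, b) ∈ E k ∨ (b, a) ∈ E k) := by
      intro a ha b hb hne
      have hwab : w a b ≠ 0 := fun h => hne (by rw [hθ]; show w a b * _ = 0; rw [h, zero_mul])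
      have hab : a ≠ b := by
        intro h
        apply hne
        rw [hθ]
        show w a b * (φ a - φ b) = 0
        rw [h, sub_self, mul_zero]
      have hadj : (wGraph w).Adj a b := ⟨hab, Or.inl hwab⟩
      by_contra hcon
      push_neg at hcon
      have hGadj : Gk.Adj a b := ⟨hadj, hcon.1, hcon.2⟩
      have hra : Gk.Reachable u a := (Finset.mem_filter.1 ha).2
      have hrb : Gk.Reachable u b := hra.trans hGadj.reachable
      rw [Finset.mem_compl, hS, Finset.mem_filter] at hb
      exact hb ⟨Finset.mem_univ b, hrb⟩
    have hprod : ∑ x ∈ S ×ˢ Sᶜ, θ x.1 x.2 = 1 := by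
      rw [Finset.sum_product]
      exact hbdry
    set B : Finset (V × V) := (S ×ˢ Sᶜ).filter (fun p => p ∈ E k ∨ p.swap ∈ E k) with hB
    have hBsum : ∑ x ∈ B, θ x.1 x.2 = 1 := by
      rw [hB, Finset.sum_filter_of_ne, hprod]
      intro x hx hne
      rw [Finset.mem_product] at hx
      rcases hmem x.1 hx.1 x.2 hx.2 hne with h | h
      · exact Or.inl h
      · exact Or.inr h
    have hBmem : ∀ p ∈ B, p.1 ∈ S ∧ p.2 ∈ Sᶜ ∧ (p ∈ E k ∨ p.swap ∈ E k) := by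
      intro p hp
      rw [hB, Finset.mem_filter, Finset.mem_product] at hp
      exact ⟨hp.1.1, hp.1.2, hp.2⟩
    set g : V × V → V × V := fun p => if p ∈ E k then p else p.swap with hg
    have hg1 : ∀ p ∈ B, g p ∈ E k := by
      intro p hp
      rcases (hBmem p hp).2.2 with h | h
      · rw [hg]; simp [h]
      · rw [hg]
        by_cases h' : p ∈ E k
        · simp [h']
        · simp [h', h]
    have hg2 : Set.InjOn g B := by
      intro p hp q hq hpq
      have hpS := hBmem p hp
      have hqS := hBmem q hq
      rw [hg] at hpq
      by_cases h1 : p ∈ E k <;> by_cases h2 : q ∈ E k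
      · simpa [h1, h2] using hpq
      · simp only [if_pos h1, if_neg h2] at hpq
        -- p = q.swap : impossible since p.1 ∈ S, q.2 ∈ Sᶜ etc
        exfalso
        have : p.1 = q.2 := by rw [hpq]; rfl
        have h3 : q.2 ∈ S := this ▸ hpS.1
        exact (Finset.mem_compl.1 hqS.2.1) h3
      · simp only [if_neg h1, if_pos h2] at hpq
        exfalso
        have : p.2 = q.1 := by rw [← hpq]; rfl
        have h3 : p.2 ∈ S := this ▸ hqS.1
        exact (Finset.mem_compl.1 hpS.2.1) h3
      · simp only [if_neg h1, if_neg h2] at hpq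
        exact Prod.swap_injective hpq
    have habs : ∀ p : V × V, |θ p.2 p.1| = |θ p.1 p.2| := by
      intro p
      have : θ p.2 p.1 = -θ p.1 p.2 := by
        rw [hθ]
        show w p.2 p.1 * (φ p.2 - φ p.1) = -(w p.1 p.2 * (φ p.1 - φ p.2))
        rw [hsym p.2 p.1]; ring
      rw [this, abs_neg]
    have hcut1 : 1 ≤ ∑ p ∈ E k, |θ p.1 p.2| := by
      calc (1:ℝ) = ∑ x ∈ B, θ x.1 x.2 := hBsum.symm
        _ ≤ ∑ x ∈ B, |θ x.1 x.2| := Finset.sum_le_sum fun x _ => le_abs_self _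
        _ = ∑ x ∈ B, |θ (g x).1 (g x).2| := by
            apply Finset.sum_congr rfl
            intro x hx
            rw [hg]
            by_cases h : x ∈ E k
            · simp [h]
            · simp only [if_neg h]
              exact (habs x).symm
        _ = ∑ q ∈ B.image g, |θ q.1 q.2| := (Finset.sum_image (f := fun q : V × V => |θ q.1 q.2|)
              (fun p hp q hq h => hg2 (Finset.mem_coe.2 hp) (Finset.mem_coe.2 hq) h)).symm
        _ ≤ ∑ q ∈ E k, |θ q.1 q.2| := by
            apply Finset.sum_le_sum_of_subset_of_nonneg
            · intro q hq
              obtain ⟨p, hp, rfl⟩ := Finset.mem_image.1 hq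
              exact hg1 p hp
            · intro q _ _
              exact abs_nonneg _
    -- Cauchy-Schwarz
    have hCS := Finset.sum_mul_sq_le_sq_mul_sq (E k)
      (fun p => Real.sqrt (w p.1 p.2)) (fun p => |φ p.1 - φ p.2| * Real.sqrt (w p.1 p.2))
    have hfg : ∀ p ∈ E k, Real.sqrt (w p.1 p.2) * (|φ p.1 - φ p.2| * Real.sqrt (w p.1 p.2))
        = |θ p.1 p.2| := by
      intro p hp
      have hwp : 0 ≤ w p.1 p.2 := hnn _ _
      rw [hθ]
      show Real.sqrt (w p.1 p.2) * (|φ p.1 - φ p.2| * Real.sqrt (w p.1 p.2))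
        = |w p.1 p.2 * (φ p.1 - φ p.2)|
      rw [abs_mul, abs_of_nonneg hwp,
        mul_comm (|φ p.1 - φ p.2|) (Real.sqrt (w p.1 p.2)), ← mul_assoc,
        Real.mul_self_sqrt hwp]
    have hf2 : ∀ p ∈ E k, Real.sqrt (w p.1 p.2) ^ 2 = w p.1 p.2 :=
      fun p _ => Real.sq_sqrt (hnn _ _)
    have hg2' : ∀ p ∈ E k, (|φ p.1 - φ p.2| * Real.sqrt (w p.1 p.2)) ^ 2
        = w p.1 p.2 * (φ p.1 - φ p.2) ^ 2 := by
      intro p hp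
      rw [mul_pow, sq_abs, Real.sq_sqrt (hnn _ _)]
      ring
    rw [Finset.sum_congr rfl hfg, Finset.sum_congr rfl hf2, Finset.sum_congr rfl hg2'] at hCS
    have hQnn : 0 ≤ ∑ p ∈ E k, w p.1 p.2 * (φ p.1 - φ p.2) ^ 2 :=
      Finset.sum_nonneg fun p _ => mul_nonneg (hnn _ _) (sq_nonneg _)
    have hSnn : 0 ≤ ∑ p ∈ E k, w p.1 p.2 := Finset.sum_nonneg fun p _ => hnn _ _
    have h1le : 1 ≤ (∑ p ∈ E k, w p.1 p.2) * ∑ p ∈ E k, w p.1 p.2 * (φ p.1 - φ p.2) ^ 2 := by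
      calc (1:ℝ) = 1 ^ 2 := by ring
        _ ≤ (∑ p ∈ E k, |θ p.1 p.2|) ^ 2 := by
            apply pow_le_pow_left₀ (by norm_num) hcut1
        _ ≤ _ := hCS
    have hSpos : 0 < ∑ p ∈ E k, w p.1 p.2 := by
      rcases lt_or_eq_of_le hSnn with h | h
      · exact h
      · exfalso
        rw [← h, zero_mul] at h1le
        linarith
    rw [inv_eq_one_div, div_le_iff₀ hSpos]
    calc (1:ℝ) ≤ (∑ p ∈ E k, w p.1 p.2) * ∑ p ∈ E k, w p.1 p.2 * (φ p.1 - φ p.2) ^ 2 := h1le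
      _ = (∑ p ∈ E k, w p.1 p.2 * (φ p.1 - φ p.2) ^ 2) * ∑ p ∈ E k, w p.1 p.2 := by ring
  -- sum the cut bounds against the energy
  have hQsum : ∑ k, ∑ p ∈ E k, w p.1 p.2 * (φ p.1 - φ p.2) ^ 2 ≤ φ u := by
    set F : V × V → ℝ := fun p => w p.1 p.2 * (φ p.1 - φ p.2) ^ 2 with hF
    have hFnn : ∀ p, 0 ≤ F p := fun p => mul_nonneg (hnn _ _) (sq_nonneg _)
    have hFswap : ∀ p : V × V, F p.swap = F p := by
      intro p
      rw [hF]
      show w p.2 p.1 * (φ p.2 - φ p.1) ^ 2 = w p.1 p.2 * (φ p.1 - φ p.2) ^ 2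
      rw [hsym p.2 p.1]
      ring_nf
    have hdouble : ∀ k, ∑ p ∈ E k ∪ (E k).image Prod.swap, F p = 2 * ∑ p ∈ E k, F p := by
      intro k
      have hdisj' : Disjoint (E k) ((E k).image Prod.swap) := by
        rw [Finset.disjoint_left]
        intro p hp hp'
        obtain ⟨q, hq, hqp⟩ := Finset.mem_image.1 hp'
        have : p.swap ∈ E k := by
          rw [← hqp, Prod.swap_swap]
          exact hq
        exact honce k p hp this
      rw [Finset.sum_union hdisj', Finset.sum_image (fun p _ q _ h => Prod.swap_injective h)]
      rw [Finset.sum_congr rfl (fun p _ => hFswap p)]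
      ring
    have hpd : (↑(Finset.univ : Finset (Fin K)) : Set (Fin K)).PairwiseDisjoint
        (fun k => E k ∪ (E k).image Prod.swap) := by
      intro k _ l _ hkl
      rw [Function.onFun, Finset.disjoint_left]
      intro p hp hp'
      have hmem1 : p ∈ E k ∨ p.swap ∈ E k := by
        rcases Finset.mem_union.1 hp with h | h
        · exact Or.inl h
        · obtain ⟨q, hq, hqp⟩ := Finset.mem_image.1 h
          right
          rw [← hqp, Prod.swap_swap]
          exact hq
      have hmem2 : p ∈ E l ∨ p.swap ∈ E l := by
        rcases Finset.mem_union.1 hp' with h | h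
        · exact Or.inl h
        · obtain ⟨q, hq, hqp⟩ := Finset.mem_image.1 h
          right
          rw [← hqp, Prod.swap_swap]
          exact hq
      rcases hmem1 with h1 | h1 <;> rcases hmem2 with h2 | h2
      · exact (hdisj k l hkl p h1).1 h2
      · exact (hdisj k l hkl p h1).2 h2
      · exact (hdisj k l hkl p.swap h1).2 (by rw [Prod.swap_swap]; exact h2)
      · exact (hdisj k l hkl p.swap h1).1 h2
    have hbig : ∑ k, ∑ p ∈ E k ∪ (E k).image Prod.swap, F p
        ≤ ∑ p ∈ Finset.univ ×ˢ Finset.univ, F p := by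
      rw [← Finset.sum_biUnion hpd]
      apply Finset.sum_le_sum_of_subset_of_nonneg
      · intro p _
        exact Finset.mem_product.2 ⟨Finset.mem_univ _, Finset.mem_univ _⟩
      · intro p _ _
        exact hFnn p
    have htot : ∑ p ∈ Finset.univ ×ˢ Finset.univ, F p = 2 * φ u := by
      rw [Finset.sum_product]
      exact henergy
    have : 2 * ∑ k, ∑ p ∈ E k, F p ≤ 2 * φ u := by
      calc 2 * ∑ k, ∑ p ∈ E k, F p = ∑ k, 2 * ∑ p ∈ E k, F p := by rw [Finset.mul_sum]
        _ = ∑ k, ∑ p ∈ E k ∪ (E k).image Prod.swap, F p :=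
            Finset.sum_congr rfl fun k _ => (hdouble k).symm
        _ ≤ ∑ p ∈ Finset.univ ×ˢ Finset.univ, F p := hbig
        _ = 2 * φ u := htot
    linarith
  -- conclude
  have hVnn : 0 ≤ ∑ a, ∑ b, w a b :=
    Finset.sum_nonneg fun a _ => Finset.sum_nonneg fun b _ => hnn a b
  rw [hcomm]
  apply mul_le_mul_of_nonneg_left _ hVnn
  calc ∑ k, (∑ p ∈ E k, w p.1 p.2)⁻¹
      ≤ ∑ k, ∑ p ∈ E k, w p.1 p.2 * (φ p.1 - φ p.2) ^ 2 :=
        Finset.sum_le_sum fun k _ => hkey k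
    _ ≤ φ u := hQsum
end

section
/- For a random walk on a connected weighted graph with volume V = ∑_{i,j} w_{ij}, the commute time between any two vertices u and v equals V times the effective resistance between u and v in the electrical network obtained by replacing each edge of weight w_e by a resistor of resistance 1/w_e: κ(u,v) = V · R_eff(u,v). -/
open Matrix BigOperators Finset
set_option linter.unusedSectionVars false
set_option linter.unusedVariables false
set_option maxHeartbeats 1000000

variable {V : Type*} [Fintype V] [DecidableEq V]

lemma w_pos_of_adj (w : Matrix V V ℝ) (hsym : ∀ a b, w a b = w b a)
    (hnn : ∀ a b, 0 ≤ w a b) {a b : V} (h : (wGraph w).Adj a b) : 0 < w a b := by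
  rcases h.2 with h' | h'
  · exact lt_of_le_of_ne (hnn a b) (Ne.symm h')
  · rw [hsym a b]; exact lt_of_le_of_ne (hnn b a) (Ne.symm h')

lemma transition_pos_of_adj (w : Matrix V V ℝ) (hsym : ∀ a b, w a b = w b a)
    (hnn : ∀ a b, 0 ≤ w a b) (hdeg : ∀ a, 0 < ∑ b, w a b) {a b : V}
    (h : (wGraph w).Adj a b) : 0 < transition w a b :=
  div_pos (w_pos_of_adj w hsym hnn h) (hdeg a)

/-- A unit flow from `u` to `v` supported on the edges of the weighted graph. -/
def IsUnitFlow (w : Matrix V V ℝ) (u v : V) (f : Matrix V V ℝ) : Prop :=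
  (∀ a b, f a b = -f b a) ∧ (∀ a b, w a b = 0 → f a b = 0) ∧
  (∀ a, a ≠ u → a ≠ v → ∑ b, f a b = 0) ∧ (∑ b, f u b = 1)

/-- Dissipated energy of a flow: each edge of weight `w_e` is a resistor `1/w_e`. -/
noncomputable def energy (w f : Matrix V V ℝ) : ℝ :=
  (1 / 2) * ∑ a, ∑ b, if w a b = 0 then 0 else (f a b) ^ 2 / w a b

/-- Effective resistance between `u` and `v` (Thomson principle: minimal energy
of a unit flow from `u` to `v`). -/
noncomputable def effRes (w : Matrix V V ℝ) (u v : V) : ℝ :=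
  sInf {E | ∃ f, IsUnitFlow w u v f ∧ E = energy w f}






noncomputable def surv (w : Matrix V V ℝ) (v : V) (t : ℕ) (a : V) : ℝ :=
  ((killAt (transition w) v ^ t) *ᵥ (fun _ => (1 : ℝ))) a

lemma surv_zero (w : Matrix V V ℝ) (v a : V) : surv w v 0 a = 1 := by
  simp [surv, pow_zero, Matrix.one_mulVec]

lemma surv_succ (w : Matrix V V ℝ) (v : V) (t : ℕ) (a : V) :
    surv w v (t + 1) a = ∑ b, killAt (transition w) v a b * surv w v t b := by
  simp only [surv, pow_succ']
  rw [← Matrix.mulVec_mulVec]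
  rfl

lemma transition_nonneg (w : Matrix V V ℝ) (hnn : ∀ a b, 0 ≤ w a b) (a b : V) :
    0 ≤ transition w a b := by
  unfold transition
  exact div_nonneg (hnn a b) (Finset.sum_nonneg fun c _ => hnn a c)

lemma transition_rowsum (w : Matrix V V ℝ) (hdeg : ∀ a, 0 < ∑ b, w a b) (a : V) :
    ∑ b, transition w a b = 1 := by
  unfold transition
  simp only [Matrix.of_apply]
  rw [← Finset.sum_div, div_self (hdeg a).ne']

lemma killAt_nonneg (w : Matrix V V ℝ) (hnn : ∀ a b, 0 ≤ w a b) (v a b : V) :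
    0 ≤ killAt (transition w) v a b := by
  unfold killAt
  simp only [Matrix.of_apply]
  split
  · exact le_refl 0
  · exact transition_nonneg w hnn a b

lemma killAt_rowsum_le (w : Matrix V V ℝ) (hnn : ∀ a b, 0 ≤ w a b)
    (hdeg : ∀ a, 0 < ∑ b, w a b) (v a : V) :
    ∑ b, killAt (transition w) v a b ≤ 1 := by
  rw [← transition_rowsum w hdeg a]
  apply Finset.sum_le_sum
  intro b _
  unfold killAt
  simp only [Matrix.of_apply]
  split
  · exact transition_nonneg w hnn a b
  · exact le_refl _

lemma surv_nonneg (w : Matrix V V ℝ) (hnn : ∀ a b, 0 ≤ w a b) (v : V) (t : ℕ) (a : V) :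
    0 ≤ surv w v t a := by
  induction t generalizing a with
  | zero => rw [surv_zero]; norm_num
  | succ t ih =>
      rw [surv_succ]
      exact Finset.sum_nonneg fun b _ => mul_nonneg (killAt_nonneg w hnn v a b) (ih b)

lemma surv_le_one (w : Matrix V V ℝ) (hnn : ∀ a b, 0 ≤ w a b)
    (hdeg : ∀ a, 0 < ∑ b, w a b) (v : V) (t : ℕ) (a : V) :
    surv w v t a ≤ 1 := by
  induction t generalizing a with
  | zero => rw [surv_zero]
  | succ t ih =>
      rw [surv_succ]
      calc ∑ b, killAt (transition w) v a b * surv w v t b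
          ≤ ∑ b, killAt (transition w) v a b * 1 :=
            Finset.sum_le_sum fun b _ =>
              mul_le_mul_of_nonneg_left (ih b) (killAt_nonneg w hnn v a b)
        _ ≤ 1 := by simpa using killAt_rowsum_le w hnn hdeg v a

lemma surv_succ_le (w : Matrix V V ℝ) (hnn : ∀ a b, 0 ≤ w a b)
    (hdeg : ∀ a, 0 < ∑ b, w a b) (v : V) (t : ℕ) (a : V) :
    surv w v (t + 1) a ≤ surv w v t a := by
  induction t generalizing a with
  | zero =>
      rw [surv_zero, surv_succ]
      calc ∑ b, killAt (transition w) v a b * surv w v 0 b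
          ≤ ∑ b, killAt (transition w) v a b * 1 :=
            Finset.sum_le_sum fun b _ => by rw [surv_zero]
        _ ≤ 1 := by simpa using killAt_rowsum_le w hnn hdeg v a
  | succ t ih =>
      rw [surv_succ, surv_succ w v t]
      exact Finset.sum_le_sum fun b _ =>
        mul_le_mul_of_nonneg_left (ih b) (killAt_nonneg w hnn v a b)

lemma surv_antitone (w : Matrix V V ℝ) (hnn : ∀ a b, 0 ≤ w a b)
    (hdeg : ∀ a, 0 < ∑ b, w a b) (v a : V) {s t : ℕ} (h : s ≤ t) :
    surv w v t a ≤ surv w v s a := by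
  induction t with
  | zero => simp at h; simp [h]
  | succ t ih =>
      rcases Nat.lt_or_ge s (t+1) with h' | h'
      · exact le_trans (surv_succ_le w hnn hdeg v t a) (ih (Nat.lt_succ_iff.mp h'))
      · have : s = t + 1 := le_antisymm h h'
        simp [this]






lemma killAt_rowsum_eq (w : Matrix V V ℝ) (hdeg : ∀ a, 0 < ∑ b, w a b) (v a : V) :
    ∑ b, killAt (transition w) v a b = 1 - transition w a v := by
  have h1 : ∀ b, killAt (transition w) v a b
      = transition w a b - (if b = v then transition w a b else 0) := by
    intro b; unfold killAt; simp only [Matrix.of_apply]; split <;> simp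
  simp only [h1]
  rw [Finset.sum_sub_distrib, Finset.sum_ite_eq' univ v (fun b => transition w a b),
    transition_rowsum w hdeg a]
  simp

lemma surv_lt_one_of_dist (w : Matrix V V ℝ) (hsym : ∀ a b, w a b = w b a)
    (hnn : ∀ a b, 0 ≤ w a b) (hdeg : ∀ a, 0 < ∑ b, w a b)
    (hconn : (wGraph w).Connected) (v : V) :
    ∀ t (a : V), a ≠ v → (wGraph w).dist a v ≤ t → surv w v t a < 1 := by
  intro t
  induction t with
  | zero =>
      intro a ha hd
      exact absurd ((hconn.dist_eq_zero_iff).mp (Nat.le_zero.mp hd)) ha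
  | succ t ih =>
      intro a ha hd
      obtain ⟨p, hp⟩ := hconn.exists_walk_length_eq_dist a v
      cases p with
      | nil => exact absurd rfl ha
      | @cons _ b _ hadj q =>
          have hq : (wGraph w).dist b v ≤ t := by
            have := SimpleGraph.dist_le q
            have hlen : q.length + 1 = (wGraph w).dist a v := by
              simpa [SimpleGraph.Walk.length_cons] using hp
            omega
          have hQle : ∀ b', killAt (transition w) v a b' * surv w v t b'
              ≤ killAt (transition w) v a b' := fun b' => by
            have := mul_le_mul_of_nonneg_left (surv_le_one w hnn hdeg v t b')
              (killAt_nonneg w hnn v a b')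
            simpa using this
          rw [surv_succ]
          by_cases hbv : b = v
          · have hPav : 0 < transition w a v :=
              hbv ▸ transition_pos_of_adj w hsym hnn hdeg hadj
            calc ∑ b', killAt (transition w) v a b' * surv w v t b'
                ≤ ∑ b', killAt (transition w) v a b' := Finset.sum_le_sum fun b' _ => hQle b'
              _ = 1 - transition w a v := killAt_rowsum_eq w hdeg v a
              _ < 1 := by linarith
          · have hsb : surv w v t b < 1 := ih b hbv hq
            have hQab : 0 < killAt (transition w) v a b := by
              unfold killAt; simp only [Matrix.of_apply, if_neg hbv]
              exact transition_pos_of_adj w hsym hnn hdeg hadj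
            have hstrict : killAt (transition w) v a b * surv w v t b
                < killAt (transition w) v a b := by nlinarith
            calc ∑ b', killAt (transition w) v a b' * surv w v t b'
                < ∑ b', killAt (transition w) v a b' :=
                  Finset.sum_lt_sum (fun b' _ => hQle b') ⟨b, mem_univ b, hstrict⟩
              _ = 1 - transition w a v := killAt_rowsum_eq w hdeg v a
              _ ≤ 1 := by
                  have := transition_nonneg w hnn a v
                  linarith

lemma surv_lt_one_uniform (w : Matrix V V ℝ) (hsym : ∀ a b, w a b = w b a)
    (hnn : ∀ a b, 0 ≤ w a b) (hdeg : ∀ a, 0 < ∑ b, w a b)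
    (hconn : (wGraph w).Connected) (v : V) (hcard : ∃ b : V, b ≠ v) :
    ∀ a, surv w v (univ.sup (fun a => (wGraph w).dist a v) + 1) a < 1 := by
  set n₀ := univ.sup (fun a => (wGraph w).dist a v) with hn₀
  intro a
  by_cases ha : a = v
  · subst ha
    obtain ⟨b, hb⟩ := hcard
    obtain ⟨p, hp⟩ := hconn.exists_walk_length_eq_dist a b
    cases p with
    | nil => exact absurd rfl (Ne.symm hb)
    | @cons _ c _ hadj q =>
        have hca : c ≠ a := (SimpleGraph.adj_comm _ _ _ |>.mp hadj).ne
        have hsc : surv w a n₀ c < 1 := by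
          refine surv_lt_one_of_dist w hsym hnn hdeg hconn a n₀ c hca ?_
          exact Finset.le_sup (f := fun x => (wGraph w).dist x a) (mem_univ c)
        have hQac : 0 < killAt (transition w) a a c := by
          unfold killAt; simp only [Matrix.of_apply, if_neg hca]
          exact transition_pos_of_adj w hsym hnn hdeg hadj
        have hQle : ∀ b', killAt (transition w) a a b' * surv w a n₀ b'
            ≤ killAt (transition w) a a b' := fun b' => by
          have := mul_le_mul_of_nonneg_left (surv_le_one w hnn hdeg a n₀ b')
            (killAt_nonneg w hnn a a b')
          simpa using this
        rw [surv_succ]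
        calc ∑ b', killAt (transition w) a a b' * surv w a n₀ b'
            < ∑ b', killAt (transition w) a a b' :=
              Finset.sum_lt_sum (fun b' _ => hQle b')
                ⟨c, mem_univ c, by nlinarith [hsc, hQac]⟩
          _ = 1 - transition w a a := killAt_rowsum_eq w hdeg a a
          _ ≤ 1 := by
              have := transition_nonneg w hnn a a
              linarith
  · calc surv w v (n₀ + 1) a ≤ surv w v n₀ a :=
          surv_antitone w hnn hdeg v a (Nat.le_succ n₀)
      _ < 1 := surv_lt_one_of_dist w hsym hnn hdeg hconn v n₀ a ha
          (Finset.le_sup (f := fun x => (wGraph w).dist x v) (mem_univ a))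






lemma killAt_pow_nonneg (w : Matrix V V ℝ) (hnn : ∀ a b, 0 ≤ w a b) (v : V) (t : ℕ)
    (a b : V) : 0 ≤ (killAt (transition w) v ^ t) a b := by
  induction t generalizing a b with
  | zero => by_cases h : a = b <;> simp [pow_zero, Matrix.one_apply, h]
  | succ t ih =>
      rw [pow_succ]
      rw [Matrix.mul_apply]
      exact Finset.sum_nonneg fun c _ => mul_nonneg (ih a c) (killAt_nonneg w hnn v c b)

lemma surv_add (w : Matrix V V ℝ) (v : V) (s t : ℕ) (a : V) :
    surv w v (s + t) a = ∑ b, (killAt (transition w) v ^ s) a b * surv w v t b := by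
  simp only [surv, pow_add, ← Matrix.mulVec_mulVec]
  rfl

lemma surv_eq_rowsum (w : Matrix V V ℝ) (v : V) (t : ℕ) (a : V) :
    surv w v t a = ∑ b, (killAt (transition w) v ^ t) a b := by
  simp [surv, Matrix.mulVec, dotProduct]

lemma surv_geom (w : Matrix V V ℝ) (hnn : ∀ a b, 0 ≤ w a b) (v : V) (N : ℕ) (c : ℝ)
    (hc0 : 0 ≤ c) (hc : ∀ a, surv w v N a ≤ c) :
    ∀ k a, surv w v (N * k) a ≤ c ^ k := by
  intro k
  induction k with
  | zero => intro a; simpa using (surv_zero w v a).le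
  | succ k ih =>
      intro a
      have h1 : N * (k + 1) = N * k + N := by ring
      rw [h1, surv_add]
      calc ∑ b, (killAt (transition w) v ^ (N * k)) a b * surv w v N b
          ≤ ∑ b, (killAt (transition w) v ^ (N * k)) a b * c :=
            Finset.sum_le_sum fun b _ =>
              mul_le_mul_of_nonneg_left (hc b) (killAt_pow_nonneg w hnn v _ a b)
        _ = (∑ b, (killAt (transition w) v ^ (N * k)) a b) * c := by
            rw [← Finset.sum_mul]
        _ = surv w v (N * k) a * c := by rw [← surv_eq_rowsum]
        _ ≤ c ^ k * c := mul_le_mul_of_nonneg_right (ih a) hc0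
        _ = c ^ (k + 1) := by ring

lemma sum_surv_le (w : Matrix V V ℝ) (hnn : ∀ a b, 0 ≤ w a b)
    (hdeg : ∀ a, 0 < ∑ b, w a b) (v : V) (N : ℕ) (c : ℝ) (hc0 : 0 ≤ c)
    (hgeom : ∀ k a, surv w v (N * k) a ≤ c ^ k) :
    ∀ m a, ∑ t ∈ Finset.range (N * m), surv w v t a ≤ (N : ℝ) * ∑ k ∈ Finset.range m, c ^ k := by
  intro m
  induction m with
  | zero => intro a; simp
  | succ m ih =>
      intro a
      have h1 : N * (m + 1) = N * m + N := by ring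
      rw [h1, Finset.sum_range_add]
      have h2 : ∑ j ∈ Finset.range N, surv w v (N * m + j) a ≤ (N : ℝ) * c ^ m := by
        calc ∑ j ∈ Finset.range N, surv w v (N * m + j) a
            ≤ ∑ _j ∈ Finset.range N, c ^ m := by
              refine Finset.sum_le_sum fun j _ => ?_
              exact le_trans (surv_antitone w hnn hdeg v a (Nat.le_add_right _ j)) (hgeom m a)
          _ = (N : ℝ) * c ^ m := by simp [mul_comm]
      calc ∑ t ∈ Finset.range (N * m), surv w v t a
            + ∑ j ∈ Finset.range N, surv w v (N * m + j) a
          ≤ (N : ℝ) * ∑ k ∈ Finset.range m, c ^ k + (N : ℝ) * c ^ m := add_le_add (ih a) h2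
        _ = (N : ℝ) * ∑ k ∈ Finset.range (m + 1), c ^ k := by
            rw [Finset.sum_range_succ]; ring

lemma summable_surv (w : Matrix V V ℝ) (hsym : ∀ a b, w a b = w b a)
    (hnn : ∀ a b, 0 ≤ w a b) (hdeg : ∀ a, 0 < ∑ b, w a b)
    (hconn : (wGraph w).Connected) (v : V) (hcard : ∃ b : V, b ≠ v) (a : V) :
    Summable (fun t => surv w v t a) := by
  set N := univ.sup (fun x => (wGraph w).dist x v) + 1 with hN
  have : Nonempty V := ⟨v⟩
  set c := Finset.univ.sup' (Finset.univ_nonempty (α := V)) (fun x => surv w v N x) with hc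
  have hc1 : c < 1 := by
    rw [Finset.sup'_lt_iff]
    intro x _
    exact surv_lt_one_uniform w hsym hnn hdeg hconn v hcard x
  have hc0 : 0 ≤ c :=
    le_trans (surv_nonneg w hnn v N v) (Finset.le_sup' _ (mem_univ v))
  have hcle : ∀ x, surv w v N x ≤ c := fun x => Finset.le_sup' _ (mem_univ x)
  have hgeom := surv_geom w hnn v N c hc0 hcle
  have hbdd := sum_surv_le w hnn hdeg v N c hc0 hgeom
  apply summable_of_sum_range_le (c := (N : ℝ) * (1 - c)⁻¹)
    (fun t => surv_nonneg w hnn v t a)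
  intro m
  have hNm : m ≤ N * m := Nat.le_mul_of_pos_left m (Nat.succ_pos _)
  have h1 : ∑ t ∈ Finset.range m, surv w v t a
      ≤ ∑ t ∈ Finset.range (N * m), surv w v t a := by
    apply Finset.sum_le_sum_of_subset_of_nonneg (Finset.range_subset_range.mpr hNm)
    intro t _ _
    exact surv_nonneg w hnn v t a
  have h2 : ∑ k ∈ Finset.range m, c ^ k ≤ (1 - c)⁻¹ := by
    have hlt : (0 : ℝ) < 1 - c := by linarith
    have hcm2 : 0 ≤ c ^ m := pow_nonneg hc0 m
    have hcm : 0 ≤ c ^ m := pow_nonneg hc0 m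
    calc ∑ k ∈ Finset.range m, c ^ k = (c ^ m - 1) / (c - 1) :=
          geom_sum_eq (by linarith : c ≠ 1) m
      _ = (1 - c ^ m) / (1 - c) := by rw [← neg_div_neg_eq]; ring_nf
      _ ≤ 1 / (1 - c) := by gcongr <;> linarith
      _ = (1 - c)⁻¹ := one_div _
  calc ∑ t ∈ Finset.range m, surv w v t a
      ≤ ∑ t ∈ Finset.range (N * m), surv w v t a := h1
    _ ≤ (N : ℝ) * ∑ k ∈ Finset.range m, c ^ k := hbdd m a
    _ ≤ (N : ℝ) * (1 - c)⁻¹ := by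
        apply mul_le_mul_of_nonneg_left h2 (by positivity)





lemma hitTime_self (P : Matrix V V ℝ) (v : V) : hitTime P v v = 0 := by
  simp [hitTime]

lemma hitTime_eq_tsum (w : Matrix V V ℝ) {a v : V} (h : a ≠ v) :
    hitTime (transition w) a v = ∑' t, surv w v t a := by
  simp [hitTime, if_neg h, surv]

lemma tsum_surv_one_add (w : Matrix V V ℝ) (hsym : ∀ a b, w a b = w b a)
    (hnn : ∀ a b, 0 ≤ w a b) (hdeg : ∀ a, 0 < ∑ b, w a b)
    (hconn : (wGraph w).Connected) (v : V) (hcard : ∃ b : V, b ≠ v) (a : V) :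
    (∑' t, surv w v t a)
      = 1 + ∑ b, killAt (transition w) v a b * (∑' t, surv w v t b) := by
  have hsumm : ∀ x : V, Summable (fun t => surv w v t x) :=
    summable_surv w hsym hnn hdeg hconn v hcard
  rw [Summable.tsum_eq_zero_add (hsumm a), surv_zero]
  congr 1
  calc ∑' t, surv w v (t + 1) a
      = ∑' t, ∑ b, killAt (transition w) v a b * surv w v t b :=
        tsum_congr fun t => surv_succ w v t a
    _ = ∑ b, ∑' t, killAt (transition w) v a b * surv w v t b :=
        Summable.tsum_finsetSum fun b _ => (hsumm b).mul_left _
    _ = ∑ b, killAt (transition w) v a b * ∑' t, surv w v t b :=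
        Finset.sum_congr rfl fun b _ => tsum_mul_left

lemma hitTime_rec (w : Matrix V V ℝ) (hsym : ∀ a b, w a b = w b a)
    (hnn : ∀ a b, 0 ≤ w a b) (hdeg : ∀ a, 0 < ∑ b, w a b)
    (hconn : (wGraph w).Connected) {a v : V} (h : a ≠ v) :
    hitTime (transition w) a v
      = 1 + ∑ b, transition w a b * hitTime (transition w) b v := by
  have hcard : ∃ b : V, b ≠ v := ⟨a, h⟩
  rw [hitTime_eq_tsum w h, tsum_surv_one_add w hsym hnn hdeg hconn v hcard a]
  congr 1
  refine Finset.sum_congr rfl fun b _ => ?_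
  by_cases hb : b = v
  · subst hb
    simp [killAt, hitTime_self]
  · rw [hitTime_eq_tsum w hb]
    simp [killAt, if_neg hb]

/-- Laplacian of the hitting time at a vertex `a ≠ v`. -/
lemma hit_lap_ne (w : Matrix V V ℝ) (hsym : ∀ a b, w a b = w b a)
    (hnn : ∀ a b, 0 ≤ w a b) (hdeg : ∀ a, 0 < ∑ b, w a b)
    (hconn : (wGraph w).Connected) {a v : V} (h : a ≠ v) :
    (∑ b, w a b) * hitTime (transition w) a v
      - ∑ b, w a b * hitTime (transition w) b v = ∑ b, w a b := by
  have hrec := hitTime_rec w hsym hnn hdeg hconn h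
  have hda : (∑ b, w a b) ≠ 0 := (hdeg a).ne'
  have h2 : (∑ b, w a b) * ∑ b, transition w a b * hitTime (transition w) b v
      = ∑ b, w a b * hitTime (transition w) b v := by
    rw [Finset.mul_sum]
    refine Finset.sum_congr rfl fun b _ => ?_
    unfold transition
    simp only [Matrix.of_apply]
    field_simp
  rw [hrec]
  rw [mul_add, h2]
  ring

/-- The Laplacian applied to any function sums to zero over all vertices. -/
lemma lap_sum_zero (w : Matrix V V ℝ) (hsym : ∀ a b, w a b = w b a) (g : V → ℝ) :
    ∑ a, ((∑ b, w a b) * g a - ∑ b, w a b * g b) = 0 := by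
  rw [Finset.sum_sub_distrib]
  have h1 : ∑ a, (∑ b, w a b) * g a = ∑ a, ∑ b, w a b * g a := by
    refine Finset.sum_congr rfl fun a _ => ?_; rw [Finset.sum_mul]
  have h2 : ∑ a, ∑ b, w a b * g b = ∑ a, ∑ b, w a b * g a := by
    rw [Finset.sum_comm]
    refine Finset.sum_congr rfl fun a _ => ?_
    refine Finset.sum_congr rfl fun b _ => ?_
    rw [hsym b a]
  rw [h1, h2, sub_self]

/-- Laplacian of the hitting time at the target vertex. -/
lemma hit_lap_v (w : Matrix V V ℝ) (hsym : ∀ a b, w a b = w b a)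
    (hnn : ∀ a b, 0 ≤ w a b) (hdeg : ∀ a, 0 < ∑ b, w a b)
    (hconn : (wGraph w).Connected) (v : V) :
    (∑ b, w v b) * hitTime (transition w) v v
      - ∑ b, w v b * hitTime (transition w) b v
      = (∑ b, w v b) - ∑ a, ∑ b, w a b := by
  set L := fun a => (∑ b, w a b) * hitTime (transition w) a v
    - ∑ b, w a b * hitTime (transition w) b v with hL
  have hzero : ∑ a, L a = 0 := lap_sum_zero w hsym _
  have hne : ∀ a ∈ univ.erase v, L a = ∑ b, w a b := fun a ha => by
    exact hit_lap_ne w hsym hnn hdeg hconn (Finset.mem_erase.mp ha).1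
  have hsplit : ∑ a, L a = L v + ∑ a ∈ univ.erase v, L a :=
    (Finset.add_sum_erase univ L (mem_univ v)).symm
  have hsplit2 : ∑ a, (∑ b, w a b) = (∑ b, w v b) + ∑ a ∈ univ.erase v, ∑ b, w a b :=
    (Finset.add_sum_erase univ (fun a => ∑ b, w a b) (mem_univ v)).symm
  have : L v = (∑ b, w v b) - ∑ a, ∑ b, w a b := by
    rw [Finset.sum_congr rfl hne] at hsplit
    rw [hsplit] at hzero
    rw [hsplit2]
    linarith
  exact this





lemma flow_sum_zero (f : Matrix V V ℝ) (hanti : ∀ a b, f a b = -f b a) :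
    ∑ a, ∑ b, f a b = 0 := by
  have h1 : ∑ a, ∑ b, f a b = ∑ a, ∑ b, -f b a := by
    exact Finset.sum_congr rfl fun a _ => Finset.sum_congr rfl fun b _ => hanti a b
  have h2 : ∑ (a : V), ∑ (b : V), f b a = ∑ (b : V), ∑ (a : V), f b a := Finset.sum_comm
  have h3 : ∑ a, ∑ b, -f b a = -∑ a, ∑ b, f b a := by
    simp [Finset.sum_neg_distrib]
  rw [h3, h2] at h1
  linarith

lemma flow_div_sink {w : Matrix V V ℝ} {u v : V} {f : Matrix V V ℝ}
    (hf : IsUnitFlow w u v f) (huv : u ≠ v) : ∑ b, f v b = -1 := by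
  have h0 : ∑ a, ∑ b, f a b = 0 := flow_sum_zero f hf.1
  have hsplit : ∑ a, ∑ b, f a b = (∑ b, f v b) + ∑ a ∈ univ.erase v, ∑ b, f a b :=
    (Finset.add_sum_erase univ (fun a => ∑ b, f a b) (mem_univ v)).symm
  have herase : ∑ a ∈ univ.erase v, ∑ b, f a b = 1 := by
    rw [Finset.sum_eq_single u]
    · exact hf.2.2.2
    · intro a ha hau
      exact hf.2.2.1 a hau (Finset.mem_erase.mp ha).1
    · intro h
      exact absurd (Finset.mem_erase.mpr ⟨huv, mem_univ u⟩) h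
  rw [hsplit, herase] at h0
  linarith

lemma flow_div (w : Matrix V V ℝ) {u v : V} {f : Matrix V V ℝ}
    (hf : IsUnitFlow w u v f) (huv : u ≠ v) (a : V) :
    ∑ b, f a b = (if a = u then (1 : ℝ) else 0) - (if a = v then 1 else 0) := by
  by_cases hau : a = u
  · subst hau
    rw [if_pos rfl, if_neg huv, hf.2.2.2]; norm_num
  · by_cases hav : a = v
    · subst hav
      rw [if_neg hau, if_pos rfl, flow_div_sink hf huv]; norm_num
    · rw [if_neg hau, if_neg hav, hf.2.2.1 a hau hav]; norm_num

section
variable {w : Matrix V V ℝ} {u v : V} {φ : V → ℝ}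

lemma isUnitFlow_harmonic (hsym : ∀ a b, w a b = w b a) (huv : u ≠ v)
    (hdiv : ∀ a, ∑ b, w a b * (φ a - φ b)
      = (if a = u then (1 : ℝ) else 0) - (if a = v then 1 else 0)) :
    IsUnitFlow w u v (Matrix.of fun a b => w a b * (φ a - φ b)) := by
  refine ⟨fun a b => ?_, fun a b h => ?_, fun a hau hav => ?_, ?_⟩
  · simp only [Matrix.of_apply]; rw [hsym a b]; ring
  · simp [Matrix.of_apply, h]
  · simp only [Matrix.of_apply]; rw [hdiv a, if_neg hau, if_neg hav]; norm_num
  · simp only [Matrix.of_apply]; rw [hdiv u, if_pos rfl, if_neg huv]; norm_num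

lemma energy_harmonic (hsym : ∀ a b, w a b = w b a) (huv : u ≠ v)
    (hdiv : ∀ a, ∑ b, w a b * (φ a - φ b)
      = (if a = u then (1 : ℝ) else 0) - (if a = v then 1 else 0)) :
    energy w (Matrix.of fun a b => w a b * (φ a - φ b)) = φ u - φ v := by
  have hterm : ∀ a b, (if w a b = 0 then (0:ℝ)
      else (w a b * (φ a - φ b)) ^ 2 / w a b) = w a b * (φ a - φ b) ^ 2 := by
    intro a b
    by_cases h : w a b = 0
    · simp [h]
    · rw [if_neg h]; field_simp
  have hE : energy w (Matrix.of fun a b => w a b * (φ a - φ b))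
      = (1 / 2) * ∑ a, ∑ b, w a b * (φ a - φ b) ^ 2 := by
    unfold energy
    congr 1
    exact Finset.sum_congr rfl fun a _ => Finset.sum_congr rfl fun b _ => hterm a b
  have hswap : ∑ a, ∑ b, w a b * (φ a - φ b) * φ b
      = -∑ a, ∑ b, w a b * (φ a - φ b) * φ a := by
    have h1 : ∑ (a : V), ∑ (b : V), w a b * (φ a - φ b) * φ b
        = ∑ (b : V), ∑ (a : V), w a b * (φ a - φ b) * φ b := Finset.sum_comm
    rw [h1]
    rw [← Finset.sum_neg_distrib]
    refine Finset.sum_congr rfl fun b _ => ?_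
    rw [← Finset.sum_neg_distrib]
    refine Finset.sum_congr rfl fun a _ => ?_
    rw [hsym a b]; ring
  have hsq : ∑ a, ∑ b, w a b * (φ a - φ b) ^ 2
      = 2 * ∑ a, ∑ b, w a b * (φ a - φ b) * φ a := by
    have : ∀ a b, w a b * (φ a - φ b) ^ 2
        = w a b * (φ a - φ b) * φ a - w a b * (φ a - φ b) * φ b := by
      intro a b; ring
    calc ∑ a, ∑ b, w a b * (φ a - φ b) ^ 2
        = ∑ a, ∑ b, (w a b * (φ a - φ b) * φ a - w a b * (φ a - φ b) * φ b) :=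
          Finset.sum_congr rfl fun a _ => Finset.sum_congr rfl fun b _ => this a b
      _ = (∑ a, ∑ b, w a b * (φ a - φ b) * φ a)
          - ∑ a, ∑ b, w a b * (φ a - φ b) * φ b := by
          rw [← Finset.sum_sub_distrib]
          exact Finset.sum_congr rfl fun a _ => Finset.sum_sub_distrib _ _
      _ = 2 * ∑ a, ∑ b, w a b * (φ a - φ b) * φ a := by rw [hswap]; ring
  have hfinal : ∑ a, ∑ b, w a b * (φ a - φ b) * φ a = φ u - φ v := by
    have h1 : ∀ a, ∑ b, w a b * (φ a - φ b) * φ a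
        = ((if a = u then (1:ℝ) else 0) - (if a = v then 1 else 0)) * φ a := by
      intro a
      rw [← hdiv a, Finset.sum_mul]
    rw [Finset.sum_congr rfl fun a _ => h1 a]
    have : ∀ a, ((if a = u then (1:ℝ) else 0) - (if a = v then 1 else 0)) * φ a
        = (if a = u then φ a else 0) - (if a = v then φ a else 0) := by
      intro a; split <;> split <;> ring
    rw [Finset.sum_congr rfl fun a _ => this a, Finset.sum_sub_distrib,
      Finset.sum_ite_eq' univ u φ, Finset.sum_ite_eq' univ v φ]
    simp
  rw [hE, hsq, hfinal]
  ring

lemma thomson_le (hsym : ∀ a b, w a b = w b a) (hnn : ∀ a b, 0 ≤ w a b) (huv : u ≠ v)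
    (hdiv : ∀ a, ∑ b, w a b * (φ a - φ b)
      = (if a = u then (1 : ℝ) else 0) - (if a = v then 1 else 0))
    (f' : Matrix V V ℝ) (hf' : IsUnitFlow w u v f') :
    energy w (Matrix.of fun a b => w a b * (φ a - φ b)) ≤ energy w f' := by
  set F : Matrix V V ℝ := Matrix.of fun a b => w a b * (φ a - φ b) with hF
  set G : Matrix V V ℝ := Matrix.of fun a b => f' a b - F a b with hG
  have hFunit : IsUnitFlow w u v F := isUnitFlow_harmonic hsym huv hdiv
  -- per-term decomposition
  have hterm : ∀ a b, (if w a b = 0 then (0:ℝ) else (f' a b) ^ 2 / w a b)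
      = (if w a b = 0 then 0 else (F a b) ^ 2 / w a b)
      + (if w a b = 0 then 0 else (G a b) ^ 2 / w a b)
      + 2 * ((φ a - φ b) * G a b) := by
    intro a b
    by_cases h : w a b = 0
    · have hf0 : f' a b = 0 := hf'.2.1 a b h
      have hF0 : F a b = 0 := by simp [hF, Matrix.of_apply, h]
      simp [h, hf0, hF0, hG]
    · simp only [if_neg h, hG, hF, Matrix.of_apply]
      field_simp
      ring
  -- cross term vanishes
  have hGdiv : ∀ a, ∑ b, G a b = 0 := by
    intro a
    have h1 : ∑ b, G a b = ∑ b, f' a b - ∑ b, F a b := by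
      simp only [hG, Matrix.of_apply]
      exact Finset.sum_sub_distrib _ _
    rw [h1, flow_div w hf' huv a, flow_div w hFunit huv a, sub_self]
  have hGanti : ∀ a b, G a b = -G b a := by
    intro a b
    simp only [hG, Matrix.of_apply]
    rw [hf'.1 a b, hFunit.1 a b]
    ring
  have hcross : ∑ a, ∑ b, (φ a - φ b) * G a b = 0 := by
    have h1 : ∀ a b, (φ a - φ b) * G a b = φ a * G a b - φ b * G a b := fun a b => by ring
    have h2 : ∑ a, ∑ b, φ a * G a b = 0 := by
      have : ∀ a, ∑ b, φ a * G a b = 0 := fun a => by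
        rw [← Finset.mul_sum, hGdiv a, mul_zero]
      simp [this]
    have h3 : ∑ a, ∑ b, φ b * G a b = 0 := by
      have hc : ∑ (a : V), ∑ (b : V), φ b * G a b
          = ∑ (b : V), ∑ (a : V), φ b * G a b := Finset.sum_comm
      rw [hc]
      have : ∀ b, ∑ a, φ b * G a b = 0 := by
        intro b
        have hsum : ∑ a, G a b = 0 := by
          have : ∀ a, G a b = -G b a := fun a => hGanti a b
          rw [Finset.sum_congr rfl fun a _ => this a, Finset.sum_neg_distrib,
            hGdiv b, neg_zero]
        rw [← Finset.mul_sum, hsum, mul_zero]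
      simp [this]
    calc ∑ a, ∑ b, (φ a - φ b) * G a b
        = ∑ a, ∑ b, (φ a * G a b - φ b * G a b) :=
          Finset.sum_congr rfl fun a _ => Finset.sum_congr rfl fun b _ => h1 a b
      _ = (∑ a, ∑ b, φ a * G a b) - ∑ a, ∑ b, φ b * G a b := by
          rw [← Finset.sum_sub_distrib]
          exact Finset.sum_congr rfl fun a _ => Finset.sum_sub_distrib _ _
      _ = 0 := by rw [h2, h3, sub_self]
  -- energy of G is nonnegative
  have hGnn : 0 ≤ energy w G := by
    unfold energy
    apply mul_nonneg (by norm_num)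
    apply Finset.sum_nonneg; intro a _
    apply Finset.sum_nonneg; intro b _
    by_cases h : w a b = 0
    · simp [h]
    · rw [if_neg h]
      exact div_nonneg (sq_nonneg _) (hnn a b)
  -- assemble
  have hsum : ∑ a, ∑ b, (if w a b = 0 then (0:ℝ) else f' a b ^ 2 / w a b)
      = (∑ a, ∑ b, (if w a b = 0 then (0:ℝ) else F a b ^ 2 / w a b))
        + (∑ a, ∑ b, (if w a b = 0 then (0:ℝ) else G a b ^ 2 / w a b))
        + 2 * ∑ a, ∑ b, (φ a - φ b) * G a b := by
    calc ∑ a, ∑ b, (if w a b = 0 then (0:ℝ) else f' a b ^ 2 / w a b)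
        = ∑ a, ∑ b, ((if w a b = 0 then (0:ℝ) else F a b ^ 2 / w a b)
            + (if w a b = 0 then (0:ℝ) else G a b ^ 2 / w a b)
            + 2 * ((φ a - φ b) * G a b)) :=
          Finset.sum_congr rfl fun a _ => Finset.sum_congr rfl fun b _ => hterm a b
      _ = ∑ a, ((∑ b, (if w a b = 0 then (0:ℝ) else F a b ^ 2 / w a b))
            + (∑ b, (if w a b = 0 then (0:ℝ) else G a b ^ 2 / w a b))
            + ∑ b, 2 * ((φ a - φ b) * G a b)) := by
          refine Finset.sum_congr rfl fun a _ => ?_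
          rw [Finset.sum_add_distrib, Finset.sum_add_distrib]
      _ = (∑ a, ∑ b, (if w a b = 0 then (0:ℝ) else F a b ^ 2 / w a b))
            + (∑ a, ∑ b, (if w a b = 0 then (0:ℝ) else G a b ^ 2 / w a b))
            + ∑ a, ∑ b, 2 * ((φ a - φ b) * G a b) := by
          rw [Finset.sum_add_distrib, Finset.sum_add_distrib]
      _ = (∑ a, ∑ b, (if w a b = 0 then (0:ℝ) else F a b ^ 2 / w a b))
            + (∑ a, ∑ b, (if w a b = 0 then (0:ℝ) else G a b ^ 2 / w a b))
            + 2 * ∑ a, ∑ b, (φ a - φ b) * G a b := by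
          congr 1
          rw [Finset.mul_sum]
          exact Finset.sum_congr rfl fun a _ => by rw [Finset.mul_sum]
  have hdecomp : energy w f' = energy w F + energy w G
      + ∑ a, ∑ b, (φ a - φ b) * G a b := by
    unfold energy
    rw [hsum]
    ring
  rw [hdecomp, hcross, add_zero]
  linarith

end





lemma no_unit_flow_self (w : Matrix V V ℝ) (u : V) (f : Matrix V V ℝ) :
    ¬ IsUnitFlow w u u f := by
  intro hf
  have h0 : ∑ a, ∑ b, f a b = 0 := flow_sum_zero f hf.1
  have hsplit : ∑ a, ∑ b, f a b = (∑ b, f u b) + ∑ a ∈ univ.erase u, ∑ b, f a b :=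
    (Finset.add_sum_erase univ (fun a => ∑ b, f a b) (mem_univ u)).symm
  have herase : ∑ a ∈ univ.erase u, ∑ b, f a b = 0 := by
    refine Finset.sum_eq_zero fun a ha => ?_
    exact hf.2.2.1 a (Finset.mem_erase.mp ha).1 (Finset.mem_erase.mp ha).1
  rw [hsplit, herase, hf.2.2.2] at h0
  norm_num at h0

lemma effRes_self (w : Matrix V V ℝ) (u : V) : effRes w u u = 0 := by
  have hempty : {E | ∃ f, IsUnitFlow w u u f ∧ E = energy w f} = ∅ := by
    ext E
    simp only [Set.mem_setOf_eq, Set.mem_empty_iff_false, iff_false, not_exists]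
    exact fun f hf => absurd hf.1 (no_unit_flow_self w u f)
  rw [effRes, hempty, Real.sInf_empty]

lemma effRes_eq_potential {w : Matrix V V ℝ} {u v : V} {φ : V → ℝ}
    (hsym : ∀ a b, w a b = w b a) (hnn : ∀ a b, 0 ≤ w a b) (huv : u ≠ v)
    (hdiv : ∀ a, ∑ b, w a b * (φ a - φ b)
      = (if a = u then (1 : ℝ) else 0) - (if a = v then 1 else 0)) :
    effRes w u v = φ u - φ v := by
  set F : Matrix V V ℝ := Matrix.of fun a b => w a b * (φ a - φ b) with hF
  have hmem : (φ u - φ v) ∈ {E | ∃ f, IsUnitFlow w u v f ∧ E = energy w f} :=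
    ⟨F, isUnitFlow_harmonic hsym huv hdiv, (energy_harmonic hsym huv hdiv).symm⟩
  have hlb : ∀ E ∈ {E | ∃ f, IsUnitFlow w u v f ∧ E = energy w f}, φ u - φ v ≤ E := by
    rintro E ⟨f, hf, rfl⟩
    rw [← energy_harmonic hsym huv hdiv]
    exact thomson_le hsym hnn huv hdiv f hf
  exact le_antisymm (csInf_le ⟨φ u - φ v, hlb⟩ hmem) (le_csInf ⟨_, hmem⟩ hlb)

/-- **Chandra–Raghavan–Ruzzo–Smolensky–Tiwari.**  For the random walk on a connected
weighted graph with volume `V = ∑_{i,j} w_{ij}`, the commute time between any two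
vertices equals `V` times the effective resistance: `κ(u,v) = V · R_eff(u,v)`. -/
theorem commute_time_eq_volume_mul_effRes (w : Matrix V V ℝ)
    (hsym : ∀ a b, w a b = w b a) (hnn : ∀ a b, 0 ≤ w a b)
    (hdeg : ∀ a, 0 < ∑ b, w a b) (hconn : (wGraph w).Connected)
    (u v : V) :
    commuteTime w u v = (∑ a, ∑ b, w a b) * effRes w u v := by
  by_cases huv : u = v
  · subst huv
    rw [commuteTime, hitTime_self, effRes_self, add_zero, mul_zero]
  · have hne : Nonempty V := ⟨u⟩
    have hVol : 0 < ∑ a, ∑ b, w a b :=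
      Finset.sum_pos (fun a _ => hdeg a) Finset.univ_nonempty
    set Vol := ∑ a, ∑ b, w a b with hVolDef
    set g : V → ℝ := fun a => hitTime (transition w) a v with hg
    set g' : V → ℝ := fun a => hitTime (transition w) a u with hg'
    set φ : V → ℝ := fun a => (g a - g' a) / Vol with hφ
    have hLg : ∀ a, (∑ b, w a b) * g a - ∑ b, w a b * g b
        = if a = v then (∑ b, w a b) - Vol else (∑ b, w a b) := by
      intro a
      by_cases ha : a = v
      · subst ha
        rw [if_pos rfl]
        exact hit_lap_v w hsym hnn hdeg hconn a
      · rw [if_neg ha]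
        exact hit_lap_ne w hsym hnn hdeg hconn ha
    have hLg' : ∀ a, (∑ b, w a b) * g' a - ∑ b, w a b * g' b
        = if a = u then (∑ b, w a b) - Vol else (∑ b, w a b) := by
      intro a
      by_cases ha : a = u
      · subst ha
        rw [if_pos rfl]
        exact hit_lap_v w hsym hnn hdeg hconn a
      · rw [if_neg ha]
        exact hit_lap_ne w hsym hnn hdeg hconn ha
    have hdiv : ∀ a, ∑ b, w a b * (φ a - φ b)
        = (if a = u then (1 : ℝ) else 0) - (if a = v then 1 else 0) := by
      intro a
      have hexp : ∑ b, w a b * (φ a - φ b)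
          = (((∑ b, w a b) * g a - ∑ b, w a b * g b)
            - ((∑ b, w a b) * g' a - ∑ b, w a b * g' b)) / Vol := by
        rw [eq_div_iff hVol.ne']
        calc (∑ b, w a b * (φ a - φ b)) * Vol
            = ∑ b, (w a b * (g a - g' a) - w a b * (g b - g' b)) := by
              rw [Finset.sum_mul]
              refine Finset.sum_congr rfl fun b _ => ?_
              have h1 : φ a = (g a - g' a) / Vol := rfl
              have h2 : φ b = (g b - g' b) / Vol := rfl
              rw [h1, h2]
              field_simp
          _ = (∑ b, w a b) * (g a - g' a) - ∑ b, w a b * (g b - g' b) := by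
              rw [Finset.sum_sub_distrib, ← Finset.sum_mul]
          _ = ((∑ b, w a b) * g a - ∑ b, w a b * g b)
              - ((∑ b, w a b) * g' a - ∑ b, w a b * g' b) := by
              have h3 : ∑ b, w a b * (g b - g' b)
                  = ∑ b, w a b * g b - ∑ b, w a b * g' b := by
                rw [← Finset.sum_sub_distrib]
                exact Finset.sum_congr rfl fun b _ => by ring
              rw [h3]
              ring
      rw [hexp, hLg a, hLg' a]
      by_cases hau : a = u
      · subst hau
        rw [if_pos rfl, if_neg huv, if_pos rfl, if_neg huv]
        field_simp
        ring
      · by_cases hav : a = v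
        · subst hav
          rw [if_pos rfl, if_neg hau, if_pos rfl, if_neg hau]
          field_simp
          ring
        · rw [if_neg hav, if_neg hau, if_neg hau, if_neg hav]
          simp
    have heff : effRes w u v = φ u - φ v := effRes_eq_potential hsym hnn huv hdiv
    have hgv : g v = 0 := hitTime_self _ v
    have hg'u : g' u = 0 := hitTime_self _ u
    have hcomm : commuteTime w u v = g u + g' v := rfl
    rw [hcomm, heff, hφ]
    simp only [hgv, hg'u]
    field_simp
    ring
end

section
/- In the slow graph S(N,L) with all edge weights equal to w_S > 0, the commute time between vertices x_{m_0} and x_{n_0} with m_0 < n_0 satisfies κ(x_{m_0}, x_{n_0}) ≥ (2[N(2L+1) − L(L+1)]/(L(L+1))) · (n_0 − m_0)/L. -/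
open Matrix BigOperators

variable {V : Type*} [Fintype V] [DecidableEq V]

/-- The weight matrix of the slow graph `S(N,L)`: `w_{nm} = w_S` if `|n−m| ≤ L`
(including self-loops) and `0` otherwise. -/
noncomputable def slowWeight (N L : ℕ) (wS : ℝ) : Matrix (Fin N) (Fin N) ℝ :=
  Matrix.of fun n m => if ((n : ℤ) - (m : ℤ)).natAbs ≤ L then wS else 0

set_option maxHeartbeats 1000000
section AllProof


section Analysis
variable (Q : Matrix V V ℝ)

lemma pow_entry_nonneg (hQ : ∀ x y, 0 ≤ Q x y) : ∀ t x y, 0 ≤ (Q ^ t) x y := by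
  intro t
  induction t with
  | zero => intro x y; by_cases h : x = y <;> simp [Matrix.one_apply, h]
  | succ t ih =>
    intro x y
    rw [pow_succ, Matrix.mul_apply]
    exact Finset.sum_nonneg fun z _ => mul_nonneg (ih x z) (hQ z y)

lemma mulVec_le_mulVec {M : Matrix V V ℝ} (hM : ∀ x y, 0 ≤ M x y) {f g : V → ℝ}
    (h : ∀ y, f y ≤ g y) (x : V) : (M *ᵥ f) x ≤ (M *ᵥ g) x := by
  unfold Matrix.mulVec dotProduct
  exact Finset.sum_le_sum fun y _ => mul_le_mul_of_nonneg_left (h y) (hM x y)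

lemma mulVec_one_le_one {M : Matrix V V ℝ} (hrow : ∀ x, ∑ y, M x y ≤ 1) (x : V) :
    (M *ᵥ fun _ => (1:ℝ)) x ≤ 1 := by
  simpa [Matrix.mulVec, dotProduct] using hrow x

lemma pow_mulVec_one_nonneg (hQ : ∀ x y, 0 ≤ Q x y) (t : ℕ) (x : V) :
    0 ≤ ((Q ^ t) *ᵥ fun _ => (1:ℝ)) x := by
  unfold Matrix.mulVec dotProduct
  exact Finset.sum_nonneg fun y _ => by simpa using pow_entry_nonneg Q hQ t x y

lemma pow_mulVec_one_le_one (hQ : ∀ x y, 0 ≤ Q x y) (hrow : ∀ x, ∑ y, Q x y ≤ 1)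
    (t : ℕ) (x : V) : ((Q ^ t) *ᵥ fun _ => (1:ℝ)) x ≤ 1 := by
  induction t generalizing x with
  | zero => simp [Matrix.one_mulVec]
  | succ t ih =>
    rw [pow_succ', ← Matrix.mulVec_mulVec]
    calc (Q *ᵥ ((Q ^ t) *ᵥ fun _ => (1:ℝ))) x ≤ (Q *ᵥ fun _ => (1:ℝ)) x :=
          mulVec_le_mulVec hQ ih x
      _ ≤ 1 := mulVec_one_le_one hrow x

lemma pow_mulVec_one_contract (hQ : ∀ x y, 0 ≤ Q x y) (hrow : ∀ x, ∑ y, Q x y ≤ 1)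
    {T : ℕ} {ρ : ℝ} (hρ0 : 0 ≤ ρ)
    (hT : ∀ x, ((Q ^ T) *ᵥ fun _ => (1:ℝ)) x ≤ ρ) (a : ℕ) (x : V) :
    ((Q ^ (T * a)) *ᵥ fun _ => (1:ℝ)) x ≤ ρ ^ a := by
  induction a generalizing x with
  | zero => simp [Matrix.one_mulVec]
  | succ a ih =>
    have : Q ^ (T * (a + 1)) = Q ^ (T * a) * Q ^ T := by rw [← pow_add, Nat.mul_succ]
    rw [this, ← Matrix.mulVec_mulVec]
    calc ((Q ^ (T*a)) *ᵥ ((Q ^ T) *ᵥ fun _ => (1:ℝ))) x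
        ≤ ((Q ^ (T*a)) *ᵥ fun _ => ρ) x := by
          exact mulVec_le_mulVec (pow_entry_nonneg Q hQ _) hT x
      _ = ρ * (((Q ^ (T*a)) *ᵥ fun _ => (1:ℝ)) x) := by
          unfold Matrix.mulVec dotProduct
          rw [Finset.mul_sum]; exact Finset.sum_congr rfl fun y _ => by ring
      _ ≤ ρ * ρ ^ a := by
          exact mul_le_mul_of_nonneg_left (ih x) hρ0
      _ = ρ ^ (a+1) := by ring

lemma pow_mulVec_one_le_geo (hQ : ∀ x y, 0 ≤ Q x y) (hrow : ∀ x, ∑ y, Q x y ≤ 1)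
    {T : ℕ} (hT1 : 1 ≤ T) {ρ : ℝ} (hρ0 : 0 ≤ ρ)
    (hT : ∀ x, ((Q ^ T) *ᵥ fun _ => (1:ℝ)) x ≤ ρ) (t : ℕ) (x : V) :
    ((Q ^ t) *ᵥ fun _ => (1:ℝ)) x ≤ ρ ^ (t / T) := by
  have hdecomp : Q ^ t = Q ^ (T * (t / T)) * Q ^ (t % T) := by
    rw [← pow_add]; congr 1; exact (Nat.div_add_mod t T).symm
  rw [hdecomp, ← Matrix.mulVec_mulVec]
  calc ((Q ^ (T * (t/T))) *ᵥ ((Q ^ (t % T)) *ᵥ fun _ => (1:ℝ))) x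
      ≤ ((Q ^ (T * (t/T))) *ᵥ fun _ => (1:ℝ)) x :=
        mulVec_le_mulVec (pow_entry_nonneg Q hQ _) (pow_mulVec_one_le_one Q hQ hrow _) x
    _ ≤ ρ ^ (t / T) := pow_mulVec_one_contract Q hQ hrow hρ0 hT _ x

lemma summable_geo_div {ρ : ℝ} (hρ0 : 0 ≤ ρ) (hρ1 : ρ < 1) {T : ℕ} (hT1 : 1 ≤ T) :
    Summable (fun t : ℕ => ρ ^ (t / T)) := by
  apply summable_of_sum_range_le (c := T * (1 - ρ)⁻¹)
      (fun t => pow_nonneg hρ0 _)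
  intro n
  have key : ∀ m : ℕ, ∑ i ∈ Finset.range (T * m), ρ ^ (i / T) = T * ∑ a ∈ Finset.range m, ρ ^ a := by
    intro m
    induction m with
    | zero => simp
    | succ m ih =>
      rw [Nat.mul_succ, Finset.sum_range_add, ih, Finset.sum_range_succ]
      have : ∀ i ∈ Finset.range T, ρ ^ ((T * m + i) / T) = ρ ^ m := by
        intro i hi
        rw [Finset.mem_range] at hi
        congr 1
        rw [Nat.mul_add_div (by omega : 0 < T), Nat.div_eq_of_lt hi]; omega
      rw [Finset.sum_congr rfl this, Finset.sum_const, Finset.card_range]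
      push_cast; ring
  calc ∑ i ∈ Finset.range n, ρ ^ (i / T)
      ≤ ∑ i ∈ Finset.range (T * n), ρ ^ (i / T) := by
        apply Finset.sum_le_sum_of_subset_of_nonneg
        · exact Finset.range_subset_range.2 (Nat.le_mul_of_pos_left n (by omega))
        · intro i _ _; exact pow_nonneg hρ0 _
    _ = T * ∑ a ∈ Finset.range n, ρ ^ a := key n
    _ ≤ T * (1 - ρ)⁻¹ := by
        apply mul_le_mul_of_nonneg_left _ (by positivity)
        have := Summable.sum_le_tsum (Finset.range n) (fun i _ => pow_nonneg hρ0 _)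
          (summable_geometric_of_lt_one hρ0 hρ1)
        rwa [tsum_geometric_of_lt_one hρ0 hρ1] at this


lemma summable_survival (hQ : ∀ x y, 0 ≤ Q x y) (hrow : ∀ x, ∑ y, Q x y ≤ 1)
    {T : ℕ} (hT1 : 1 ≤ T) {ρ : ℝ} (hρ0 : 0 ≤ ρ) (hρ1 : ρ < 1)
    (hT : ∀ x, ((Q ^ T) *ᵥ fun _ => (1:ℝ)) x ≤ ρ) (x : V) :
    Summable (fun t : ℕ => ((Q ^ t) *ᵥ fun _ => (1:ℝ)) x) := by
  apply Summable.of_nonneg_of_le (fun t => pow_mulVec_one_nonneg Q hQ t x)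
    (fun t => pow_mulVec_one_le_geo Q hQ hrow hT1 hρ0 hT t x)
  exact summable_geo_div hρ0 hρ1 hT1

lemma survival_recursion (hQ : ∀ x y, 0 ≤ Q x y)
    (hsum : ∀ x : V, Summable (fun t : ℕ => ((Q ^ t) *ᵥ fun _ => (1:ℝ)) x)) (x : V) :
    (∑' t : ℕ, ((Q ^ t) *ᵥ fun _ => (1:ℝ)) x)
      = 1 + ∑ y, Q x y * (∑' t : ℕ, ((Q ^ t) *ᵥ fun _ => (1:ℝ)) y) := by
  rw [Summable.tsum_eq_zero_add (hsum x)]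
  congr 1
  · simp [Matrix.one_mulVec]
  have step : ∀ t : ℕ, ((Q ^ (t+1)) *ᵥ fun _ => (1:ℝ)) x
      = ∑ y, Q x y * (((Q ^ t) *ᵥ fun _ => (1:ℝ)) y) := by
    intro t
    rw [pow_succ', ← Matrix.mulVec_mulVec]
    simp [Matrix.mulVec, dotProduct]
  calc ∑' t : ℕ, ((Q ^ (t+1)) *ᵥ fun _ => (1:ℝ)) x
      = ∑' t : ℕ, ∑ y, Q x y * (((Q ^ t) *ᵥ fun _ => (1:ℝ)) y) := by
        exact tsum_congr step
    _ = ∑ y, ∑' t : ℕ, Q x y * (((Q ^ t) *ᵥ fun _ => (1:ℝ)) y) := by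
        exact Summable.tsum_finsetSum fun y _ => (hsum y).mul_left _
    _ = ∑ y, Q x y * (∑' t : ℕ, ((Q ^ t) *ᵥ fun _ => (1:ℝ)) y) := by
        exact Finset.sum_congr rfl fun y _ => (tsum_mul_left)
end Analysis

section Algebra
variable (w : Matrix V V ℝ)

/-- `D f g = ∑ d x * g x * (f x - (Pf) x)` -/
lemma D_compute (hd : ∀ x, 0 < ∑ y, w x y) (f g : V → ℝ) :
    ∑ x, ∑ y, w x y * (f x - f y) * g x
      = ∑ x, (∑ y, w x y) * g x * (f x - ∑ y, transition w x y * f y) := by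
  apply Finset.sum_congr rfl
  intro x _
  have hdx := (hd x).ne'
  have : (∑ y, w x y) * (∑ y, transition w x y * f y) = ∑ y, w x y * f y := by
    rw [Finset.mul_sum]
    apply Finset.sum_congr rfl
    intro y _
    simp only [transition, Matrix.of_apply]
    field_simp
  rw [show (∑ y, w x y) * g x * (f x - ∑ y, transition w x y * f y)
      = g x * ((∑ y, w x y) * f x - (∑ y, w x y) * (∑ y, transition w x y * f y)) from by ring,
    this, Finset.sum_mul, ← Finset.sum_sub_distrib, Finset.mul_sum]
  apply Finset.sum_congr rfl
  intro y _
  ring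

lemma D_symmetrize (hsym : ∀ x y, w x y = w y x) (f g : V → ℝ) :
    ∑ x, ∑ y, w x y * (f x - f y) * (g x - g y)
      = 2 * ∑ x, ∑ y, w x y * (f x - f y) * g x := by
  have h2 : ∑ x, ∑ y, w x y * (f x - f y) * g y
      = - ∑ x, ∑ y, w x y * (f x - f y) * g x := by
    rw [Finset.sum_comm, ← Finset.sum_neg_distrib]
    apply Finset.sum_congr rfl; intro x _
    rw [← Finset.sum_neg_distrib]
    apply Finset.sum_congr rfl; intro y _
    rw [hsym y x]; ring
  have expand : ∀ x y : V, w x y * (f x - f y) * (g x - g y)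
      = w x y * (f x - f y) * g x - w x y * (f x - f y) * g y := fun x y => by ring
  calc ∑ x, ∑ y, w x y * (f x - f y) * (g x - g y)
      = (∑ x, ∑ y, w x y * (f x - f y) * g x) - ∑ x, ∑ y, w x y * (f x - f y) * g y := by
        rw [← Finset.sum_sub_distrib]
        apply Finset.sum_congr rfl; intro x _
        rw [← Finset.sum_sub_distrib]
        exact Finset.sum_congr rfl fun y _ => expand x y
    _ = 2 * ∑ x, ∑ y, w x y * (f x - f y) * g x := by rw [h2]; ring

lemma column_identity (hsym : ∀ x y, w x y = w y x) (hd : ∀ x, 0 < ∑ y, w x y) (f : V → ℝ) :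
    ∑ x, (∑ y, w x y) * (f x - ∑ y, transition w x y * f y) = 0 := by
  have key : ∀ x, (∑ y, w x y) * (∑ y, transition w x y * f y) = ∑ y, w x y * f y := by
    intro x
    have hdx := (hd x).ne'
    rw [Finset.mul_sum]
    apply Finset.sum_congr rfl
    intro y _
    simp only [transition, Matrix.of_apply]
    field_simp
  have : ∑ x, (∑ y, w x y) * (f x - ∑ y, transition w x y * f y)
      = (∑ x, (∑ y, w x y) * f x) - ∑ x, ∑ y, w x y * f y := by
    rw [← Finset.sum_sub_distrib]
    apply Finset.sum_congr rfl; intro x _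
    rw [mul_sub, key x]
  rw [this, sub_eq_zero]
  rw [Finset.sum_comm]
  apply Finset.sum_congr rfl; intro x _
  rw [Finset.sum_mul]
  apply Finset.sum_congr rfl; intro y _
  rw [hsym y x]
end Algebra

theorem dirichlet_commute_bound (w : Matrix V V ℝ) (hsym : ∀ x y : V, w x y = w y x)
    (hnn : ∀ x y : V, 0 ≤ w x y) (hd : ∀ x : V, 0 < ∑ y, w x y)
    (u v : V) (huv : u ≠ v) (hv hu : V → ℝ)
    (hv0 : hv v = 0) (hu0 : hu u = 0)
    (hveq : ∀ x, x ≠ v → hv x = 1 + ∑ y, transition w x y * hv y)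
    (hueq : ∀ x, x ≠ u → hu x = 1 + ∑ y, transition w x y * hu y)
    (φ : V → ℝ) :
    2 * (∑ x, ∑ y, w x y) * (φ u - φ v)^2
      ≤ (∑ x, ∑ y, w x y * (φ x - φ y)^2) * (hv u + hu v) := by
  set P := transition w with hP
  set Vol := ∑ x : V, ∑ y, w x y with hVoldef
  have hVolpos : 0 < Vol := Finset.sum_pos (fun x _ => hd x) ⟨u, Finset.mem_univ u⟩
  -- return time identity
  have return_id : ∀ (z : V) (t : V → ℝ), t z = 0 →
      (∀ x, x ≠ z → t x = 1 + ∑ y, P x y * t y) →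
      (∑ y, w z y) * (1 + ∑ y, P z y * t y) = Vol := by
    intro z t h0 heq
    have col := column_identity w hsym hd t
    have split : ∑ x, (∑ y, w x y) * (t x - ∑ y, P x y * t y)
        = Vol - (∑ y, w z y) * (1 + ∑ y, P z y * t y) := by
      have hterm : ∀ x : V, (∑ y, w x y) * (t x - ∑ y, P x y * t y)
          = (∑ y, w x y) - (if x = z then (∑ y, w z y) * (1 + ∑ y, P z y * t y) else 0) := by
        intro x
        by_cases hx : x = z
        · subst hx; rw [if_pos rfl, h0]; ring
        · rw [if_neg hx, heq x hx]; ring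
      rw [Finset.sum_congr rfl (fun x _ => hterm x), Finset.sum_sub_distrib,
        Finset.sum_ite_eq' Finset.univ z, if_pos (Finset.mem_univ z)]
    rw [col] at split
    linarith
  have hau := return_id u hu hu0 hueq
  have hav := return_id v hv hv0 hveq
  set β : V → ℝ := fun x => hv x - hu x with hβ
  have hPβ : ∀ x, ∑ y, P x y * β y = (∑ y, P x y * hv y) - (∑ y, P x y * hu y) := by
    intro x
    rw [← Finset.sum_sub_distrib]
    exact Finset.sum_congr rfl fun y _ => by simp only [hβ]; ring
  have hDβ : ∀ g : V → ℝ, ∑ x, (∑ y, w x y) * g x * (β x - ∑ y, P x y * β y)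
      = Vol * g u - Vol * g v := by
    intro g
    have hterm : ∀ x : V, (∑ y, w x y) * g x * (β x - ∑ y, P x y * β y)
        = (if x = u then Vol * g u else 0) - (if x = v then Vol * g v else 0) := by
      intro x
      rw [hPβ x]
      by_cases hxu : x = u
      · subst hxu
        rw [if_pos rfl, if_neg huv]
        have h1 : hv x = 1 + ∑ y, P x y * hv y := hveq x huv
        have : β x - ((∑ y, P x y * hv y) - ∑ y, P x y * hu y)
            = 1 + ∑ y, P x y * hu y := by
          simp only [hβ]; rw [h1, hu0]; ring
        rw [this, show (∑ y, w x y) * g x * (1 + ∑ y, P x y * hu y)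
          = ((∑ y, w x y) * (1 + ∑ y, P x y * hu y)) * g x from by ring, hau]
        ring
      · by_cases hxv : x = v
        · subst hxv
          rw [if_neg hxu, if_pos rfl]
          have h1 : hu x = 1 + ∑ y, P x y * hu y := hueq x (Ne.symm huv)
          have : β x - ((∑ y, P x y * hv y) - ∑ y, P x y * hu y)
              = -(1 + ∑ y, P x y * hv y) := by
            simp only [hβ]; rw [h1, hv0]; ring
          rw [this, show (∑ y, w x y) * g x * (-(1 + ∑ y, P x y * hv y))
            = -(((∑ y, w x y) * (1 + ∑ y, P x y * hv y)) * g x) from by ring, hav]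
          ring
        · rw [if_neg hxu, if_neg hxv]
          have h1 : hv x = 1 + ∑ y, P x y * hv y := hveq x hxv
          have h2 : hu x = 1 + ∑ y, P x y * hu y := hueq x hxu
          have : β x - ((∑ y, P x y * hv y) - ∑ y, P x y * hu y) = 0 := by
            simp only [hβ]; rw [h1, h2]; ring
          rw [this]; ring
    rw [Finset.sum_congr rfl (fun x _ => hterm x), Finset.sum_sub_distrib,
      Finset.sum_ite_eq' Finset.univ u, Finset.sum_ite_eq' Finset.univ v,
      if_pos (Finset.mem_univ u), if_pos (Finset.mem_univ v)]
  have E1 : ∑ x, ∑ y, w x y * (β x - β y) * (φ x - φ y) = 2 * (Vol * φ u - Vol * φ v) := by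
    calc ∑ x, ∑ y, w x y * (β x - β y) * (φ x - φ y)
        = 2 * ∑ x, ∑ y, w x y * (β x - β y) * φ x := D_symmetrize w hsym β φ
      _ = 2 * (Vol * φ u - Vol * φ v) := by rw [D_compute w hd β φ, hDβ φ]
  have E2 : ∑ x, ∑ y, w x y * (β x - β y) * (β x - β y)
      = 2 * Vol * (hv u + hu v) := by
    calc ∑ x, ∑ y, w x y * (β x - β y) * (β x - β y)
        = 2 * ∑ x, ∑ y, w x y * (β x - β y) * β x := D_symmetrize w hsym β β
      _ = 2 * (Vol * β u - Vol * β v) := by rw [D_compute w hd β β, hDβ β]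
      _ = 2 * Vol * (hv u + hu v) := by simp only [hβ]; rw [hv0, hu0]; ring
  -- Cauchy-Schwarz
  have CS : (∑ x, ∑ y, w x y * (β x - β y) * (φ x - φ y)) ^ 2
      ≤ (∑ x, ∑ y, w x y * (β x - β y) * (β x - β y))
        * (∑ x, ∑ y, w x y * (φ x - φ y)^2) := by
    have key := Finset.sum_mul_sq_le_sq_mul_sq (Finset.univ : Finset (V × V))
      (fun p => Real.sqrt (w p.1 p.2) * (β p.1 - β p.2))
      (fun p => Real.sqrt (w p.1 p.2) * (φ p.1 - φ p.2))
    have e0 : ∑ p : V × V, (Real.sqrt (w p.1 p.2) * (β p.1 - β p.2))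
        * (Real.sqrt (w p.1 p.2) * (φ p.1 - φ p.2))
        = ∑ x, ∑ y, w x y * (β x - β y) * (φ x - φ y) := by
      rw [← Finset.sum_product']
      apply Finset.sum_congr rfl
      intro p _
      rw [show Real.sqrt (w p.1 p.2) * (β p.1 - β p.2) * (Real.sqrt (w p.1 p.2) * (φ p.1 - φ p.2))
        = (Real.sqrt (w p.1 p.2) * Real.sqrt (w p.1 p.2)) * (β p.1 - β p.2) * (φ p.1 - φ p.2) from by
          ring, Real.mul_self_sqrt (hnn p.1 p.2)]
    have e1 : ∑ p : V × V, (Real.sqrt (w p.1 p.2) * (β p.1 - β p.2)) ^ 2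
        = ∑ x, ∑ y, w x y * (β x - β y) * (β x - β y) := by
      rw [← Finset.sum_product']
      apply Finset.sum_congr rfl
      intro p _
      rw [mul_pow, Real.sq_sqrt (hnn p.1 p.2)]
      ring
    have e2 : ∑ p : V × V, (Real.sqrt (w p.1 p.2) * (φ p.1 - φ p.2)) ^ 2
        = ∑ x, ∑ y, w x y * (φ x - φ y)^2 := by
      rw [← Finset.sum_product']
      apply Finset.sum_congr rfl
      intro p _
      rw [mul_pow, Real.sq_sqrt (hnn p.1 p.2)]
    rw [e0, e1, e2] at key
    exact key
  rw [E1, E2] at CS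
  have hEφ : 0 ≤ ∑ x, ∑ y, w x y * (φ x - φ y)^2 :=
    Finset.sum_nonneg fun x _ => Finset.sum_nonneg fun y _ =>
      mul_nonneg (hnn x y) (sq_nonneg _)
  nlinarith [CS, hVolpos, sq_nonneg (φ u - φ v), mul_pos hVolpos hVolpos]


section Phi
variable (L K m₀ : ℕ)

/-- The step potential. -/
def sfun (x : ℕ) : ℕ := min K ((x - m₀ + (L - 1)) / L)

lemma sfun_m₀ (hL : 1 ≤ L) : sfun L K m₀ m₀ = 0 := by
  unfold sfun
  rw [Nat.sub_self, Nat.zero_add, Nat.div_eq_of_lt (by omega)]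
  simp

lemma sfun_n₀ (hL : 1 ≤ L) {g n₀ : ℕ} (hg : 1 ≤ g) (hgn : n₀ = m₀ + g) (hK : K = (g - 1) / L + 1) :
    sfun L K m₀ n₀ = K := by
  unfold sfun
  have h1 : n₀ - m₀ + (L - 1) = (g - 1) + L := by omega
  rw [h1, Nat.add_div_right _ (by omega : 0 < L), hK]
  simp

lemma sfun_mono {x y : ℕ} (hxy : x ≤ y) : sfun L K m₀ x ≤ sfun L K m₀ y := by
  unfold sfun
  exact min_le_min le_rfl (Nat.div_le_div_right (by omega))

lemma sfun_le : ∀ x, sfun L K m₀ x ≤ K := fun x => min_le_left _ _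

lemma sfun_step (hL : 1 ≤ L) {x t : ℕ} (ht : t ≤ L) : sfun L K m₀ (x + t) ≤ sfun L K m₀ x + 1 := by
  unfold sfun
  have h1 : x + t - m₀ + (L - 1) ≤ (x - m₀ + (L - 1)) + L := by omega
  have h2 : (x + t - m₀ + (L - 1)) / L ≤ (x - m₀ + (L - 1)) / L + 1 := by
    calc (x + t - m₀ + (L - 1)) / L ≤ ((x - m₀ + (L - 1)) + L) / L := Nat.div_le_div_right h1
      _ = (x - m₀ + (L - 1)) / L + 1 := Nat.add_div_right _ (by omega)
  omega

lemma sfun_telescope (t M : ℕ) :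
    ∑ x ∈ Finset.range M, ((sfun L K m₀ (x + t) : ℝ) - sfun L K m₀ x) ≤ t * K := by
  have key : ∀ x, ((sfun L K m₀ (x + t) : ℝ) - sfun L K m₀ x)
      = ∑ j ∈ Finset.range t, (((sfun L K m₀ (x + (j+1)) : ℝ)) - sfun L K m₀ (x + j)) := by
    intro x
    rw [Finset.sum_range_sub (f := fun j => (sfun L K m₀ (x + j) : ℝ))]
    simp
  calc ∑ x ∈ Finset.range M, ((sfun L K m₀ (x + t) : ℝ) - sfun L K m₀ x)
      = ∑ x ∈ Finset.range M, ∑ j ∈ Finset.range t,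
          (((sfun L K m₀ (x + (j+1)) : ℝ)) - sfun L K m₀ (x + j)) :=
        Finset.sum_congr rfl fun x _ => key x
    _ = ∑ j ∈ Finset.range t, ∑ x ∈ Finset.range M,
          (((sfun L K m₀ ((x+1) + j) : ℝ)) - sfun L K m₀ (x + j)) := by
        rw [Finset.sum_comm]
        exact Finset.sum_congr rfl fun j _ => Finset.sum_congr rfl fun x _ => by
          rw [show x + (j+1) = (x+1) + j by omega]
    _ = ∑ j ∈ Finset.range t, (((sfun L K m₀ (M + j) : ℝ)) - sfun L K m₀ (0 + j)) :=
        Finset.sum_congr rfl fun j _ =>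
          Finset.sum_range_sub (f := fun x => (sfun L K m₀ (x + j) : ℝ)) M
    _ ≤ ∑ j ∈ Finset.range t, (K : ℝ) := by
        apply Finset.sum_le_sum
        intro j _
        have h1 : sfun L K m₀ (M + j) ≤ K := sfun_le L K m₀ _
        have h2 : (0:ℝ) ≤ sfun L K m₀ (0 + j) := Nat.cast_nonneg _
        have h3 : (sfun L K m₀ (M + j) : ℝ) ≤ K := by exact_mod_cast h1
        linarith
    _ = t * K := by rw [Finset.sum_const, Finset.card_range]; push_cast; ring
end Phi

section Counting
open Finset

lemma double_sum_sym (n : ℕ) (F : ℕ → ℕ → ℝ) (hsym : ∀ a b, F a b = F b a)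
    (hdiag : ∀ a, F a a = 0) :
    ∑ a ∈ range n, ∑ b ∈ range n, F a b = 2 * ∑ a ∈ range n, ∑ b ∈ range a, F a b := by
  induction n with
  | zero => simp
  | succ n ih =>
    rw [Finset.sum_range_succ, Finset.sum_range_succ (f := fun a => ∑ b ∈ range a, F a b)]
    have h1 : ∀ a, ∑ b ∈ range (n+1), F a b = ∑ b ∈ range n, F a b + F a n := fun a =>
      Finset.sum_range_succ _ _
    rw [Finset.sum_congr rfl (fun a _ => h1 a), Finset.sum_add_distrib, ih, h1 n, hdiag n]
    have h2 : ∑ a ∈ range n, F a n = ∑ b ∈ range n, F n b :=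
      Finset.sum_congr rfl fun a _ => hsym a n
    rw [h2]
    ring

lemma inner_reindex (a L : ℕ) (c : ℕ → ℝ) :
    ∑ b ∈ range a, (if a - b ≤ L then c (a - b) else 0)
      = ∑ t ∈ Finset.Icc 1 L, (if t ≤ a then c t else 0) := by
  rw [← Finset.sum_filter, ← Finset.sum_filter]
  apply Finset.sum_nbij' (i := fun b => a - b) (j := fun t => a - t)
  · intro b hb
    simp only [Finset.mem_filter, Finset.mem_range, Finset.mem_Icc] at *
    omega
  · intro t ht
    simp only [Finset.mem_filter, Finset.mem_range, Finset.mem_Icc] at *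
    omega
  · intro b hb
    simp only [Finset.mem_filter, Finset.mem_range] at hb
    omega
  · intro t ht
    simp only [Finset.mem_filter, Finset.mem_Icc] at ht
    omega
  · intro b hb
    rfl

lemma gauss_Icc_nat (L : ℕ) : (∑ t ∈ Finset.Icc 1 L, t) * 2 = L * (L + 1) := by
  induction L with
  | zero => simp
  | succ n ih =>
    rw [Finset.sum_Icc_succ_top (by omega)]
    rw [add_mul, ih]
    ring

lemma gauss_Icc (L : ℕ) : (∑ t ∈ Finset.Icc 1 L, (t:ℝ)) * 2 = L * (L + 1) := by
  have h := gauss_Icc_nat L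
  have : (∑ t ∈ Finset.Icc 1 L, (t:ℝ)) = ((∑ t ∈ Finset.Icc 1 L, t : ℕ) : ℝ) := by push_cast; rfl
  rw [this]
  exact_mod_cast h

lemma energy_bound (L K m₀ N : ℕ) (hL : 1 ≤ L) (wS : ℝ) (hw : 0 < wS) :
    ∑ a ∈ range N, ∑ b ∈ range N,
        (if ((a:ℤ) - b).natAbs ≤ L then wS * ((sfun L K m₀ a : ℝ) - sfun L K m₀ b)^2 else 0)
      ≤ wS * K * (L * (L+1)) := by
  set s := sfun L K m₀ with hs
  set F : ℕ → ℕ → ℝ := fun a b =>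
    if ((a:ℤ) - b).natAbs ≤ L then wS * ((s a : ℝ) - s b)^2 else 0 with hF
  have hsym : ∀ a b, F a b = F b a := by
    intro a b
    simp only [hF]
    rw [show ((a:ℤ) - b).natAbs = ((b:ℤ) - a).natAbs by omega]
    by_cases h : ((b:ℤ) - a).natAbs ≤ L
    · rw [if_pos h, if_pos h]; ring_nf
    · rw [if_neg h, if_neg h]
  have hdiag : ∀ a, F a a = 0 := by intro a; simp [hF]
  rw [double_sum_sym N F hsym hdiag]
  have hFle : ∀ a, ∀ b ∈ range a, F a b ≤ (if a - b ≤ L then wS * ((s a:ℝ) - s b) else 0) := by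
    intro a b hb
    rw [Finset.mem_range] at hb
    have hnat : ((a:ℤ) - b).natAbs = a - b := by omega
    simp only [hF, hnat]
    by_cases h : a - b ≤ L
    · rw [if_pos h, if_pos h]
      have hmono : s b ≤ s a := sfun_mono _ _ _ (by omega)
      have hstep : s a ≤ s b + 1 := by
        have := sfun_step L K m₀ hL (x := b) (t := a - b) h
        rwa [show b + (a - b) = a by omega] at this
      have hδ : (s a : ℝ) - s b = ((s a - s b : ℕ) : ℝ) := by
        rw [Nat.cast_sub hmono]
      rw [hδ]
      have hle1 : s a - s b ≤ 1 := by omega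
      rcases Nat.le_one_iff_eq_zero_or_eq_one.1 hle1 with h0 | h0 <;> rw [h0] <;> norm_num
    · rw [if_neg h, if_neg h]
  calc 2 * ∑ a ∈ range N, ∑ b ∈ range a, F a b
      ≤ 2 * ∑ a ∈ range N, ∑ b ∈ range a, (if a - b ≤ L then wS * ((s a:ℝ) - s b) else 0) := by
        apply mul_le_mul_of_nonneg_left _ (by norm_num)
        exact Finset.sum_le_sum fun a _ => Finset.sum_le_sum (hFle a)
    _ = 2 * ∑ a ∈ range N, ∑ t ∈ Finset.Icc 1 L,
          (if t ≤ a then wS * ((s a:ℝ) - s (a - t)) else 0) := by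
        congr 1
        apply Finset.sum_congr rfl
        intro a _
        rw [← inner_reindex a L (fun t => wS * ((s a:ℝ) - s (a - t)))]
        apply Finset.sum_congr rfl
        intro b hb
        rw [Finset.mem_range] at hb
        by_cases h : a - b ≤ L
        · rw [if_pos h, if_pos h, show a - (a - b) = b by omega]
        · rw [if_neg h, if_neg h]
    _ = 2 * ∑ t ∈ Finset.Icc 1 L, ∑ a ∈ range N,
          (if t ≤ a then wS * ((s a:ℝ) - s (a - t)) else 0) := by rw [Finset.sum_comm]
    _ ≤ 2 * ∑ t ∈ Finset.Icc 1 L, wS * (t * K) := by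
        apply mul_le_mul_of_nonneg_left _ (by norm_num)
        apply Finset.sum_le_sum
        intro t ht
        rw [Finset.mem_Icc] at ht
        have hIco : (range N).filter (fun a => t ≤ a) = Finset.Ico t N := by
          ext a; simp [Finset.mem_Ico, Finset.mem_filter, Finset.mem_range]; omega
        rw [← Finset.sum_filter, hIco, Finset.sum_Ico_eq_sum_range]
        have : ∀ i, wS * ((s (t + i) : ℝ) - s (t + i - t)) = wS * ((s (i + t) : ℝ) - s i) := by
          intro i
          rw [show t + i - t = i by omega, show t + i = i + t by omega]
        rw [Finset.sum_congr rfl fun i _ => this i, ← Finset.mul_sum]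
        apply mul_le_mul_of_nonneg_left _ (le_of_lt hw)
        exact sfun_telescope L K m₀ t (N - t)
    _ ≤ wS * K * (L * (L+1)) := by
        have : ∑ t ∈ Finset.Icc 1 L, wS * ((t:ℝ) * K) = wS * K * ∑ t ∈ Finset.Icc 1 L, (t:ℝ) := by
          rw [Finset.mul_sum]
          exact Finset.sum_congr rfl fun t _ => by ring
        rw [this]
        have hg := gauss_Icc L
        calc 2 * (wS * (K:ℝ) * ∑ t ∈ Finset.Icc 1 L, (t:ℝ))
            = wS * K * ((∑ t ∈ Finset.Icc 1 L, (t:ℝ)) * 2) := by ring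
          _ = wS * K * (L * (L+1)) := by rw [hg]
          _ ≤ wS * K * (L * (L+1)) := le_rfl
end Counting

section SlowDeg
variable (N L : ℕ) (wS : ℝ)

def nbrs (x : Fin N) : Finset (Fin N) := Finset.univ.filter fun y => ((x:ℤ) - y).natAbs ≤ L

lemma sw_symm (x y : Fin N) : slowWeight N L wS x y = slowWeight N L wS y x := by
  simp only [slowWeight, Matrix.of_apply]
  rw [show ((x:ℤ) - y).natAbs = ((y:ℤ) - x).natAbs by omega]

lemma sw_nonneg (hw : 0 ≤ wS) (x y : Fin N) : 0 ≤ slowWeight N L wS x y := by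
  simp only [slowWeight, Matrix.of_apply]
  split <;> simp [hw]

lemma deg_eq (x : Fin N) : ∑ y, slowWeight N L wS x y = ((nbrs N L x).card : ℝ) * wS := by
  simp only [slowWeight, Matrix.of_apply, nbrs]
  rw [← Finset.sum_filter, Finset.sum_const, nsmul_eq_mul]

lemma card_nbrs_le (x : Fin N) : (nbrs N L x).card ≤ 2*L+1 := by
  have h := Finset.card_le_card_of_injOn (f := fun y : Fin N => (y:ℤ))
    (s := nbrs N L x) (t := Finset.Icc ((x:ℤ) - L) ((x:ℤ) + L))
    (by
      intro y hy
      simp only [nbrs, Finset.mem_coe, Finset.mem_filter, Finset.mem_univ, true_and] at hy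
      simp only [Finset.mem_coe, Finset.mem_Icc]
      omega)
    (by
      intro a _ b _ hab
      dsimp only at hab
      exact Fin.ext (by omega))
  rw [Int.card_Icc] at h
  omega

lemma card_nbrs_ge (x : Fin N) (hN : 0 < N) :
    1 + min (x:ℕ) L + min (N-1-(x:ℕ)) L ≤ (nbrs N L x).card := by
  have hx : (x:ℕ) < N := x.isLt
  have h := Finset.card_le_card_of_injOn
    (f := fun a : ℕ => (⟨a % N, Nat.mod_lt a hN⟩ : Fin N))
    (s := Finset.Icc ((x:ℕ) - min (x:ℕ) L) ((x:ℕ) + min (N-1-(x:ℕ)) L))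
    (t := nbrs N L x)
    (by
      intro a ha
      rw [Finset.mem_coe, Finset.mem_Icc] at ha
      have haN : a < N := by omega
      simp only [nbrs, Finset.mem_coe, Finset.mem_filter, Finset.mem_univ, true_and]
      rw [Nat.mod_eq_of_lt haN]
      omega)
    (by
      intro a ha b hb hab
      simp only [Finset.coe_Icc, Set.mem_Icc] at ha hb
      have haN : a < N := by omega
      have hbN : b < N := by omega
      have h2 : a % N = b % N := congrArg Fin.val hab
      rwa [Nat.mod_eq_of_lt haN, Nat.mod_eq_of_lt hbN] at h2)
  rwa [Nat.card_Icc, show (x:ℕ) + min (N-1-(x:ℕ)) L + 1 - ((x:ℕ) - min (x:ℕ) L)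
    = 1 + min (x:ℕ) L + min (N-1-(x:ℕ)) L by omega] at h

lemma min_sum_nat (n l : ℕ) (hl : l ≤ n) (hl1 : 1 ≤ l) :
    (∑ i ∈ Finset.range n, min i l) * 2 + l * l + l = 2 * n * l := by
  have split : ∑ i ∈ Finset.range n, min i l
      = ∑ i ∈ Finset.range l, min i l + ∑ i ∈ Finset.Ico l n, min i l := by
    rw [Finset.range_eq_Ico, ← Finset.sum_Ico_consecutive _ (Nat.zero_le l) hl,
      ← Finset.range_eq_Ico]
  have h1 : ∑ i ∈ Finset.range l, min i l = ∑ i ∈ Finset.range l, i :=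
    Finset.sum_congr rfl fun i hi => by rw [Finset.mem_range] at hi; omega
  have h2 : ∑ i ∈ Finset.Ico l n, min i l = (n - l) * l := by
    have hc : ∀ i ∈ Finset.Ico l n, min i l = l := fun i hi => by
      rw [Finset.mem_Ico] at hi; omega
    rw [Finset.sum_congr rfl hc, Finset.sum_const, Nat.card_Ico, smul_eq_mul]
  have h3 := Finset.sum_range_id_mul_two l
  obtain ⟨m, rfl⟩ : ∃ m, n = m + l := ⟨n - l, by omega⟩
  obtain ⟨k, rfl⟩ : ∃ k, l = k + 1 := ⟨l - 1, by omega⟩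
  rw [split, h1, h2, show m + (k+1) - (k+1) = m by omega]
  rw [Nat.add_sub_cancel] at h3
  zify at h3 ⊢
  linear_combination h3

lemma vol_card_lb (hL : 1 ≤ L) (hNL : 2*L+1 ≤ N) :
    N * (2*L+1) ≤ (∑ x : Fin N, (nbrs N L x).card) + L * (L+1) := by
  have hN : 0 < N := by omega
  have step1 : ∑ x : Fin N, (1 + min (x:ℕ) L + min (N-1-(x:ℕ)) L)
      ≤ ∑ x : Fin N, (nbrs N L x).card :=
    Finset.sum_le_sum fun x _ => card_nbrs_ge N L x hN
  have step2 : ∑ x : Fin N, (1 + min (x:ℕ) L + min (N-1-(x:ℕ)) L)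
      = ∑ i ∈ Finset.range N, (1 + min i L + min (N-1-i) L) :=
    Fin.sum_univ_eq_sum_range (fun i => 1 + min i L + min (N-1-i) L) N
  have step3 : ∑ i ∈ Finset.range N, (1 + min i L + min (N-1-i) L)
      = N + (∑ i ∈ Finset.range N, min i L) + ∑ i ∈ Finset.range N, min (N-1-i) L := by
    rw [Finset.sum_add_distrib, Finset.sum_add_distrib, Finset.sum_const, Finset.card_range,
      smul_eq_mul, mul_one]
  have step4 : ∑ i ∈ Finset.range N, min (N-1-i) L = ∑ i ∈ Finset.range N, min i L := by
    exact Finset.sum_range_reflect (fun i => min i L) N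
  have hmin := min_sum_nat N L (by omega) hL
  have e1 : N*(2*L+1) = 2*N*L + N := by ring
  have e2 : L*(L+1) = L*L + L := by ring
  linarith
end SlowDeg

section MoreAnalysis
variable (Q : Matrix V V ℝ)

lemma mulVec_pow_succ_apply (t : ℕ) (f : V → ℝ) (x : V) :
    ((Q ^ (t+1)) *ᵥ f) x = ∑ y, Q x y * ((Q ^ t *ᵥ f) y) := by
  rw [pow_succ', ← Matrix.mulVec_mulVec]
  simp [Matrix.mulVec, dotProduct]

lemma pow_mulVec_one_antitone (hQ : ∀ x y, 0 ≤ Q x y) (hrow : ∀ x, ∑ y, Q x y ≤ 1)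
    {t t' : ℕ} (h : t ≤ t') (x : V) :
    ((Q ^ t') *ᵥ fun _ => (1:ℝ)) x ≤ ((Q ^ t) *ᵥ fun _ => (1:ℝ)) x := by
  obtain ⟨c, rfl⟩ : ∃ c, t' = t + c := ⟨t' - t, by omega⟩
  clear h
  induction c generalizing x with
  | zero => simp
  | succ c ih =>
    have : Q ^ (t + (c+1)) = Q ^ (t + c) * Q := by rw [← pow_succ]; ring_nf
    rw [this, ← Matrix.mulVec_mulVec]
    calc ((Q ^ (t+c)) *ᵥ (Q *ᵥ fun _ => (1:ℝ))) x
        ≤ ((Q ^ (t+c)) *ᵥ fun _ => (1:ℝ)) x :=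
          mulVec_le_mulVec (pow_entry_nonneg Q hQ _) (fun y => mulVec_one_le_one hrow y) x
      _ ≤ ((Q ^ t) *ᵥ fun _ => (1:ℝ)) x := ih x
end MoreAnalysis

section SlowTrans
variable (N L : ℕ) (wS : ℝ)

lemma nbrs_card_pos (x : Fin N) : 0 < (nbrs N L x).card :=
  Finset.card_pos.mpr ⟨x, by simp [nbrs]⟩

lemma deg_pos (hw : 0 < wS) (x : Fin N) : 0 < ∑ y, slowWeight N L wS x y := by
  rw [deg_eq]
  exact mul_pos (by exact_mod_cast nbrs_card_pos N L x) hw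

lemma deg_le (hw : 0 < wS) (x : Fin N) :
    ∑ y, slowWeight N L wS x y ≤ (2*(L:ℝ)+1) * wS := by
  rw [deg_eq]
  apply mul_le_mul_of_nonneg_right _ hw.le
  have := card_nbrs_le N L x
  exact_mod_cast this

lemma trans_nonneg (hw : 0 < wS) (x y : Fin N) : 0 ≤ transition (slowWeight N L wS) x y :=
  div_nonneg (sw_nonneg N L wS hw.le x y) (deg_pos N L wS hw x).le

lemma trans_rowsum (hw : 0 < wS) (x : Fin N) :
    ∑ y, transition (slowWeight N L wS) x y = 1 := by
  simp only [transition, Matrix.of_apply]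
  rw [← Finset.sum_div]
  exact div_self (deg_pos N L wS hw x).ne'

lemma trans_lb (hw : 0 < wS) {x y : Fin N} (hxy : ((x:ℤ) - y).natAbs ≤ L) :
    1/(2*(L:ℝ)+1) ≤ transition (slowWeight N L wS) x y := by
  have hd := deg_pos N L wS hw x
  have hdle := deg_le N L wS hw x
  have hL1 : (0:ℝ) < 2*(L:ℝ)+1 := by positivity
  have htv : transition (slowWeight N L wS) x y = wS / ∑ c, slowWeight N L wS x c := by
    simp only [transition, Matrix.of_apply]
    congr 1
    simp only [slowWeight, Matrix.of_apply]
    rw [if_pos hxy]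
  rw [htv]
  calc 1/(2*(L:ℝ)+1) = wS / ((2*(L:ℝ)+1) * wS) := by
        rw [eq_div_iff (by positivity)]
        field_simp
    _ ≤ wS / ∑ c, slowWeight N L wS x c :=
        div_le_div_of_nonneg_left hw.le hd hdle
end SlowTrans

section Contract
variable (N L : ℕ) (wS : ℝ)

lemma killAt_nonneg_s8 (hw : 0 < wS) (v : Fin N) (x z : Fin N) :
    0 ≤ killAt (transition (slowWeight N L wS)) v x z := by
  simp only [killAt, Matrix.of_apply]
  split
  · exact le_rfl
  · exact trans_nonneg N L wS hw x z

lemma killAt_le (hw : 0 < wS) (v : Fin N) (x z : Fin N) :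
    killAt (transition (slowWeight N L wS)) v x z ≤ transition (slowWeight N L wS) x z := by
  simp only [killAt, Matrix.of_apply]
  split
  · exact trans_nonneg N L wS hw x z
  · exact le_rfl

lemma killAt_rowsum (hw : 0 < wS) (v : Fin N) (x : Fin N) :
    ∑ z, killAt (transition (slowWeight N L wS)) v x z
      = 1 - transition (slowWeight N L wS) x v := by
  simp only [killAt, Matrix.of_apply]
  have h : ∀ z, (if z = v then (0:ℝ) else transition (slowWeight N L wS) x z)
      = transition (slowWeight N L wS) x z
        - (if z = v then transition (slowWeight N L wS) x z else 0) := by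
    intro z; split <;> ring
  rw [Finset.sum_congr rfl (fun z _ => h z), Finset.sum_sub_distrib,
    Finset.sum_ite_eq' Finset.univ v, if_pos (Finset.mem_univ v), trans_rowsum N L wS hw x]

lemma killAt_rowsum_le_s8 (hw : 0 < wS) (v : Fin N) (x : Fin N) :
    ∑ z, killAt (transition (slowWeight N L wS)) v x z ≤ 1 := by
  rw [killAt_rowsum N L wS hw v x]
  have := trans_nonneg N L wS hw x v
  linarith

lemma contract_ind (hL : 1 ≤ L) (hw : 0 < wS) (v : Fin N) :
    ∀ k, ∀ x : Fin N, ((x:ℤ) - (v:ℤ)).natAbs ≤ k →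
      ((killAt (transition (slowWeight N L wS)) v ^ (k+1)) *ᵥ fun _ => (1:ℝ)) x
        ≤ 1 - (1/(2*(L:ℝ)+1))^(k+1) := by
  set p : ℝ := 1/(2*(L:ℝ)+1) with hp
  set P := transition (slowWeight N L wS) with hPdef
  set Q := killAt P v with hQdef
  have hp0 : 0 < p := by rw [hp]; positivity
  have hp1 : p ≤ 1 := by
    rw [hp]
    rw [div_le_one (by positivity)]
    have : (0:ℝ) ≤ L := Nat.cast_nonneg L
    linarith
  have hQnn : ∀ x z, 0 ≤ Q x z := killAt_nonneg_s8 N L wS hw v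
  have hQrow : ∀ x, ∑ z, Q x z ≤ 1 := killAt_rowsum_le_s8 N L wS hw v
  intro k
  induction k with
  | zero =>
    intro x hx
    have hxv : x = v := Fin.ext (by omega)
    subst hxv
    rw [zero_add, pow_one]
    have heq : (Q *ᵥ fun _ => (1:ℝ)) x = ∑ z, Q x z := by
      simp [Matrix.mulVec, dotProduct]
    rw [heq, killAt_rowsum N L wS hw x x, pow_one]
    have hpx : p ≤ P x x := trans_lb N L wS hw (by simp)
    linarith
  | succ k ih =>
    intro x hx
    by_cases hk : ((x:ℤ) - (v:ℤ)).natAbs ≤ k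
    · calc ((Q ^ (k+1+1)) *ᵥ fun _ => (1:ℝ)) x
          ≤ ((Q ^ (k+1)) *ᵥ fun _ => (1:ℝ)) x :=
            pow_mulVec_one_antitone Q hQnn hQrow (by omega) x
        _ ≤ 1 - p^(k+1) := ih x hk
        _ ≤ 1 - p^(k+1+1) := by
            have := pow_le_pow_of_le_one hp0.le hp1 (show k+1 ≤ k+1+1 by omega)
            linarith
    · have hne : (x:ℕ) ≠ (v:ℕ) := by omega
      have hvN : (v:ℕ) < N := v.isLt
      have hxN : (x:ℕ) < N := x.isLt
      obtain ⟨y, hy1, hy2⟩ : ∃ y : Fin N,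
          ((x:ℤ) - (y:ℤ)).natAbs ≤ L ∧ ((y:ℤ) - (v:ℤ)).natAbs ≤ k := by
        rcases Nat.lt_or_ge (x:ℕ) (v:ℕ) with hlt | hge
        · refine ⟨⟨(x:ℕ)+1, by omega⟩, ?_, ?_⟩ <;> · simp only [Fin.val_mk]; push_cast; omega
        · refine ⟨⟨(x:ℕ)-1, by omega⟩, ?_, ?_⟩ <;> · simp only [Fin.val_mk]; push_cast; omega
      rw [mulVec_pow_succ_apply]
      by_cases hyv : y = v
      · have hb : ∑ z, Q x z * (((Q ^ (k+1)) *ᵥ fun _ => (1:ℝ)) z) ≤ ∑ z, Q x z :=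
          Finset.sum_le_sum fun z _ => mul_le_of_le_one_right (hQnn x z)
            (pow_mulVec_one_le_one Q hQnn hQrow (k+1) z)
        have hr := killAt_rowsum N L wS hw v x
        have hPxv : p ≤ P x v := trans_lb N L wS hw (by rw [← hyv]; exact hy1)
        have hpk : p^(k+1+1) ≤ p := by
          have := pow_le_pow_of_le_one hp0.le hp1 (show 1 ≤ k+1+1 by omega)
          rwa [pow_one] at this
        rw [← hPdef] at hr
        linarith
      · have split := (Finset.add_sum_erase Finset.univ
          (fun z => Q x z * (((Q ^ (k+1)) *ᵥ fun _ => (1:ℝ)) z)) (Finset.mem_univ y)).symm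
        have hQxy : Q x y = P x y := by
          rw [hQdef]; simp only [killAt, Matrix.of_apply]; rw [if_neg hyv]
        have hPxy : p ≤ P x y := trans_lb N L wS hw hy1
        have hsy : ((Q ^ (k+1)) *ᵥ fun _ => (1:ℝ)) y ≤ 1 - p^(k+1) := ih y hy2
        have herase : ∑ z ∈ Finset.univ.erase y, Q x z * (((Q ^ (k+1)) *ᵥ fun _ => (1:ℝ)) z)
            ≤ ∑ z ∈ Finset.univ.erase y, P x z := by
          apply Finset.sum_le_sum
          intro z _
          calc Q x z * (((Q ^ (k+1)) *ᵥ fun _ => (1:ℝ)) z)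
              ≤ Q x z * 1 := mul_le_of_le_one_right (hQnn x z)
                (pow_mulVec_one_le_one Q hQnn hQrow (k+1) z) |>.trans (by rw [mul_one])
            _ = Q x z := mul_one _
            _ ≤ P x z := killAt_le N L wS hw v x z
        have herase2 : ∑ z ∈ Finset.univ.erase y, P x z = 1 - P x y := by
          have hadd := Finset.add_sum_erase Finset.univ (fun z => P x z) (Finset.mem_univ y)
          have hrow := trans_rowsum N L wS hw x
          rw [← hPdef] at hrow
          rw [hrow] at hadd
          linarith
        have hQsy : Q x y * (((Q ^ (k+1)) *ᵥ fun _ => (1:ℝ)) y) ≤ P x y * (1 - p^(k+1)) := by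
          rw [hQxy]
          exact mul_le_mul_of_nonneg_left hsy (trans_nonneg N L wS hw x y)
        have hcomb : ∑ z, Q x z * (((Q ^ (k+1)) *ᵥ fun _ => (1:ℝ)) z)
            ≤ P x y * (1 - p^(k+1)) + (1 - P x y) := by
          rw [split]
          linarith [herase.trans_eq herase2]
        have hfinal : P x y * (1 - p^(k+1)) + (1 - P x y) ≤ 1 - p^(k+1+1) := by
          have hppos : (0:ℝ) ≤ p^(k+1) := pow_nonneg hp0.le _
          have hps : p^(k+1+1) = p * p^(k+1) := by rw [pow_succ]; ring
          nlinarith [mul_nonneg (sub_nonneg.2 hPxy) hppos]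
        exact hcomb.trans hfinal

lemma contract_N (hL : 1 ≤ L) (hNL : 2*L+1 ≤ N) (hw : 0 < wS) (v : Fin N) (x : Fin N) :
    ((killAt (transition (slowWeight N L wS)) v ^ N) *ᵥ fun _ => (1:ℝ)) x
      ≤ 1 - (1/(2*(L:ℝ)+1))^N := by
  have hvN : (v:ℕ) < N := v.isLt
  have hxN : (x:ℕ) < N := x.isLt
  have hd : ((x:ℤ) - (v:ℤ)).natAbs ≤ N - 1 := by omega
  have h1 := contract_ind N L wS hL hw v (N-1) x hd
  rwa [show N-1+1 = N by omega] at h1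
end Contract


section HitTime
variable (N L : ℕ) (wS : ℝ)

lemma hit_summable (hL : 1 ≤ L) (hNL : 2*L+1 ≤ N) (hw : 0 < wS) (v x : Fin N) :
    Summable (fun t : ℕ =>
      ((killAt (transition (slowWeight N L wS)) v ^ t) *ᵥ fun _ => (1:ℝ)) x) := by
  set p : ℝ := 1/(2*(L:ℝ)+1) with hp
  have hp0 : 0 < p := by rw [hp]; positivity
  have hp1 : p ≤ 1 := by
    rw [hp, div_le_one (by positivity)]
    have : (0:ℝ) ≤ L := Nat.cast_nonneg L
    linarith
  have hρ0 : 0 ≤ 1 - p^N := by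
    have := pow_le_one₀ hp0.le hp1 (n := N)
    linarith
  have hρ1 : 1 - p^N < 1 := by
    have := pow_pos hp0 N
    linarith
  exact summable_survival _ (killAt_nonneg_s8 N L wS hw v) (killAt_rowsum_le_s8 N L wS hw v)
    (by omega) hρ0 hρ1 (contract_N N L wS hL hNL hw v) x

lemma hit_nonneg (hw : 0 < wS) (x v : Fin N) :
    0 ≤ hitTime (transition (slowWeight N L wS)) x v := by
  unfold hitTime
  split
  · exact le_rfl
  · exact tsum_nonneg fun t => pow_mulVec_one_nonneg _
      (killAt_nonneg_s8 N L wS hw v) t x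

lemma hit_eq (hL : 1 ≤ L) (hNL : 2*L+1 ≤ N) (hw : 0 < wS) (v x : Fin N) (hx : x ≠ v) :
    hitTime (transition (slowWeight N L wS)) x v
      = 1 + ∑ y, transition (slowWeight N L wS) x y
          * hitTime (transition (slowWeight N L wS)) y v := by
  set P := transition (slowWeight N L wS) with hPdef
  set Q := killAt P v with hQdef
  have hrec := survival_recursion Q (killAt_nonneg_s8 N L wS hw v)
    (fun y => hit_summable N L wS hL hNL hw v y) x
  have hx' : hitTime P x v = ∑' t : ℕ, ((Q ^ t) *ᵥ fun _ => (1:ℝ)) x := by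
    rw [hitTime, if_neg hx]
  rw [hx', hrec]
  congr 1
  apply Finset.sum_congr rfl
  intro y _
  by_cases hyv : y = v
  · subst hyv
    have hQ0 : Q x y = 0 := by rw [hQdef]; simp [killAt]
    have hh0 : hitTime P y y = 0 := by rw [hitTime, if_pos rfl]
    rw [hQ0, hh0]
    ring
  · have hQ : Q x y = P x y := by rw [hQdef]; simp only [killAt, Matrix.of_apply]; rw [if_neg hyv]
    have hh : hitTime P y v = ∑' t : ℕ, ((Q ^ t) *ᵥ fun _ => (1:ℝ)) y := by
      rw [hitTime, if_neg hyv]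
    rw [hQ, hh]
end HitTime

end AllProof

/-- In the slow graph `S(N,L)` with edge weight `w_S > 0`, the commute time between
vertices `x_{m_0}` and `x_{n_0}` with `m_0 < n_0` satisfies
`κ(x_{m_0},x_{n_0}) ≥ (2[N(2L+1) − L(L+1)]/(L(L+1))) · (n_0 − m_0)/L`. -/
theorem slow_graph_commute_time_lower_bound (N L : ℕ) (hL : 1 ≤ L)
    (hNL : 2 * L + 1 ≤ N) (wS : ℝ) (hw : 0 < wS) (m₀ n₀ : Fin N) (h : m₀ < n₀) :
    2 * ((N : ℝ) * (2 * (L : ℝ) + 1) - (L : ℝ) * ((L : ℝ) + 1)) / ((L : ℝ) * ((L : ℝ) + 1))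
        * (((n₀ : ℕ) : ℝ) - ((m₀ : ℕ) : ℝ)) / (L : ℝ)
      ≤ commuteTime (slowWeight N L wS) m₀ n₀ := by
  have hmn : (m₀:ℕ) < (n₀:ℕ) := h
  set w := slowWeight N L wS with hwdef
  set P := transition w with hPdef
  have hsym : ∀ x y : Fin N, w x y = w y x := sw_symm N L wS
  have hnn : ∀ x y : Fin N, 0 ≤ w x y := sw_nonneg N L wS hw.le
  have hd : ∀ x : Fin N, 0 < ∑ y, w x y := deg_pos N L wS hw
  have hne : m₀ ≠ n₀ := ne_of_lt h
  set hv : Fin N → ℝ := fun x => hitTime P x n₀ with hhv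
  set hu : Fin N → ℝ := fun x => hitTime P x m₀ with hhu
  have hv0 : hv n₀ = 0 := by rw [hhv]; simp [hitTime]
  have hu0 : hu m₀ = 0 := by rw [hhu]; simp [hitTime]
  have hveq : ∀ x, x ≠ n₀ → hv x = 1 + ∑ y, P x y * hv y := fun x hx =>
    hit_eq N L wS hL hNL hw n₀ x hx
  have hueq : ∀ x, x ≠ m₀ → hu x = 1 + ∑ y, P x y * hu y := fun x hx =>
    hit_eq N L wS hL hNL hw m₀ x hx
  have hκ : commuteTime w m₀ n₀ = hv m₀ + hu n₀ := rfl
  have hκnn : 0 ≤ hv m₀ + hu n₀ :=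
    add_nonneg (hit_nonneg N L wS hw m₀ n₀) (hit_nonneg N L wS hw n₀ m₀)
  -- potential
  set g : ℕ := (n₀:ℕ) - (m₀:ℕ) with hgdef
  have hg : 1 ≤ g := by omega
  set K : ℕ := (g-1)/L + 1 with hKdef
  have hK1 : 1 ≤ K := Nat.le_add_left 1 ((g-1)/L)
  set φ : Fin N → ℝ := fun x => (sfun L K (m₀:ℕ) (x:ℕ) : ℝ) with hφdef
  have key := dirichlet_commute_bound w hsym hnn hd m₀ n₀ hne hv hu hv0 hu0 hveq hueq φ
  -- potential values
  have hφm : φ m₀ = 0 := by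
    rw [hφdef]; simp only; rw [sfun_m₀ L K (m₀:ℕ) hL]; norm_num
  have hφn : φ n₀ = K := by
    rw [hφdef]; simp only
    rw [sfun_n₀ L K (m₀:ℕ) hL hg (by omega) hKdef]
  have hφsq : (φ m₀ - φ n₀)^2 = (K:ℝ)^2 := by rw [hφm, hφn]; ring
  rw [hφsq] at key
  -- volume bound
  set A : ℝ := (N : ℝ) * (2 * (L : ℝ) + 1) - (L : ℝ) * ((L : ℝ) + 1) with hAdef
  have hVol : A * wS ≤ ∑ x : Fin N, ∑ y, w x y := by
    have hVolEq : ∑ x : Fin N, ∑ y, w x y = (∑ x : Fin N, ((nbrs N L x).card:ℝ)) * wS := by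
      rw [Finset.sum_mul]
      exact Finset.sum_congr rfl fun x _ => deg_eq N L wS x
    have hcard := vol_card_lb N L hL hNL
    have hcard' : (N : ℝ) * (2 * (L : ℝ) + 1)
        ≤ (∑ x : Fin N, ((nbrs N L x).card:ℝ)) + (L : ℝ) * ((L : ℝ) + 1) := by
      have := Nat.cast_le (α := ℝ).2 hcard
      push_cast at this
      rw [← Nat.cast_sum] at this
      push_cast at this
      linarith
    rw [hVolEq]
    apply mul_le_mul_of_nonneg_right _ hw.le
    rw [hAdef]
    linarith
  -- energy bound
  have hE : ∑ x : Fin N, ∑ y, w x y * (φ x - φ y)^2 ≤ wS * K * ((L:ℝ)*((L:ℝ)+1)) := by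
    have conv : ∑ x : Fin N, ∑ y, w x y * (φ x - φ y)^2
        = ∑ a ∈ Finset.range N, ∑ b ∈ Finset.range N,
            (if ((a:ℤ) - b).natAbs ≤ L then
              wS * ((sfun L K (m₀:ℕ) a : ℝ) - sfun L K (m₀:ℕ) b)^2 else 0) := by
      have inner : ∀ x : Fin N, ∑ y, w x y * (φ x - φ y)^2
          = ∑ b ∈ Finset.range N,
              (if (((x:ℕ):ℤ) - b).natAbs ≤ L then
                wS * ((sfun L K (m₀:ℕ) (x:ℕ) : ℝ) - sfun L K (m₀:ℕ) b)^2 else 0) := by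
        intro x
        rw [← Fin.sum_univ_eq_sum_range (fun b =>
          (if (((x:ℕ):ℤ) - b).natAbs ≤ L then
            wS * ((sfun L K (m₀:ℕ) (x:ℕ) : ℝ) - sfun L K (m₀:ℕ) b)^2 else 0)) N]
        apply Finset.sum_congr rfl
        intro y _
        rw [hwdef]
        simp only [slowWeight, Matrix.of_apply, hφdef]
        rw [ite_mul, zero_mul]
      rw [Finset.sum_congr rfl (fun x _ => inner x),
        ← Fin.sum_univ_eq_sum_range (fun a => ∑ b ∈ Finset.range N,
          (if ((a:ℤ) - b).natAbs ≤ L then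
            wS * ((sfun L K (m₀:ℕ) a : ℝ) - sfun L K (m₀:ℕ) b)^2 else 0)) N]
    rw [conv]
    have := energy_bound L K (m₀:ℕ) N hL wS hw
    calc ∑ a ∈ Finset.range N, ∑ b ∈ Finset.range N,
            (if ((a:ℤ) - b).natAbs ≤ L then
              wS * ((sfun L K (m₀:ℕ) a : ℝ) - sfun L K (m₀:ℕ) b)^2 else 0)
        ≤ wS * K * ((L:ℕ) * ((L:ℕ)+1) : ℕ) := by exact_mod_cast this
      _ = wS * K * ((L:ℝ)*((L:ℝ)+1)) := by push_cast; ring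
  -- numeric facts
  have hLpos : (0:ℝ) < (L:ℝ) := by exact_mod_cast hL
  have hLL1 : (0:ℝ) < (L:ℝ)*((L:ℝ)+1) := by positivity
  have hKpos : (0:ℝ) < (K:ℝ) := by exact_mod_cast hK1
  have hApos : (0:ℝ) < A := by
    rw [hAdef]
    have hNc : (2*(L:ℝ)+1) ≤ (N:ℝ) := by exact_mod_cast hNL
    nlinarith [hLpos]
  have hgK : ((g:ℝ)) ≤ (K:ℝ) * (L:ℝ) := by
    have h2 := Nat.div_add_mod (g-1) L
    have h3 := Nat.mod_lt (g-1) (show 0 < L by omega)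
    have hKL : K * L = L * ((g-1)/L) + L := by rw [hKdef]; ring
    have : g ≤ K * L := by omega
    exact_mod_cast this
  -- chain
  set κ : ℝ := hv m₀ + hu n₀ with hκdef
  have hchain : 2*(A*wS)*(K:ℝ)^2 ≤ (wS*(K:ℝ)*((L:ℝ)*((L:ℝ)+1)))*κ := by
    have s1 : 2*(A*wS)*(K:ℝ)^2 ≤ 2*(∑ x : Fin N, ∑ y, w x y)*(K:ℝ)^2 := by
      nlinarith [mul_nonneg (sub_nonneg.2 hVol) (sq_nonneg (K:ℝ))]
    have s2 : (∑ x : Fin N, ∑ y, w x y * (φ x - φ y)^2) * κ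
        ≤ (wS*(K:ℝ)*((L:ℝ)*((L:ℝ)+1)))*κ := mul_le_mul_of_nonneg_right hE hκnn
    linarith
  have hstep1 : 2*A*(K:ℝ)/((L:ℝ)*((L:ℝ)+1)) ≤ κ := by
    rw [div_le_iff₀ hLL1]
    have hwK : (0:ℝ) < wS*(K:ℝ) := by positivity
    apply le_of_mul_le_mul_right _ hwK
    calc 2*A*(K:ℝ)*(wS*(K:ℝ)) = 2*(A*wS)*(K:ℝ)^2 := by ring
      _ ≤ (wS*(K:ℝ)*((L:ℝ)*((L:ℝ)+1)))*κ := hchain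
      _ = κ*((L:ℝ)*((L:ℝ)+1))*(wS*(K:ℝ)) := by ring
  have hstep2 : 2 * A / ((L:ℝ)*((L:ℝ)+1)) * (((n₀ : ℕ) : ℝ) - ((m₀ : ℕ) : ℝ)) / (L:ℝ)
      ≤ 2*A*(K:ℝ)/((L:ℝ)*((L:ℝ)+1)) := by
    have hgR : ((n₀ : ℕ) : ℝ) - ((m₀ : ℕ) : ℝ) = (g:ℝ) := by
      rw [hgdef]
      push_cast [Nat.cast_sub hmn.le]
      ring
    rw [hgR]
    rw [show 2 * A / ((L:ℝ)*((L:ℝ)+1)) * (g:ℝ) / (L:ℝ)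
      = (2*A/((L:ℝ)*((L:ℝ)+1))) * ((g:ℝ)/(L:ℝ)) from by ring]
    rw [show 2*A*(K:ℝ)/((L:ℝ)*((L:ℝ)+1)) = (2*A/((L:ℝ)*((L:ℝ)+1))) * (K:ℝ) from by ring]
    apply mul_le_mul_of_nonneg_left _ (by positivity)
    rw [div_le_iff₀ hLpos]
    exact hgK
  rw [hκ]
  exact le_trans hstep2 hstep1
end

section
/- The average commute time κ_S = (2/(N(N−1))) ∑_{1≤m<n≤N} κ(x_m, x_n) over the slow graph S(N,L) satisfies κ_S ≥ [N(2L+1) − L(L+1)] · 2(N+1)/(3L²(L+1)). -/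
open Matrix BigOperators

variable {V : Type*} [Fintype V] [DecidableEq V]

open Finset

lemma sum_range_cast (n : ℕ) : ∑ i ∈ range n, (i:ℝ) = n * ((n:ℝ) - 1) / 2 := by
  induction n with
  | zero => simp
  | succ m ih => rw [Finset.sum_range_succ, ih]; push_cast; ring

lemma sum_range_sq_cast (n : ℕ) : ∑ i ∈ range n, ((i:ℝ))^2 = n * ((n:ℝ) - 1) * (2*n - 1) / 6 := by
  induction n with
  | zero => simp
  | succ m ih => rw [Finset.sum_range_succ, ih]; push_cast; ring

lemma sum_Icc_quad (b : ℝ) (a c : ℕ) (hac : a ≤ c) :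
    ∑ i ∈ Finset.Icc a c, (((i:ℝ))^2 + b * i)
      = ((c:ℝ)+1) * c * (2*c+1) / 6 + b * ((c:ℝ)+1) * c / 2
        - ((a:ℝ) * ((a:ℝ)-1) * (2*a-1) / 6 + b * a * ((a:ℝ)-1) / 2) := by
  have hsub : Finset.Icc a c = Finset.range (c+1) \ Finset.range a := by
    ext i; simp [Finset.mem_Icc, Finset.mem_range, Finset.mem_sdiff]; omega
  have hss : Finset.range a ⊆ Finset.range (c+1) := Finset.range_subset_range.mpr (by omega)
  have key : ∑ i ∈ (Finset.range (c+1) \ Finset.range a), (((i:ℝ))^2 + b * i)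
      + ∑ i ∈ Finset.range a, (((i:ℝ))^2 + b * i)
      = ∑ i ∈ Finset.range (c+1), (((i:ℝ))^2 + b * i) := Finset.sum_sdiff hss
  rw [hsub, eq_sub_iff_add_eq]
  simp only [Finset.sum_add_distrib, ← Finset.mul_sum] at key ⊢
  simp only [sum_range_sq_cast, sum_range_cast] at key ⊢
  push_cast at key ⊢
  nlinarith [key]

set_option maxHeartbeats 2000000 in
lemma key_ineq (N L : ℕ) (hL : 1 ≤ L) (hNL : 2*L+1 ≤ N) (b Bv : ℝ)
    (hcase : (3*L ≤ N ∧ b = (5 - 4*(L:ℝ))/3) ∨ (N + 1 ≤ 3*L ∧ b = 1/3))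
    (hBv : Bv = ((N:ℝ) - 1 + b) * (L:ℝ)^2 * ((L:ℝ)+1) / ((N:ℝ)*(2*(L:ℝ)+1) - (L:ℝ)*((L:ℝ)+1)))
    (k : ℕ) (hkN : k < N) :
    ∑ i ∈ Finset.Icc (k - L) (min (k+L) (N-1)), (((i:ℝ))^2 + b*i)
      ≤ ((min (k+L) (N-1) + 1 - (k - L) : ℕ) : ℝ) * (((k:ℕ):ℝ)^2 + b*(k:ℕ) + Bv) := by
  have hL1 : (1:ℝ) ≤ (L:ℝ) := by exact_mod_cast hL
  have hNLr : 2*(L:ℝ)+1 ≤ (N:ℝ) := by exact_mod_cast hNL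
  have hD0 : (0:ℝ) < (N:ℝ)*(2*(L:ℝ)+1) - (L:ℝ)*((L:ℝ)+1) := by nlinarith
  obtain ⟨D, hDdef, hD⟩ : ∃ D', D' = (N:ℝ)*(2*(L:ℝ)+1) - (L:ℝ)*((L:ℝ)+1) ∧ 0 < D' :=
    ⟨_, rfl, hD0⟩
  obtain ⟨Num, hNum⟩ : ∃ x, x = ((N:ℝ) - 1 + b) * (L:ℝ)^2 * ((L:ℝ)+1) := ⟨_, rfl⟩
  have hBv' : Bv = Num / D := by rw [hNum, hDdef, hBv]
  have hbb : (5 - 4*(L:ℝ))/3 ≤ b ∧ b ≤ 1/3 := by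
    rcases hcase with ⟨_, hb⟩ | ⟨_, hb⟩ <;> subst hb <;> constructor <;> nlinarith
  have hbulkNum : (L:ℝ)*((L:ℝ)+1)/3 * D ≤ Num := by
    rcases hcase with ⟨hN3L, hb⟩ | ⟨hN3L, hb⟩
    · subst hb
      have h3 : (3*(L:ℝ)) ≤ (N:ℝ) := by exact_mod_cast hN3L
      rw [hNum, hDdef]
      nlinarith [mul_nonneg (mul_nonneg (by linarith : (0:ℝ) ≤ (L:ℝ)) (by linarith : (0:ℝ) ≤ (L:ℝ)+1))
        (mul_nonneg (by linarith : (0:ℝ) ≤ (N:ℝ) - 3*(L:ℝ)) (by linarith : (0:ℝ) ≤ (L:ℝ)-1))]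
    · subst hb
      rw [hNum, hDdef]
      nlinarith [mul_nonneg (mul_nonneg (by linarith : (0:ℝ) ≤ (L:ℝ)) (by linarith : (0:ℝ) ≤ (L:ℝ)+1))
        (mul_nonneg (by linarith : (0:ℝ) ≤ (L:ℝ)-1) (by linarith : (0:ℝ) ≤ (N:ℝ)+(L:ℝ)))]
  -- reduce to D-multiplied form
  rw [hBv']
  have hC0 : (0:ℝ) ≤ ((min (k+L) (N-1) + 1 - (k - L) : ℕ) : ℝ) := Nat.cast_nonneg _
  suffices hmain : (∑ i ∈ Finset.Icc (k - L) (min (k+L) (N-1)), (((i:ℝ))^2 + b*i)) * D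
      ≤ ((min (k+L) (N-1) + 1 - (k - L) : ℕ) : ℝ) * (((k:ℕ):ℝ)^2 + b*(k:ℕ)) * D
        + ((min (k+L) (N-1) + 1 - (k - L) : ℕ) : ℝ) * Num by
    have h1 : (∑ i ∈ Finset.Icc (k - L) (min (k+L) (N-1)), (((i:ℝ))^2 + b*i))
        - ((min (k+L) (N-1) + 1 - (k - L) : ℕ) : ℝ) * (((k:ℕ):ℝ)^2 + b*(k:ℕ))
        ≤ ((min (k+L) (N-1) + 1 - (k - L) : ℕ) : ℝ) * Num / D := by
      rw [le_div_iff₀ hD]; nlinarith [hmain]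
    have h2 : ((min (k+L) (N-1) + 1 - (k - L) : ℕ) : ℝ) * (((k:ℕ):ℝ)^2 + b*(k:ℕ) + Num / D)
        = ((min (k+L) (N-1) + 1 - (k - L) : ℕ) : ℝ) * (((k:ℕ):ℝ)^2 + b*(k:ℕ))
          + ((min (k+L) (N-1) + 1 - (k - L) : ℕ) : ℝ) * Num / D := by ring
    rw [h2]
    linarith
  by_cases h1 : k < L
  · -- left-truncated window
    have hlo : k - L = 0 := by omega
    have hhi : min (k+L) (N-1) = k + L := by omega
    have hcard : (k + L + 1 - 0 : ℕ) = k + L + 1 := by omega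
    rw [hlo, hhi, hcard, sum_Icc_quad b 0 (k+L) (Nat.zero_le _)]
    have hk1L : (k:ℝ) ≤ (L:ℝ) - 1 := by
      have : (k:ℝ) + 1 ≤ (L:ℝ) := by exact_mod_cast h1
      linarith
    have hk0 : (0:ℝ) ≤ (k:ℝ) := Nat.cast_nonneg k
    rcases hcase with ⟨hN3L, hb⟩ | ⟨hN3L, hb⟩
    · subst hb
      have hId' : 3*( ((k:ℝ)+(L:ℝ)+1) * ((k:ℝ)^2 + ((5 - 4*(L:ℝ))/3)*(k:ℝ)) * D
            + ((k:ℝ)+(L:ℝ)+1) * ((L:ℝ)*((L:ℝ)+1)/3) * D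
            - ((((k:ℝ)+(L:ℝ))+1) * ((k:ℝ)+(L:ℝ)) * (2*((k:ℝ)+(L:ℝ))+1) / 6
              + ((5 - 4*(L:ℝ))/3) * (((k:ℝ)+(L:ℝ))+1) * ((k:ℝ)+(L:ℝ)) / 2
              - ((0:ℝ) * ((0:ℝ)-1) * (2*(0:ℝ)-1) / 6 + ((5 - 4*(L:ℝ))/3) * 0 * ((0:ℝ)-1) / 2)) * D )
          = 2*(((k:ℝ)+(L:ℝ)+1)*(((L:ℝ)-(k:ℝ))*(((L:ℝ)-(k:ℝ)-1)*D))) := by rw [hDdef]; ring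
      have hp1 : (0:ℝ) ≤ ((k:ℝ)+(L:ℝ)+1)*(((L:ℝ)-(k:ℝ))*(((L:ℝ)-(k:ℝ)-1)*D)) :=
        mul_nonneg (by linarith) (mul_nonneg (by linarith)
          (mul_nonneg (by linarith) hD.le))
      have hp2 : (0:ℝ) ≤ ((k:ℝ)+(L:ℝ)+1) * (Num - (L:ℝ)*((L:ℝ)+1)/3 * D) :=
        mul_nonneg (by linarith) (by linarith)
      push_cast
      linarith [hId', hp1, hp2]
    · subst hb
      have hL2 : (2:ℝ) ≤ (L:ℝ) := by
        have : 2 ≤ L := by omega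
        exact_mod_cast this
      have hN3L' : (N:ℝ) + 1 ≤ 3*(L:ℝ) := by exact_mod_cast hN3L
      have hId : 6*( ((k:ℝ)+(L:ℝ)+1) * ((k:ℝ)^2 + (1/3)*(k:ℝ)) * D + ((k:ℝ)+(L:ℝ)+1) * Num
            - ((((k:ℝ)+(L:ℝ))+1) * ((k:ℝ)+(L:ℝ)) * (2*((k:ℝ)+(L:ℝ))+1) / 6
              + (1/3) * (((k:ℝ)+(L:ℝ))+1) * ((k:ℝ)+(L:ℝ)) / 2
              - ((0:ℝ) * ((0:ℝ)-1) * (2*(0:ℝ)-1) / 6 + (1/3) * 0 * ((0:ℝ)-1) / 2)) * D )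
          = ((k:ℝ)+(L:ℝ)+1) * ( ((L:ℝ)-2*(k:ℝ))^2 * D )
            + ((k:ℝ)+(L:ℝ)+1) * (((3*(L:ℝ)-1-(N:ℝ))*((L:ℝ)+2) + ((L:ℝ)-2)*(3*(L:ℝ)^2+4*(L:ℝ)+1) + 4) * (L:ℝ)) := by
        rw [hNum, hDdef]; ring
      have hp1 : (0:ℝ) ≤ ((k:ℝ)+(L:ℝ)+1) * ( ((L:ℝ)-2*(k:ℝ))^2 * D ) :=
        mul_nonneg (by linarith) (mul_nonneg (sq_nonneg _) hD.le)
      have hp2 : (0:ℝ) ≤ ((k:ℝ)+(L:ℝ)+1) * (((3*(L:ℝ)-1-(N:ℝ))*((L:ℝ)+2) + ((L:ℝ)-2)*(3*(L:ℝ)^2+4*(L:ℝ)+1) + 4) * (L:ℝ)) := by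
        refine mul_nonneg (by linarith) (mul_nonneg ?_ (by linarith))
        nlinarith
      push_cast
      linarith [hId, hp1, hp2]
  · by_cases h2 : k + L ≤ N - 1
    · -- bulk window
      have hlo : min (k+L) (N-1) = k + L := by omega
      have hcard : (k + L + 1 - (k - L) : ℕ) = 2*L+1 := by omega
      rw [hlo, hcard, sum_Icc_quad b (k-L) (k+L) (by omega)]
      have hcast : ((k - L : ℕ) : ℝ) = (k:ℝ) - (L:ℝ) := by
        rw [Nat.cast_sub (by omega)]
      rw [hcast]
      have hId : ((((k:ℝ)+(L:ℝ))+1) * ((k:ℝ)+(L:ℝ)) * (2*((k:ℝ)+(L:ℝ))+1) / 6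
            + b * (((k:ℝ)+(L:ℝ))+1) * ((k:ℝ)+(L:ℝ)) / 2
            - (((k:ℝ)-(L:ℝ)) * (((k:ℝ)-(L:ℝ))-1) * (2*((k:ℝ)-(L:ℝ))-1) / 6
              + b * ((k:ℝ)-(L:ℝ)) * (((k:ℝ)-(L:ℝ))-1) / 2)) * D
          = (2*(L:ℝ)+1) * ((k:ℝ)^2 + b*(k:ℝ)) * D + (2*(L:ℝ)+1) * ((L:ℝ)*((L:ℝ)+1)/3) * D := by ring
      have hp2 : (0:ℝ) ≤ (2*(L:ℝ)+1) * (Num - (L:ℝ)*((L:ℝ)+1)/3 * D) :=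
        mul_nonneg (by linarith) (by linarith)
      push_cast
      linarith [hId, hp2]
    · -- right-truncated window
      have hhi : min (k+L) (N-1) = N - 1 := by omega
      have hcard : (N - 1 + 1 - (k - L) : ℕ) = N - k + L := by omega
      rw [hhi, hcard, sum_Icc_quad b (k-L) (N-1) (by omega)]
      have hcast : ((k - L : ℕ) : ℝ) = (k:ℝ) - (L:ℝ) := by rw [Nat.cast_sub (by omega)]
      have hcast2 : ((N - 1 : ℕ) : ℝ) = (N:ℝ) - 1 := by
        rw [Nat.cast_sub (by omega)]; norm_num
      have hcast3 : ((N - k + L : ℕ) : ℝ) = (N:ℝ) - (k:ℝ) + (L:ℝ) := by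
        rw [Nat.cast_add, Nat.cast_sub (by omega)]
      rw [hcast, hcast2, hcast3]
      have hc1 : (k:ℝ) ≤ (N:ℝ) - 1 := by
        have : (k:ℝ) + 1 ≤ (N:ℝ) := by exact_mod_cast hkN
        linarith
      have hc2 : (N:ℝ) ≤ (k:ℝ) + (L:ℝ) := by
        have h' : N ≤ k + L := by omega
        exact_mod_cast h'
      have hkL1 : (L:ℝ) + 1 ≤ (k:ℝ) := by
        have : L + 1 ≤ k := by omega
        exact_mod_cast this
      have h2kb : (0:ℝ) ≤ 2*(k:ℝ) + b := by
        rcases hbb with ⟨hb1, _⟩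
        nlinarith
      have hId : 6*( ((N:ℝ)-(k:ℝ)+(L:ℝ)) * ((k:ℝ)^2 + b*(k:ℝ)) * D
            + ((N:ℝ)-(k:ℝ)+(L:ℝ)) * ((L:ℝ)*((L:ℝ)+1)/3) * D
            - ((((N:ℝ)-1)+1) * ((N:ℝ)-1) * (2*((N:ℝ)-1)+1) / 6
              + b * (((N:ℝ)-1)+1) * ((N:ℝ)-1) / 2
              - (((k:ℝ)-(L:ℝ)) * (((k:ℝ)-(L:ℝ))-1) * (2*((k:ℝ)-(L:ℝ))-1) / 6
                + b * ((k:ℝ)-(L:ℝ)) * (((k:ℝ)-(L:ℝ))-1) / 2)) * D )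
          = ((2*((N:ℝ)-1-(k:ℝ))+1) * (((L:ℝ)-((N:ℝ)-1-(k:ℝ))) * (((L:ℝ)+((N:ℝ)-1-(k:ℝ))+1) * D)))
            + 3*((2*(k:ℝ)+b) * (((L:ℝ)-((N:ℝ)-1-(k:ℝ))) * (((L:ℝ)+((N:ℝ)-1-(k:ℝ))+1) * D))) := by ring
      have hp1 : (0:ℝ) ≤ (2*((N:ℝ)-1-(k:ℝ))+1) * (((L:ℝ)-((N:ℝ)-1-(k:ℝ))) * (((L:ℝ)+((N:ℝ)-1-(k:ℝ))+1) * D)) :=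
        mul_nonneg (by linarith) (mul_nonneg (by linarith) (mul_nonneg (by linarith) hD.le))
      have hp2 : (0:ℝ) ≤ (2*(k:ℝ)+b) * (((L:ℝ)-((N:ℝ)-1-(k:ℝ))) * (((L:ℝ)+((N:ℝ)-1-(k:ℝ))+1) * D)) :=
        mul_nonneg h2kb (mul_nonneg (by linarith) (mul_nonneg (by linarith) hD.le))
      have hp3 : (0:ℝ) ≤ ((N:ℝ)-(k:ℝ)+(L:ℝ)) * (Num - (L:ℝ)*((L:ℝ)+1)/3 * D) :=
        mul_nonneg (by linarith) (by linarith)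
      push_cast
      linarith [hId, hp1, hp2, hp3]

lemma hitTime_ge (P : Matrix V V ℝ) (v : V)
    (hP0 : ∀ a b, 0 ≤ P a b) (hP1 : ∀ a, ∑ b, P a b = 1)
    (ε₀ : ℝ) (hε0 : 0 < ε₀) (hε1 : ε₀ ≤ 1)
    (d : V → ℕ) (c : ℕ) (hc : 1 ≤ c) (hdb : ∀ u, d u < c)
    (hstep : ∀ u, u ≠ v → ∃ u', ε₀ ≤ P u u' ∧ d u' < d u)
    (φ : V → ℝ) (hφv : φ v = 0)
    (hφ : ∀ u, φ u ≤ 1 + ∑ b, killAt P v u b * φ b)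
    (u : V) (huv : u ≠ v) : φ u ≤ hitTime P u v := by
  classical
  set M : Matrix V V ℝ := killAt P v with hM
  have hM0 : ∀ a b, 0 ≤ M a b := by
    intro a b
    simp only [hM, killAt, Matrix.of_apply]
    split <;> [exact le_refl 0; exact hP0 a b]
  have hMP : ∀ a b, M a b ≤ P a b := by
    intro a b
    simp only [hM, killAt, Matrix.of_apply]
    split <;> [exact hP0 a b; exact le_rfl]
  have hMv : ∀ a, M a v = 0 := by intro a; simp [hM, killAt]
  have hMrow : ∀ a, ∑ b, M a b = 1 - P a v := by
    intro a
    have : ∀ b, M a b = P a b - (if b = v then P a b else 0) := by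
      intro b; simp only [hM, killAt, Matrix.of_apply]; split <;> simp
    rw [Finset.sum_congr rfl (fun b _ => this b), Finset.sum_sub_distrib,
      Finset.sum_ite_eq' univ v (fun b => P a b), if_pos (mem_univ v), hP1 a]
  have hMrow1 : ∀ a, ∑ b, M a b ≤ 1 := by
    intro a; rw [hMrow]; linarith [hP0 a v]
  have hMp0 : ∀ t a b, 0 ≤ (M ^ t) a b := by
    intro t
    induction t with
    | zero => intro a b; rw [pow_zero]; rw [Matrix.one_apply]; split <;> norm_num
    | succ s ih =>
      intro a b
      rw [pow_succ, Matrix.mul_apply]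
      exact Finset.sum_nonneg fun j _ => mul_nonneg (ih a j) (hM0 j b)
  have hMcol : ∀ t, 1 ≤ t → ∀ a, (M ^ t) a v = 0 := by
    intro t ht a
    obtain ⟨s, rfl⟩ := Nat.exists_eq_add_of_le ht
    rw [add_comm, pow_succ, Matrix.mul_apply]
    refine Finset.sum_eq_zero fun j _ => ?_
    rw [hMv j, mul_zero]
  set r : ℕ → V → ℝ := fun t => (M ^ t) *ᵥ (fun _ => (1 : ℝ)) with hrdef
  have hrv : ∀ t u, r t u = ∑ b, (M ^ t) u b := by
    intro t u; simp [hrdef, Matrix.mulVec, dotProduct]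
  have r0 : ∀ u, r 0 u = 1 := by
    intro u; rw [hrv, pow_zero]
    simp [Matrix.one_apply]
  have radd : ∀ s t u, r (s + t) u = ∑ b, (M ^ s) u b * r t b := by
    intro s t u
    rw [hrv, pow_add]
    simp only [Matrix.mul_apply]
    rw [Finset.sum_comm]
    refine Finset.sum_congr rfl fun b _ => ?_
    rw [hrv, Finset.mul_sum]
  have rsucc : ∀ t u, r (t + 1) u = ∑ b, M u b * r t b := by
    intro t u
    have := radd 1 t u
    simpa [pow_one, Nat.add_comm] using this
  have rnn : ∀ t u, 0 ≤ r t u := by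
    intro t u; rw [hrv]
    exact Finset.sum_nonneg fun b _ => hMp0 t u b
  have rle1 : ∀ t u, r t u ≤ 1 := by
    intro t
    induction t with
    | zero => intro u; rw [r0]
    | succ s ih =>
      intro u
      rw [rsucc]
      calc ∑ b, M u b * r s b ≤ ∑ b, M u b * 1 :=
            Finset.sum_le_sum fun b _ => mul_le_mul_of_nonneg_left (ih b) (hM0 u b)
        _ ≤ 1 := by simpa using hMrow1 u
  have rmono1 : ∀ t u, r (t + 1) u ≤ r t u := by
    intro t
    induction t with
    | zero =>
      intro u
      rw [rsucc]
      calc ∑ b, M u b * r 0 b = ∑ b, M u b := by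
            refine Finset.sum_congr rfl fun b _ => by rw [r0 b, mul_one]
        _ ≤ 1 := hMrow1 u
        _ = r 0 u := (r0 u).symm
    | succ s ih =>
      intro u
      rw [rsucc, rsucc]
      exact Finset.sum_le_sum fun b _ => mul_le_mul_of_nonneg_left (ih b) (hM0 u b)
  have rmono : ∀ s t, s ≤ t → ∀ u, r t u ≤ r s u := by
    intro s t hst
    induction t, hst using Nat.le_induction with
    | base => intro u; exact le_rfl
    | succ n hn ih => intro u; exact le_trans (rmono1 n u) (ih u)
  -- decay
  have decay1 : ∀ D u, u ≠ v → d u ≤ D → r D u ≤ 1 - ε₀ ^ D := by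
    intro D
    induction D with
    | zero =>
      intro u hu hd0
      obtain ⟨u', _, hlt⟩ := hstep u hu
      omega
    | succ D ih =>
      intro u hu hdu
      obtain ⟨u', hPu', hlt⟩ := hstep u hu
      have hεD : (0:ℝ) ≤ ε₀ ^ D := pow_nonneg hε0.le D
      by_cases hu'v : u' = v
      · -- P u v ≥ ε₀
        have h1 : r (D + 1) u ≤ 1 - ε₀ := by
          rw [rsucc]
          calc ∑ b, M u b * r D b ≤ ∑ b, M u b :=
              Finset.sum_le_sum fun b _ => by
                nlinarith [hM0 u b, rle1 D b, rnn D b]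
            _ = 1 - P u v := hMrow u
            _ ≤ 1 - ε₀ := by rw [hu'v] at hPu'; linarith
        have : ε₀ ^ (D + 1) ≤ ε₀ := by
          calc ε₀ ^ (D + 1) ≤ ε₀ ^ 1 := pow_le_pow_of_le_one hε0.le hε1 (by omega)
            _ = ε₀ := pow_one ε₀
        linarith
      · have hd' : d u' ≤ D := by omega
        have h1 : r D u' ≤ 1 - ε₀ ^ D := ih u' hu'v hd'
        have hMuu' : ε₀ ≤ M u u' := by
          simpa [hM, killAt, hu'v] using hPu'
        have hsplit : ∑ b, M u b * r D b = M u u' * r D u' + ∑ b ∈ univ.erase u', M u b * r D b := by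
          rw [← Finset.sum_erase_add univ _ (mem_univ u')]; ring
        have htail : ∑ b ∈ univ.erase u', M u b * r D b ≤ 1 - M u u' := by
          calc ∑ b ∈ univ.erase u', M u b * r D b ≤ ∑ b ∈ univ.erase u', M u b :=
              Finset.sum_le_sum fun b _ => by nlinarith [hM0 u b, rle1 D b, rnn D b]
            _ = (∑ b, M u b) - M u u' := by
              rw [← Finset.sum_erase_add univ _ (mem_univ u')]; ring
            _ ≤ 1 - M u u' := by linarith [hMrow1 u]
        have : r (D + 1) u ≤ 1 - M u u' * (1 - r D u') := by
          rw [rsucc, hsplit]; nlinarith [rnn D u']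
        have hfin : ε₀ * ε₀ ^ D ≤ M u u' * (1 - r D u') := by
          have h2 : ε₀ ^ D ≤ 1 - r D u' := by linarith
          exact mul_le_mul hMuu' h2 hεD (le_trans hε0.le hMuu')
        rw [pow_succ]
        nlinarith
  have decayc : ∀ u, u ≠ v → r c u ≤ 1 - ε₀ ^ c := by
    intro u hu
    calc r c u ≤ r (d u) u := rmono (d u) c (le_of_lt (hdb u)) u
      _ ≤ 1 - ε₀ ^ (d u) := decay1 (d u) u hu le_rfl
      _ ≤ 1 - ε₀ ^ c := by
        have := pow_le_pow_of_le_one hε0.le hε1 (le_of_lt (hdb u))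
        linarith
  set ε : ℝ := ε₀ ^ c with hε
  have hεpos : 0 < ε := pow_pos hε0 c
  have hεle : ε ≤ 1 := pow_le_one₀ hε0.le hε1
  have geo : ∀ K u, u ≠ v → r (c * K) u ≤ (1 - ε) ^ K := by
    intro K
    induction K with
    | zero => intro u _; simpa using rle1 0 u
    | succ K ih =>
      intro u hu
      have h1e : (0:ℝ) ≤ (1 - ε) ^ K := pow_nonneg (by linarith) K
      have : r (c * (K + 1)) u = ∑ b, (M ^ c) u b * r (c * K) b := by
        have : c * (K + 1) = c + c * K := by ring
        rw [this, radd]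
      rw [this]
      have hterm : ∀ b, (M ^ c) u b * r (c * K) b ≤ (M ^ c) u b * (1 - ε) ^ K := by
        intro b
        by_cases hbv : b = v
        · rw [hbv, hMcol c hc u]; simp [h1e]
        · exact mul_le_mul_of_nonneg_left (ih b hbv) (hMp0 c u b)
      calc ∑ b, (M ^ c) u b * r (c * K) b ≤ ∑ b, (M ^ c) u b * (1 - ε) ^ K :=
            Finset.sum_le_sum fun b _ => hterm b
        _ = r c u * (1 - ε) ^ K := by rw [← Finset.sum_mul, ← hrv]
        _ ≤ (1 - ε) * (1 - ε) ^ K := mul_le_mul_of_nonneg_right (by simpa [hε] using decayc u hu) h1e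
        _ = (1 - ε) ^ (K + 1) := by rw [pow_succ]; ring
  have psum : ∀ K u, u ≠ v → ∑ t ∈ range (c * K), r t u ≤ (c : ℝ) * ∑ k ∈ range K, (1 - ε) ^ k := by
    intro K
    induction K with
    | zero => intro u _; simp
    | succ K ih =>
      intro u hu
      have hsplit : ∑ t ∈ range (c * (K + 1)), r t u
          = ∑ t ∈ range (c * K), r t u + ∑ t ∈ Ico (c * K) (c * K + c), r t u := by
        have hm : c * (K + 1) = c * K + c := by ring
        rw [hm, Finset.range_eq_Ico,
          ← Finset.sum_Ico_consecutive (fun t => r t u) (Nat.zero_le (c * K)) (Nat.le_add_right (c * K) c),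
          ← Finset.range_eq_Ico]
      have hblock : ∑ t ∈ Ico (c * K) (c * K + c), r t u ≤ (c : ℝ) * (1 - ε) ^ K := by
        calc ∑ t ∈ Ico (c * K) (c * K + c), r t u ≤ ∑ _t ∈ Ico (c * K) (c * K + c), (1 - ε) ^ K := by
              refine Finset.sum_le_sum fun t ht => ?_
              have h1 : c * K ≤ t := (Finset.mem_Ico.mp ht).1
              exact le_trans (rmono (c * K) t h1 u) (geo K u hu)
          _ = (c : ℝ) * (1 - ε) ^ K := by
              rw [Finset.sum_const, Nat.card_Ico]
              simp [Nat.add_sub_cancel_left]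
      rw [hsplit, Finset.sum_range_succ]
      have := ih u hu
      rw [mul_add]
      linarith
  have h1e0 : (0:ℝ) ≤ 1 - ε := by linarith
  have bound : ∀ T, ∑ t ∈ range T, r t u ≤ (c : ℝ) / ε := by
    intro T
    have h1 : ∑ t ∈ range T, r t u ≤ ∑ t ∈ range (c * T), r t u := by
      refine Finset.sum_le_sum_of_subset_of_nonneg ?_ fun t _ _ => rnn t u
      exact Finset.range_subset_range.mpr (Nat.le_mul_of_pos_left T (by omega))
    have h2 : ∑ t ∈ range (c * T), r t u ≤ (c : ℝ) * ∑ k ∈ range T, (1 - ε) ^ k := psum T u huv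
    have h3 : ∑ k ∈ range T, (1 - ε) ^ k ≤ 1 / ε := by
      have hg := geom_sum_mul_of_le_one (by linarith : (1 - ε : ℝ) ≤ 1) T
      have hx : (1 : ℝ) - (1 - ε) = ε := by ring
      rw [hx] at hg
      have hpn : (0:ℝ) ≤ (1 - ε) ^ T := pow_nonneg h1e0 T
      rw [le_div_iff₀ hεpos]
      nlinarith
    have hc0 : (0:ℝ) ≤ (c : ℝ) := Nat.cast_nonneg c
    calc ∑ t ∈ range T, r t u ≤ (c : ℝ) * ∑ k ∈ range T, (1 - ε) ^ k := le_trans h1 h2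
      _ ≤ (c : ℝ) * (1 / ε) := mul_le_mul_of_nonneg_left h3 hc0
      _ = (c : ℝ) / ε := by ring
  have hsumm : Summable (fun t => r t u) :=
    summable_of_sum_range_le (fun t => rnn t u) bound
  -- comparison induction
  set C : ℝ := ∑ b, |φ b| with hC
  have hC0 : 0 ≤ C := Finset.sum_nonneg fun b _ => abs_nonneg _
  have hCb : ∀ b, φ b ≤ C := by
    intro b
    calc φ b ≤ |φ b| := le_abs_self _
      _ ≤ C := Finset.single_le_sum (fun i _ => abs_nonneg (φ i)) (mem_univ b)
  have claim : ∀ T w, φ w ≤ ∑ t ∈ range T, r t w + ∑ b, (M ^ T) w b * φ b := by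
    intro T
    induction T with
    | zero =>
      intro w
      simp only [range_zero, Finset.sum_empty, pow_zero, zero_add]
      rw [show ∑ b, (1 : Matrix V V ℝ) w b * φ b = φ w by
        simp [Matrix.one_apply]]
    | succ T ih =>
      intro w
      have step1 : φ w ≤ 1 + ∑ b, M w b * φ b := hφ w
      have step2 : ∑ b, M w b * φ b ≤
          ∑ b, M w b * (∑ t ∈ range T, r t b + ∑ c', (M ^ T) b c' * φ c') :=
        Finset.sum_le_sum fun b _ => mul_le_mul_of_nonneg_left (ih b) (hM0 w b)
      have step3 : ∑ b, M w b * (∑ t ∈ range T, r t b + ∑ c', (M ^ T) b c' * φ c')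
          = (∑ t ∈ range T, r (t + 1) w) + ∑ c', (M ^ (T + 1)) w c' * φ c' := by
        have e1 : ∀ b, M w b * (∑ t ∈ range T, r t b + ∑ c', (M ^ T) b c' * φ c')
            = (∑ t ∈ range T, M w b * r t b) + ∑ c', M w b * ((M ^ T) b c' * φ c') := by
          intro b
          rw [mul_add, Finset.mul_sum, Finset.mul_sum]
        rw [Finset.sum_congr rfl fun b _ => e1 b, Finset.sum_add_distrib]
        congr 1
        · rw [Finset.sum_comm]
          exact Finset.sum_congr rfl fun t _ => (rsucc t w).symm
        · rw [Finset.sum_comm]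
          refine Finset.sum_congr rfl fun c' _ => ?_
          rw [pow_succ', Matrix.mul_apply, Finset.sum_mul]
          exact Finset.sum_congr rfl fun b _ => by ring
      have step4 : (1:ℝ) + ((∑ t ∈ range T, r (t + 1) w) + ∑ c', (M ^ (T + 1)) w c' * φ c')
          = ∑ t ∈ range (T + 1), r t w + ∑ c', (M ^ (T + 1)) w c' * φ c' := by
        rw [Finset.sum_range_succ']
        rw [r0 w]
        ring
      calc φ w ≤ 1 + ∑ b, M w b * φ b := step1
        _ ≤ 1 + ∑ b, M w b * (∑ t ∈ range T, r t b + ∑ c', (M ^ T) b c' * φ c') := by linarith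
        _ = 1 + ((∑ t ∈ range T, r (t + 1) w) + ∑ c', (M ^ (T + 1)) w c' * φ c') := by rw [step3]
        _ = _ := step4
  have tailb : ∀ T, ∑ b, (M ^ T) u b * φ b ≤ C * r T u := by
    intro T
    calc ∑ b, (M ^ T) u b * φ b ≤ ∑ b, (M ^ T) u b * C :=
          Finset.sum_le_sum fun b _ => mul_le_mul_of_nonneg_left (hCb b) (hMp0 T u b)
      _ = C * r T u := by rw [← Finset.sum_mul, ← hrv]; ring
  have keyK : ∀ K, φ u ≤ (∑' t, r t u) + C * (1 - ε) ^ K := by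
    intro K
    have h1 := claim (c * K) u
    have h2 : ∑ t ∈ range (c * K), r t u ≤ ∑' t, r t u :=
      Summable.sum_le_tsum (range (c * K)) (fun t _ => rnn t u) hsumm
    have h3 : ∑ b, (M ^ (c * K)) u b * φ b ≤ C * r (c * K) u := tailb (c * K)
    have h4 : r (c * K) u ≤ (1 - ε) ^ K := geo K u huv
    nlinarith [rnn (c * K) u]
  have hlim : Filter.Tendsto (fun K : ℕ => (∑' t, r t u) + C * (1 - ε) ^ K)
      Filter.atTop (nhds ((∑' t, r t u) + C * 0)) := by
    refine Filter.Tendsto.add tendsto_const_nhds (Filter.Tendsto.const_mul C ?_)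
    exact tendsto_pow_atTop_nhds_zero_of_lt_one h1e0 (by linarith)
  have : φ u ≤ (∑' t, r t u) + C * 0 := ge_of_tendsto' hlim keyK
  rw [hitTime, if_neg huv]
  simpa [hrdef] using this

section Graph
variable (N L : ℕ)

def win (k : Fin N) : Finset (Fin N) :=
  univ.filter (fun j => (((k:ℕ):ℤ) - ((j:ℕ):ℤ)).natAbs ≤ L)

variable {N L}

lemma mem_win {k j : Fin N} : j ∈ win N L k ↔ (((k:ℕ):ℤ) - ((j:ℕ):ℤ)).natAbs ≤ L := by
  simp [win]

lemma win_sum (hNL : 2 * L + 1 ≤ N) (k : Fin N) (f : ℕ → ℝ) :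
    ∑ b ∈ win N L k, f (b:ℕ) = ∑ i ∈ Finset.Icc ((k:ℕ) - L) (min ((k:ℕ) + L) (N-1)), f i := by
  classical
  rw [win, Finset.sum_filter]
  rw [Fin.sum_univ_eq_sum_range
    (fun i => if (((k:ℕ):ℤ) - ((i:ℕ):ℤ)).natAbs ≤ L then f i else 0) N]
  rw [← Finset.sum_filter]
  congr 1
  ext i
  simp only [Finset.mem_filter, Finset.mem_range, Finset.mem_Icc]
  constructor
  · rintro ⟨h1, h2⟩; omega
  · intro h
    have hk := k.isLt
    constructor <;> omega

lemma win_card (hNL : 2 * L + 1 ≤ N) (k : Fin N) :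
    (win N L k).card = min ((k:ℕ) + L) (N-1) + 1 - ((k:ℕ) - L) := by
  have h := win_sum hNL k (fun _ => (1:ℝ))
  rw [Finset.sum_const, Finset.sum_const, Nat.card_Icc] at h
  simp only [nsmul_eq_mul, mul_one] at h
  exact_mod_cast h

lemma win_card_pos (hNL : 2 * L + 1 ≤ N) (k : Fin N) : 0 < (win N L k).card := by
  rw [win_card hNL]
  have := k.isLt
  omega

lemma win_card_le (hNL : 2 * L + 1 ≤ N) (k : Fin N) : (win N L k).card ≤ 2 * L + 1 := by
  rw [win_card hNL]
  omega

variable (wS : ℝ)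

lemma slow_rowsum (hw : 0 < wS) (k : Fin N) :
    ∑ b, slowWeight N L wS k b = wS * (win N L k).card := by
  have : ∀ b, slowWeight N L wS k b = if b ∈ win N L k then wS else 0 := by
    intro b
    simp [slowWeight, mem_win]
  rw [Finset.sum_congr rfl fun b _ => this b, Finset.sum_ite_mem, Finset.univ_inter,
    Finset.sum_const, nsmul_eq_mul, mul_comm]

lemma P_entry (hNL : 2 * L + 1 ≤ N) (hw : 0 < wS) (k b : Fin N) :
    transition (slowWeight N L wS) k b
      = if b ∈ win N L k then ((win N L k).card : ℝ)⁻¹ else 0 := by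
  have hc : ((win N L k).card : ℝ) ≠ 0 := by
    exact_mod_cast (win_card_pos hNL k).ne'
  simp only [transition, Matrix.of_apply, slow_rowsum wS hw k]
  by_cases hb : b ∈ win N L k
  · rw [if_pos hb]
    rw [show slowWeight N L wS k b = wS by simp [slowWeight, mem_win.mp hb]]
    field_simp
  · rw [if_neg hb]
    rw [show slowWeight N L wS k b = 0 by
      simp only [slowWeight, Matrix.of_apply]
      rw [if_neg (fun h => hb (mem_win.mpr h))], zero_div]

lemma P_nonneg (hNL : 2 * L + 1 ≤ N) (hw : 0 < wS) (k b : Fin N) :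
    0 ≤ transition (slowWeight N L wS) k b := by
  rw [P_entry wS hNL hw]
  split
  · positivity
  · exact le_rfl

lemma P_rowsum (hNL : 2 * L + 1 ≤ N) (hw : 0 < wS) (k : Fin N) :
    ∑ b, transition (slowWeight N L wS) k b = 1 := by
  have hc : ((win N L k).card : ℝ) ≠ 0 := by
    exact_mod_cast (win_card_pos hNL k).ne'
  rw [Finset.sum_congr rfl fun b _ => P_entry wS hNL hw k b, Finset.sum_ite_mem,
    Finset.univ_inter, Finset.sum_const, nsmul_eq_mul]
  field_simp

lemma P_step (hL : 1 ≤ L) (hNL : 2 * L + 1 ≤ N) (hw : 0 < wS) (v u : Fin N) (huv : u ≠ v) :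
    ∃ u' : Fin N, ((2 * (L:ℝ) + 1))⁻¹ ≤ transition (slowWeight N L wS) u u'
      ∧ (((u':ℕ):ℤ) - ((v:ℕ):ℤ)).natAbs < (((u:ℕ):ℤ) - ((v:ℕ):ℤ)).natAbs := by
  have hvne : (u:ℕ) ≠ (v:ℕ) := fun h => huv (Fin.val_injective h)
  have hNpos : 0 < N := by omega
  by_cases h : (u:ℕ) < (v:ℕ)
  · refine ⟨⟨(u:ℕ)+1, by omega⟩, ?_, by simp; omega⟩
    have hmem : (⟨(u:ℕ)+1, by omega⟩ : Fin N) ∈ win N L u := by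
      rw [mem_win]; simp; omega
    rw [P_entry wS hNL hw, if_pos hmem]
    have h1 : ((win N L u).card : ℝ) ≤ 2*L+1 := by exact_mod_cast win_card_le hNL u
    have h2 : (0:ℝ) < (win N L u).card := by exact_mod_cast win_card_pos hNL u
    exact inv_anti₀ h2 h1
  · refine ⟨⟨(u:ℕ)-1, by omega⟩, ?_, by simp; omega⟩
    have hmem : (⟨(u:ℕ)-1, by omega⟩ : Fin N) ∈ win N L u := by
      rw [mem_win]; simp; omega
    rw [P_entry wS hNL hw, if_pos hmem]
    have h1 : ((win N L u).card : ℝ) ≤ 2*L+1 := by exact_mod_cast win_card_le hNL u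
    have h2 : (0:ℝ) < (win N L u).card := by exact_mod_cast win_card_pos hNL u
    exact inv_anti₀ h2 h1

end Graph

section Assembly
open Finset

variable {N L : ℕ} {wS : ℝ}

lemma sum_win_q_le (hL : 1 ≤ L) (hNL : 2*L+1 ≤ N) (b Bv : ℝ)
    (hcase : (3*L ≤ N ∧ b = (5 - 4*(L:ℝ))/3) ∨ (N + 1 ≤ 3*L ∧ b = 1/3))
    (hBv : Bv = ((N:ℝ) - 1 + b) * (L:ℝ)^2 * ((L:ℝ)+1) / ((N:ℝ)*(2*(L:ℝ)+1) - (L:ℝ)*((L:ℝ)+1)))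
    (j : Fin N) :
    ∑ x ∈ win N L j, ((((x:ℕ)):ℝ)^2 + b*((x:ℕ):ℝ))
      ≤ ((win N L j).card : ℝ) * ((((j:ℕ):ℝ))^2 + b*((j:ℕ):ℝ) + Bv) := by
  rw [win_sum hNL j (fun i => ((i:ℝ))^2 + b*i), win_card hNL j]
  exact key_ineq N L hL hNL b Bv hcase hBv (j:ℕ) j.isLt

lemma win_rev (k : Fin N) : win N L k.rev = (win N L k).image Fin.rev := by
  ext j
  simp only [mem_win, Finset.mem_image]
  constructor
  · intro h
    refine ⟨j.rev, ?_, Fin.rev_rev j⟩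
    have h1 := k.isLt
    have h2 := j.isLt
    rw [Fin.val_rev] at h ⊢
    omega
  · rintro ⟨a, ha, rfl⟩
    have h1 := k.isLt
    have h2 := a.isLt
    rw [Fin.val_rev, Fin.val_rev]
    omega

lemma card_win_rev (k : Fin N) : (win N L k.rev).card = (win N L k).card := by
  rw [win_rev, Finset.card_image_of_injective _ Fin.rev_injective]

lemma sum_win_rev (k : Fin N) (f : Fin N → ℝ) :
    ∑ x ∈ win N L k.rev, f x = ∑ x ∈ win N L k, f x.rev := by
  rw [win_rev, Finset.sum_image (fun a _ a' _ h => Fin.rev_injective h)]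

lemma Pq_le (hL : 1 ≤ L) (hNL : 2*L+1 ≤ N) (hw : 0 < wS) (b Bv : ℝ)
    (hcase : (3*L ≤ N ∧ b = (5 - 4*(L:ℝ))/3) ∨ (N + 1 ≤ 3*L ∧ b = 1/3))
    (hBv : Bv = ((N:ℝ) - 1 + b) * (L:ℝ)^2 * ((L:ℝ)+1) / ((N:ℝ)*(2*(L:ℝ)+1) - (L:ℝ)*((L:ℝ)+1)))
    (j : Fin N) :
    ∑ x, transition (slowWeight N L wS) j x * ((((x:ℕ)):ℝ)^2 + b*((x:ℕ):ℝ))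
      ≤ ((((j:ℕ)):ℝ)^2 + b*((j:ℕ):ℝ)) + Bv := by
  have hcR : (0:ℝ) < ((win N L j).card : ℝ) := by exact_mod_cast win_card_pos hNL j
  have e1 : ∑ x, transition (slowWeight N L wS) j x * ((((x:ℕ)):ℝ)^2 + b*((x:ℕ):ℝ))
      = ∑ x ∈ win N L j, ((win N L j).card : ℝ)⁻¹ * ((((x:ℕ)):ℝ)^2 + b*((x:ℕ):ℝ)) := by
    have hterm : ∀ x : Fin N, transition (slowWeight N L wS) j x * ((((x:ℕ)):ℝ)^2 + b*((x:ℕ):ℝ))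
        = if x ∈ win N L j then ((win N L j).card : ℝ)⁻¹ * ((((x:ℕ)):ℝ)^2 + b*((x:ℕ):ℝ)) else 0 :=
      fun x => by rw [P_entry wS hNL hw, ite_mul, zero_mul]
    rw [Finset.sum_congr rfl fun x _ => hterm x, Finset.sum_ite_mem, Finset.univ_inter]
  rw [e1, ← Finset.mul_sum]
  calc ((win N L j).card : ℝ)⁻¹ * ∑ x ∈ win N L j, ((((x:ℕ)):ℝ)^2 + b*((x:ℕ):ℝ))
      ≤ ((win N L j).card : ℝ)⁻¹ * (((win N L j).card : ℝ) * ((((j:ℕ):ℝ))^2 + b*((j:ℕ):ℝ) + Bv)) :=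
        mul_le_mul_of_nonneg_left (sum_win_q_le hL hNL b Bv hcase hBv j) (by positivity)
    _ = ((((j:ℕ)):ℝ)^2 + b*((j:ℕ):ℝ)) + Bv := by field_simp

lemma PqRev_le (hL : 1 ≤ L) (hNL : 2*L+1 ≤ N) (hw : 0 < wS) (b Bv : ℝ)
    (hcase : (3*L ≤ N ∧ b = (5 - 4*(L:ℝ))/3) ∨ (N + 1 ≤ 3*L ∧ b = 1/3))
    (hBv : Bv = ((N:ℝ) - 1 + b) * (L:ℝ)^2 * ((L:ℝ)+1) / ((N:ℝ)*(2*(L:ℝ)+1) - (L:ℝ)*((L:ℝ)+1)))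
    (j : Fin N) :
    ∑ x, transition (slowWeight N L wS) j x * ((((x.rev:ℕ)):ℝ)^2 + b*((x.rev:ℕ):ℝ))
      ≤ ((((j.rev:ℕ)):ℝ)^2 + b*((j.rev:ℕ):ℝ)) + Bv := by
  have hcR : (0:ℝ) < ((win N L j).card : ℝ) := by exact_mod_cast win_card_pos hNL j
  have e1 : ∑ x, transition (slowWeight N L wS) j x * ((((x.rev:ℕ)):ℝ)^2 + b*((x.rev:ℕ):ℝ))
      = ∑ x ∈ win N L j, ((win N L j).card : ℝ)⁻¹ * ((((x.rev:ℕ)):ℝ)^2 + b*((x.rev:ℕ):ℝ)) := by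
    have hterm : ∀ x : Fin N, transition (slowWeight N L wS) j x * ((((x.rev:ℕ)):ℝ)^2 + b*((x.rev:ℕ):ℝ))
        = if x ∈ win N L j then ((win N L j).card : ℝ)⁻¹ * ((((x.rev:ℕ)):ℝ)^2 + b*((x.rev:ℕ):ℝ)) else 0 :=
      fun x => by rw [P_entry wS hNL hw, ite_mul, zero_mul]
    rw [Finset.sum_congr rfl fun x _ => hterm x, Finset.sum_ite_mem, Finset.univ_inter]
  have e2 : ∑ x ∈ win N L j.rev, ((((x:ℕ)):ℝ)^2 + b*((x:ℕ):ℝ))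
      = ∑ x ∈ win N L j, ((((x.rev:ℕ)):ℝ)^2 + b*((x.rev:ℕ):ℝ)) :=
    sum_win_rev j (fun x => (((x:ℕ)):ℝ)^2 + b*((x:ℕ):ℝ))
  rw [e1, ← Finset.mul_sum, ← e2]
  calc ((win N L j).card : ℝ)⁻¹ * ∑ x ∈ win N L j.rev, ((((x:ℕ)):ℝ)^2 + b*((x:ℕ):ℝ))
      ≤ ((win N L j).card : ℝ)⁻¹ * (((win N L j.rev).card : ℝ) * ((((j.rev:ℕ):ℝ))^2 + b*((j.rev:ℕ):ℝ) + Bv)) :=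
        mul_le_mul_of_nonneg_left (sum_win_q_le hL hNL b Bv hcase hBv j.rev) (by positivity)
    _ = ((((j.rev:ℕ)):ℝ)^2 + b*((j.rev:ℕ):ℝ)) + Bv := by
        rw [card_win_rev]
        field_simp

lemma hit_lb (hL : 1 ≤ L) (hNL : 2*L+1 ≤ N) (hw : 0 < wS)
    (v : Fin N) (Q : Fin N → ℝ) (Bv : ℝ) (hBv0 : 0 < Bv)
    (hQ : ∀ k : Fin N, ∑ x, transition (slowWeight N L wS) k x * Q x ≤ Q k + Bv)
    (u : Fin N) (huv : u ≠ v) :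
    (Q v - Q u) / Bv ≤ hitTime (transition (slowWeight N L wS)) u v := by
  have h2L1 : (0:ℝ) < 2*(L:ℝ)+1 := by positivity
  refine hitTime_ge (transition (slowWeight N L wS)) v
    (fun a c => P_nonneg wS hNL hw a c) (fun a => P_rowsum wS hNL hw a)
    ((2*(L:ℝ)+1))⁻¹ (by positivity) ?_ (fun x => (((x:ℕ):ℤ) - ((v:ℕ):ℤ)).natAbs) N (by omega)
    ?_ ?_ (fun x => (Q v - Q x) / Bv) (by simp) ?_ u huv
  · rw [inv_le_one_iff₀]
    right
    have : (1:ℝ) ≤ (L:ℝ) := by exact_mod_cast hL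
    linarith
  · intro x
    show (((x:ℕ):ℤ) - ((v:ℕ):ℤ)).natAbs < N
    have := x.isLt
    have := v.isLt
    omega
  · intro x hx
    exact P_step wS hL hNL hw v x hx
  · intro x
    have hkill : ∑ c, killAt (transition (slowWeight N L wS)) v x c * ((Q v - Q c) / Bv)
        = ∑ c, transition (slowWeight N L wS) x c * ((Q v - Q c) / Bv) := by
      refine Finset.sum_congr rfl fun c _ => ?_
      by_cases hcv : c = v
      · subst hcv; simp [killAt]
      · simp [killAt, hcv]
    rw [hkill]
    have hexp : ∑ c, transition (slowWeight N L wS) x c * ((Q v - Q c) / Bv)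
        = (Q v * (∑ c, transition (slowWeight N L wS) x c)
            - ∑ c, transition (slowWeight N L wS) x c * Q c) / Bv := by
      rw [Finset.mul_sum, ← Finset.sum_sub_distrib, Finset.sum_div]
      refine Finset.sum_congr rfl fun c _ => ?_
      ring
    rw [hexp, P_rowsum wS hNL hw x, mul_one]
    have hQx := hQ x
    have h3 : (Q v - Q x) / Bv - (Q v - ∑ c, transition (slowWeight N L wS) x c * Q c) / Bv
        = ((∑ c, transition (slowWeight N L wS) x c * Q c) - Q x) / Bv := by ring
    have h4 : ((∑ c, transition (slowWeight N L wS) x c * Q c) - Q x) / Bv ≤ 1 := by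
      rw [div_le_one hBv0]; linarith
    linarith

lemma pair_sum (N : ℕ) :
    ∑ p ∈ Finset.univ.filter (fun p : Fin N × Fin N => p.1 < p.2), (((p.2:ℕ):ℝ) - ((p.1:ℕ):ℝ))
      = (N:ℝ)*((N:ℝ)-1)*((N:ℝ)+1)/6 := by
  classical
  rw [Finset.sum_filter]
  rw [Fintype.sum_prod_type]
  have hinner : ∀ x : Fin N, ∑ y : Fin N, (if x < y then (((y:ℕ):ℝ) - ((x:ℕ):ℝ)) else 0)
      = ((N:ℝ) - 1 - ((x:ℕ):ℝ)) * ((N:ℝ) - ((x:ℕ):ℝ)) / 2 := by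
    intro x
    simp only [Fin.lt_def]
    rw [Fin.sum_univ_eq_sum_range (fun j => if (x:ℕ) < j then ((j:ℝ) - ((x:ℕ):ℝ)) else 0) N]
    rw [Finset.sum_ite, Finset.sum_const_zero, add_zero]
    have hf : (Finset.range N).filter (fun j => (x:ℕ) < j) = Finset.Ico ((x:ℕ)+1) N := by
      ext i; simp only [Finset.mem_filter, Finset.mem_range, Finset.mem_Ico]; omega
    rw [hf]
    have hx := x.isLt
    rw [Finset.sum_Ico_eq_sub _ (by omega : (x:ℕ)+1 ≤ N)]
    rw [Finset.sum_sub_distrib, Finset.sum_sub_distrib, Finset.sum_const, Finset.sum_const,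
      sum_range_cast, sum_range_cast, Finset.card_range, Finset.card_range]
    push_cast
    ring
  rw [Finset.sum_congr rfl fun x _ => hinner x]
  rw [Fin.sum_univ_eq_sum_range (fun i => ((N:ℝ) - 1 - (i:ℝ)) * ((N:ℝ) - (i:ℝ)) / 2) N]
  have hsplit : ∀ i : ℕ, ((N:ℝ) - 1 - (i:ℝ)) * ((N:ℝ) - (i:ℝ)) / 2
      = ((N:ℝ)-1)*(N:ℝ)/2 - ((2*(N:ℝ)-1)/2)*(i:ℝ) + (1/2)*((i:ℝ))^2 := fun i => by ring
  rw [Finset.sum_congr rfl fun i _ => hsplit i]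
  simp only [Finset.sum_add_distrib, Finset.sum_sub_distrib, ← Finset.mul_sum, Finset.sum_const,
    sum_range_cast, sum_range_sq_cast, Finset.card_range]
  push_cast
  ring

end Assembly
set_option maxHeartbeats 2000000 in
/-- The average commute time `κ_S = (2/(N(N−1))) ∑_{m<n} κ(x_m,x_n)` over the slow
graph `S(N,L)` satisfies `κ_S ≥ [N(2L+1) − L(L+1)] · 2(N+1)/(3L²(L+1))`. -/
theorem slow_graph_average_commute_time_lower_bound (N L : ℕ) (hL : 1 ≤ L)
    (hNL : 2 * L + 1 ≤ N) (wS : ℝ) (hw : 0 < wS) :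
    ((N : ℝ) * (2 * (L : ℝ) + 1) - (L : ℝ) * ((L : ℝ) + 1))
        * (2 * ((N : ℝ) + 1) / (3 * (L : ℝ) ^ 2 * ((L : ℝ) + 1)))
      ≤ (2 / ((N : ℝ) * ((N : ℝ) - 1))) *
          ∑ p ∈ Finset.univ.filter (fun p : Fin N × Fin N => p.1 < p.2),
            commuteTime (slowWeight N L wS) p.1 p.2 := by
  classical
  have hL1 : (1:ℝ) ≤ (L:ℝ) := by exact_mod_cast hL
  have hNr : 2*(L:ℝ)+1 ≤ (N:ℝ) := by exact_mod_cast hNL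
  have hN3 : (3:ℝ) ≤ (N:ℝ) := by linarith
  have hD : (0:ℝ) < (N:ℝ)*(2*(L:ℝ)+1) - (L:ℝ)*((L:ℝ)+1) := by nlinarith
  obtain ⟨b, hcase⟩ : ∃ b : ℝ, (3*L ≤ N ∧ b = (5 - 4*(L:ℝ))/3) ∨ (N + 1 ≤ 3*L ∧ b = 1/3) := by
    by_cases h : 3*L ≤ N
    · exact ⟨(5 - 4*(L:ℝ))/3, Or.inl ⟨h, rfl⟩⟩
    · exact ⟨1/3, Or.inr ⟨by omega, rfl⟩⟩
  have hbpos : (0:ℝ) < (N:ℝ) - 1 + b := by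
    rcases hcase with ⟨_, hb⟩ | ⟨_, hb⟩ <;> subst hb <;> nlinarith
  obtain ⟨Bv, hBv⟩ : ∃ x : ℝ,
      x = ((N:ℝ) - 1 + b) * (L:ℝ)^2 * ((L:ℝ)+1) / ((N:ℝ)*(2*(L:ℝ)+1) - (L:ℝ)*((L:ℝ)+1)) :=
    ⟨_, rfl⟩
  have hBv0 : 0 < Bv := by
    rw [hBv]
    have hnum : (0:ℝ) < ((N:ℝ) - 1 + b) * (L:ℝ)^2 * ((L:ℝ)+1) := by positivity
    exact div_pos hnum hD
  have hpair : ∀ p : Fin N × Fin N, p.1 < p.2 →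
      2 * ((N:ℝ)*(2*(L:ℝ)+1) - (L:ℝ)*((L:ℝ)+1)) / ((L:ℝ)^2*((L:ℝ)+1))
          * ((((p.2:ℕ)):ℝ) - ((p.1:ℕ):ℝ))
        ≤ commuteTime (slowWeight N L wS) p.1 p.2 := by
    intro p hlt
    have hne : p.1 ≠ p.2 := ne_of_lt hlt
    have h1 : ((fun x : Fin N => (((x:ℕ)):ℝ)^2 + b*((x:ℕ):ℝ)) p.2
          - (fun x : Fin N => (((x:ℕ)):ℝ)^2 + b*((x:ℕ):ℝ)) p.1) / Bv
        ≤ hitTime (transition (slowWeight N L wS)) p.1 p.2 :=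
      hit_lb hL hNL hw p.2 _ Bv hBv0 (fun k => Pq_le hL hNL hw b Bv hcase hBv k) p.1 hne
    have h2 : ((fun x : Fin N => (((x.rev:ℕ)):ℝ)^2 + b*((x.rev:ℕ):ℝ)) p.1
          - (fun x : Fin N => (((x.rev:ℕ)):ℝ)^2 + b*((x.rev:ℕ):ℝ)) p.2) / Bv
        ≤ hitTime (transition (slowWeight N L wS)) p.2 p.1 :=
      hit_lb hL hNL hw p.1 _ Bv hBv0 (fun k => PqRev_le hL hNL hw b Bv hcase hBv k) p.2 hne.symm
    simp only [] at h1 h2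
    have hrev1 : ((p.1.rev : Fin N) : ℕ) = N - 1 - (p.1:ℕ) := by
      rw [Fin.val_rev]; omega
    have hrev2 : ((p.2.rev : Fin N) : ℕ) = N - 1 - (p.2:ℕ) := by
      rw [Fin.val_rev]; omega
    have hrev1r : (((p.1.rev : Fin N) : ℕ) : ℝ) = (N:ℝ) - 1 - ((p.1:ℕ):ℝ) := by
      rw [hrev1]
      have := p.1.isLt
      push_cast [Nat.cast_sub (by omega : 1 ≤ N), Nat.cast_sub (by omega : (p.1:ℕ) ≤ N - 1)]
      ring
    have hrev2r : (((p.2.rev : Fin N) : ℕ) : ℝ) = (N:ℝ) - 1 - ((p.2:ℕ):ℝ) := by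
      rw [hrev2]
      have := p.2.isLt
      push_cast [Nat.cast_sub (by omega : 1 ≤ N), Nat.cast_sub (by omega : (p.2:ℕ) ≤ N - 1)]
      ring
    rw [hrev1r, hrev2r] at h2
    have hval : (((((p.2:ℕ)):ℝ)^2 + b*((p.2:ℕ):ℝ)) - ((((p.1:ℕ)):ℝ)^2 + b*((p.1:ℕ):ℝ))) / Bv
        + ((((N:ℝ) - 1 - ((p.1:ℕ):ℝ))^2 + b*((N:ℝ) - 1 - ((p.1:ℕ):ℝ)))
          - (((N:ℝ) - 1 - ((p.2:ℕ):ℝ))^2 + b*((N:ℝ) - 1 - ((p.2:ℕ):ℝ)))) / Bv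
        = 2 * ((N:ℝ)*(2*(L:ℝ)+1) - (L:ℝ)*((L:ℝ)+1)) / ((L:ℝ)^2*((L:ℝ)+1))
            * ((((p.2:ℕ)):ℝ) - ((p.1:ℕ):ℝ)) := by
      rw [hBv]
      have hLne : ((L:ℝ)) ≠ 0 := ne_of_gt (by linarith : (0:ℝ) < (L:ℝ))
      have hL1ne : ((L:ℝ)+1) ≠ 0 := ne_of_gt (by linarith : (0:ℝ) < (L:ℝ)+1)
      have hNbne : ((N:ℝ) - 1 + b) ≠ 0 := ne_of_gt hbpos
      have hDne : ((N:ℝ)*(2*(L:ℝ)+1) - (L:ℝ)*((L:ℝ)+1)) ≠ 0 := ne_of_gt hD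
      field_simp
      ring
    rw [commuteTime]
    linarith
  have hsum : ∑ p ∈ Finset.univ.filter (fun p : Fin N × Fin N => p.1 < p.2),
        (2 * ((N:ℝ)*(2*(L:ℝ)+1) - (L:ℝ)*((L:ℝ)+1)) / ((L:ℝ)^2*((L:ℝ)+1))
          * ((((p.2:ℕ)):ℝ) - ((p.1:ℕ):ℝ)))
      ≤ ∑ p ∈ Finset.univ.filter (fun p : Fin N × Fin N => p.1 < p.2),
          commuteTime (slowWeight N L wS) p.1 p.2 :=
    Finset.sum_le_sum fun p hp => hpair p (Finset.mem_filter.mp hp).2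
  rw [← Finset.mul_sum, pair_sum N] at hsum
  have hNN : (0:ℝ) < (N:ℝ)*((N:ℝ)-1) := by nlinarith
  have hscale : (0:ℝ) < 2 / ((N:ℝ)*((N:ℝ)-1)) := by positivity
  have hfinal : ((N : ℝ) * (2 * (L : ℝ) + 1) - (L : ℝ) * ((L : ℝ) + 1))
        * (2 * ((N : ℝ) + 1) / (3 * (L : ℝ) ^ 2 * ((L : ℝ) + 1)))
      = (2 / ((N:ℝ)*((N:ℝ)-1)))
        * (2 * ((N:ℝ)*(2*(L:ℝ)+1) - (L:ℝ)*((L:ℝ)+1)) / ((L:ℝ)^2*((L:ℝ)+1))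
            * ((N:ℝ)*((N:ℝ)-1)*((N:ℝ)+1)/6)) := by
    have hN1 : (N:ℝ) - 1 ≠ 0 := by linarith
    field_simp
    ring
  rw [hfinal]
  exact mul_le_mul_of_nonneg_left hsum hscale.le
end
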